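/- arXiv:1803.05051 — 5 statements merged into one kernel-verified Lean document; each statement's English description precedes it below -/
import Mathlib

section
/- For all integers k ≥ 2, ℓ ≥ 3, and r ≥ 2, the multicolor Ramsey number of the k-uniform loose path of length ℓ satisfies R(P_ℓ^(k); r) ≤ (k−1)ℓr. Equivalently, for every n ≥ (k−1)ℓr, every coloring of the k-element subsets of an n-element set with r colors yields a monochromatic copy of P_ℓ^(k). -/
namespace LPR

variable {α : Type} [DecidableEq α]

/-- A path with `m` edges inside `D` w.r.t. adjacency `A`. -/
def PathIn (A : α → α → Prop) (D : Finset α) (m : ℕ) (g : ℕ → α) : Prop :=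
  Set.InjOn g (Set.Iio (m+1)) ∧ (∀ i ≤ m, g i ∈ D) ∧ ∀ i < m, A (g i) (g (i+1))

lemma PathIn.mono {A : α → α → Prop} {D D' : Finset α} {m : ℕ} {g : ℕ → α}
    (h : D ⊆ D') (hp : PathIn A D m g) : PathIn A D' m g :=
  ⟨hp.1, fun i hi => h (hp.2.1 i hi), hp.2.2⟩

/-- Erdős–Gallai: a graph with no path of `ℓ` edges has at most `(ℓ-1)n/2` edges
(ordered-pairs version). -/
lemma EG {A : α → α → Prop} [DecidableRel A] (hsym : Symmetric A) (hirr : Irreflexive A)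
    {ℓ : ℕ} (hl : 1 ≤ ℓ) :
    ∀ N (D : Finset α), D.card ≤ N → (∀ g, ¬ PathIn A D ℓ g) →
      ((D ×ˢ D).filter fun p => A p.1 p.2).card ≤ (ℓ - 1) * D.card := by
  intro N
  induction N with
  | zero =>
    intro D hD _
    have : D = ∅ := Finset.card_eq_zero.mp (Nat.le_zero.mp hD)
    subst this; simp
  | succ N ih =>
    intro D hDcard hnp
    by_cases hlow : ∃ v ∈ D, 2 * (D.filter fun u => A v u).card < ℓ
    · -- delete a low-degree vertex
      obtain ⟨v, hv, hdegv⟩ := hlow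
      set F := (D ×ˢ D).filter fun p => A p.1 p.2 with hF
      have hsplit1 : (F.filter fun p => p.1 = v).card + (F.filter fun p => ¬ p.1 = v).card
          = F.card := Finset.card_filter_add_card_filter_not _
      have hff : (F.filter fun p => ¬ p.1 = v) = F.filter fun p => p.1 ≠ v := rfl
      have hsplit2 : ((F.filter fun p => p.1 ≠ v).filter fun p => p.2 = v).card
          + ((F.filter fun p => p.1 ≠ v).filter fun p => ¬ p.2 = v).card
          = (F.filter fun p => p.1 ≠ v).card := Finset.card_filter_add_card_filter_not _
      have hE3 : ((F.filter fun p => p.1 ≠ v).filter fun p => ¬ p.2 = v)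
          = ((D.erase v) ×ˢ (D.erase v)).filter fun p => A p.1 p.2 := by
        rw [hF, Finset.filter_filter, Finset.filter_filter]
        ext p
        simp only [Finset.mem_filter, Finset.mem_product, Finset.mem_erase]
        tauto
      have hE1 : (F.filter fun p => p.1 = v).card ≤ (D.filter fun u => A v u).card := by
        apply Finset.card_le_card_of_injOn (fun p => p.2)
        · intro p hp
          simp only [hF, Finset.mem_coe, Finset.mem_filter, Finset.mem_product] at hp ⊢
          exact ⟨hp.1.1.2, hp.2 ▸ hp.1.2⟩
        · intro p hp q hq hpq
          have hp' := Finset.mem_coe.mp hp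
          have hq' := Finset.mem_coe.mp hq
          simp only [Finset.mem_filter] at hp' hq'
          exact Prod.ext (hp'.2.trans hq'.2.symm) hpq
      have hE2 : ((F.filter fun p => p.1 ≠ v).filter fun p => p.2 = v).card
          ≤ (D.filter fun u => A v u).card := by
        apply Finset.card_le_card_of_injOn (fun p => p.1)
        · intro p hp
          simp only [hF, Finset.mem_coe, Finset.mem_filter, Finset.mem_product] at hp ⊢
          exact ⟨hp.1.1.1.1, hsym (hp.2 ▸ hp.1.1.2)⟩
        · intro p hp q hq hpq
          have hp' := Finset.mem_coe.mp hp
          have hq' := Finset.mem_coe.mp hq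
          simp only [Finset.mem_filter] at hp' hq'
          exact Prod.ext hpq (hp'.2.trans hq'.2.symm)
      have hIH : (((D.erase v) ×ˢ (D.erase v)).filter fun p => A p.1 p.2).card
          ≤ (ℓ - 1) * (D.erase v).card := by
        apply ih
        · rw [Finset.card_erase_of_mem hv]; omega
        · intro g hg; exact hnp g (hg.mono (Finset.erase_subset _ _))
      have hcd : 1 ≤ D.card := Finset.card_pos.mpr ⟨v, hv⟩
      have hce : (D.erase v).card = D.card - 1 := Finset.card_erase_of_mem hv
      have hmul : (ℓ - 1) * (D.card - 1) + (ℓ - 1) * 1 = (ℓ - 1) * D.card := by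
        rw [← Nat.mul_add]; congr 1; omega
      rw [hce] at hIH
      rw [hff] at hsplit1
      rw [hE3] at hsplit2
      omega
    · -- minimum degree case
      push_neg at hlow
      rcases D.eq_empty_or_nonempty with hDe | ⟨v0, hv0⟩
      · subst hDe; simp
      have hdeg : ∀ v ∈ D, ℓ ≤ 2 * (D.filter fun u => A v u).card := hlow
      haveI : DecidablePred (fun j => ∃ g : ℕ → α, PathIn A D j g) :=
        fun _ => Classical.propDecidable _
      set P : ℕ → Prop := fun j => ∃ g : ℕ → α, PathIn A D j g with hPdef
      have hP0 : P 0 := by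
        refine ⟨fun _ => v0, ?_, fun i _ => hv0, fun i hi => absurd hi (Nat.not_lt_zero i)⟩
        intro a ha b hb _
        simp only [Set.mem_Iio] at ha hb; omega
      have hPl : ¬ P ℓ := fun ⟨g, hg⟩ => hnp g hg
      set m : ℕ := Nat.findGreatest P ℓ with hm
      have hPm : P m := Nat.findGreatest_spec (Nat.zero_le ℓ) hP0
      have hmle : m ≤ ℓ := Nat.findGreatest_le ℓ
      have hmlt : m < ℓ := lt_of_le_of_ne hmle (fun h => hPl (h ▸ hPm))
      have hnot : ¬ P (m+1) := fun h => by
        have := Nat.le_findGreatest (show m+1 ≤ ℓ by omega) h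
        omega
      have hm1 : 1 ≤ m := by
        have h2 : ℓ ≤ 2 * (D.filter fun u => A v0 u).card := hdeg v0 hv0
        have hne : (D.filter fun u => A v0 u).Nonempty := by
          rw [← Finset.card_pos]; omega
        obtain ⟨u, hu⟩ := hne
        rw [Finset.mem_filter] at hu
        have hP1 : P 1 := by
          refine ⟨fun s => if s = 0 then v0 else u, ?_, ?_, ?_⟩
          · intro a ha b hb hab
            simp only [Set.mem_Iio] at ha hb
            have hne2 : u ≠ v0 := fun h => hirr v0 (h ▸ hu.2)
            dsimp only at hab
            split_ifs at hab with h1 h2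
            · omega
            · exact absurd hab.symm hne2
            · exact absurd hab hne2
            · omega
          · intro s _; dsimp only; split_ifs; exacts [hv0, hu.1]
          · intro s hs
            have hs0 : s = 0 := by omega
            subst hs0; simpa using hu.2
        exact Nat.le_findGreatest hl hP1
      obtain ⟨g, hginj, hgmem, hgadj⟩ := hPm
      have hIio : ∀ j, j ≤ m → j ∈ Set.Iio (m+1) := by
        intro j hj; simp only [Set.mem_Iio]; omega
      -- maximality: neighbors of the endpoints lie on the path
      have hnb0 : ∀ u ∈ D, A (g 0) u → ∃ j, 1 ≤ j ∧ j ≤ m ∧ u = g j := by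
        intro u hu hadj
        by_contra hcon
        push_neg at hcon
        have hune : ∀ j, j ≤ m → u ≠ g j := by
          intro j hj
          rcases Nat.eq_zero_or_pos j with h0 | h1
          · subst h0; intro h; exact hirr (g 0) (h ▸ hadj)
          · exact hcon j h1 hj
        apply hnot
        refine ⟨fun s => if s = 0 then u else g (s-1), ?_, ?_, ?_⟩
        · intro a ha b hb hab
          simp only [Set.mem_Iio] at ha hb
          dsimp only at hab
          split_ifs at hab with h1 h2 h3
          · omega
          · exact absurd hab (hune (b-1) (by omega))
          · exact absurd hab.symm (hune (a-1) (by omega))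
          · have := hginj (hIio (a-1) (by omega)) (hIio (b-1) (by omega)) hab
            omega
        · intro s hs; dsimp only; split_ifs
          · exact hu
          · exact hgmem _ (by omega)
        · intro t ht
          dsimp only
          rcases Nat.eq_zero_or_pos t with h0 | h1
          · subst h0
            rw [if_pos rfl, if_neg (by omega)]
            exact hsym hadj
          · rw [if_neg (by omega), if_neg (by omega)]
            have hrw : t - 1 + 1 = t + 1 - 1 := by omega
            have := hgadj (t-1) (by omega)
            rw [hrw] at this; exact this
      have hnbm : ∀ u ∈ D, A (g m) u → ∃ j, j < m ∧ u = g j := by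
        intro u hu hadj
        by_contra hcon
        push_neg at hcon
        have hune : ∀ j, j ≤ m → u ≠ g j := by
          intro j hj
          rcases Nat.lt_or_ge j m with h0 | h1
          · exact hcon j h0
          · have hjm : j = m := by omega
            subst hjm; intro h; exact hirr (g m) (h ▸ hadj)
        apply hnot
        refine ⟨fun s => if s ≤ m then g s else u, ?_, ?_, ?_⟩
        · intro a ha b hb hab
          simp only [Set.mem_Iio] at ha hb
          dsimp only at hab
          split_ifs at hab with h1 h2 h3
          · have := hginj (hIio a (by omega)) (hIio b (by omega)) hab
            omega
          · exact absurd hab.symm (hune a (by omega))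
          · exact absurd hab (hune b (by omega))
          · omega
        · intro s hs; dsimp only; split_ifs
          · exact hgmem _ (by omega)
          · exact hu
        · intro t ht; dsimp only
          split_ifs with h1 h2
          · exact hgadj t (by omega)
          · have ht2 : t = m := by omega
            subst ht2; exact hadj
          · omega
          · omega
      -- rotation indices
      set SA := (Finset.range m).filter (fun s => A (g 0) (g (s+1))) with hSA
      set SB := (Finset.range m).filter (fun s => A (g m) (g s)) with hSB
      have hAcard : SA.card = (D.filter fun u => A (g 0) u).card := by
        apply Finset.card_bij (fun s _ => g (s+1))
        · intro a ha
          rw [hSA, Finset.mem_filter, Finset.mem_range] at ha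
          rw [Finset.mem_filter]
          exact ⟨hgmem _ (by omega), ha.2⟩
        · intro a ha b hb hab
          rw [hSA, Finset.mem_filter, Finset.mem_range] at ha hb
          have := hginj (hIio (a+1) (by omega)) (hIio (b+1) (by omega)) hab
          omega
        · intro u hu
          rw [Finset.mem_filter] at hu
          obtain ⟨j, hj1, hjm, hju⟩ := hnb0 u hu.1 hu.2
          refine ⟨j-1, ?_, ?_⟩
          · rw [hSA, Finset.mem_filter, Finset.mem_range]
            constructor
            · omega
            · rw [show j - 1 + 1 = j by omega]; exact hju ▸ hu.2
          · rw [show j - 1 + 1 = j by omega]; exact hju.symm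
      have hBcard : SB.card = (D.filter fun u => A (g m) u).card := by
        apply Finset.card_bij (fun s _ => g s)
        · intro a ha
          rw [hSB, Finset.mem_filter, Finset.mem_range] at ha
          rw [Finset.mem_filter]
          exact ⟨hgmem _ (by omega), ha.2⟩
        · intro a ha b hb hab
          rw [hSB, Finset.mem_filter, Finset.mem_range] at ha hb
          have := hginj (hIio a (by omega)) (hIio b (by omega)) hab
          omega
        · intro u hu
          rw [Finset.mem_filter] at hu
          obtain ⟨j, hjm, hju⟩ := hnbm u hu.1 hu.2
          refine ⟨j, ?_, hju.symm⟩
          rw [hSB, Finset.mem_filter, Finset.mem_range]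
          exact ⟨hjm, hju ▸ hu.2⟩
      have hOcard : (SA ∪ SB).card ≤ m := by
        have h1 : SA ∪ SB ⊆ Finset.range m :=
          Finset.union_subset (Finset.filter_subset _ _) (Finset.filter_subset _ _)
        have := Finset.card_le_card h1
        rwa [Finset.card_range] at this
      have hunion := Finset.card_union_add_card_inter SA SB
      have hdeg0 := hdeg (g 0) (hgmem 0 (by omega))
      have hdegm := hdeg (g m) (hgmem m (by omega))
      rw [← hAcard] at hdeg0
      rw [← hBcard] at hdegm
      have hABne : (SA ∩ SB).Nonempty := by
        rw [← Finset.card_pos]; omega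
      obtain ⟨i, hiAB⟩ := hABne
      rw [Finset.mem_inter] at hiAB
      obtain ⟨hiA', hiB'⟩ := hiAB
      rw [hSA, Finset.mem_filter, Finset.mem_range] at hiA'
      rw [hSB, Finset.mem_filter, Finset.mem_range] at hiB'
      obtain ⟨him, hiA⟩ := hiA'
      obtain ⟨-, hiB⟩ := hiB'
      -- the rotation permutation and the cycle
      set σ : ℕ → ℕ := fun s => if s ≤ i then s else m + i + 1 - s with hσ
      have hσle : ∀ s, s ≤ m → σ s ≤ m := by
        intro s hs; simp only [hσ]; split_ifs <;> omega
      have hσinv : ∀ s, s ≤ m → σ (σ s) = s := by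
        intro s hs; simp only [hσ]; split_ifs <;> omega
      set cyc : ℕ → α := fun t => g (σ (t % (m+1))) with hcyc
      have hsmle : ∀ t : ℕ, t % (m+1) ≤ m := by
        intro t
        have := Nat.mod_lt t (show 0 < m + 1 by omega)
        omega
      have hcycadj : ∀ t, A (cyc t) (cyc (t+1)) := by
        intro t
        have hsm : t % (m+1) ≤ m := hsmle t
        have h1m : (1 : ℕ) % (m+1) = 1 := Nat.mod_eq_of_lt (by omega)
        have hmod : (t+1) % (m+1) = if t % (m+1) = m then 0 else t % (m+1) + 1 := by
          rw [Nat.add_mod, h1m]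
          split_ifs with h
          · rw [h, Nat.mod_self]
          · exact Nat.mod_eq_of_lt (by omega)
        show A (g (σ (t % (m+1)))) (g (σ ((t+1) % (m+1))))
        rw [hmod]
        split_ifs with hcase
        · have hσm : σ m = i + 1 := by simp only [hσ]; split_ifs <;> omega
          have hσ0 : σ 0 = 0 := by simp only [hσ]; split_ifs <;> omega
          rw [hcase, hσm, hσ0]
          exact hsym hiA
        · by_cases hsi : t % (m+1) + 1 ≤ i
          · have e1 : σ (t % (m+1)) = t % (m+1) := by simp only [hσ]; split_ifs <;> omega
            have e2 : σ (t % (m+1) + 1) = t % (m+1) + 1 := by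
              simp only [hσ]; split_ifs <;> omega
            rw [e1, e2]; exact hgadj _ (by omega)
          · by_cases hsi2 : t % (m+1) ≤ i
            · have hti : t % (m+1) = i := by omega
              have e1 : σ (t % (m+1)) = i := by simp only [hσ]; split_ifs <;> omega
              have e2 : σ (t % (m+1) + 1) = m := by simp only [hσ]; split_ifs <;> omega
              rw [e1, e2]
              exact hsym hiB
            · have e1 : σ (t % (m+1)) = (m + i - t % (m+1)) + 1 := by
                simp only [hσ]; split_ifs <;> omega
              have e2 : σ (t % (m+1) + 1) = m + i - t % (m+1) := by
                simp only [hσ]; split_ifs <;> omega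
              rw [e1, e2]
              exact hsym (hgadj _ (by omega))
      set C := (Finset.range (m+1)).image g with hC
      have hCD : C ⊆ D := by
        intro x hx; rw [hC, Finset.mem_image] at hx
        obtain ⟨j, hj, rfl⟩ := hx
        rw [Finset.mem_range] at hj
        exact hgmem j (by omega)
      have hCcard : C.card = m + 1 := by
        rw [hC, Finset.card_image_of_injOn, Finset.card_range]
        rw [Finset.coe_range]; exact hginj
      have hcycC : ∀ t, cyc t ∈ C := by
        intro t
        rw [hC, Finset.mem_image]
        refine ⟨σ (t % (m+1)), Finset.mem_range.mpr ?_, rfl⟩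
        have := hσle _ (hsmle t); omega
      have hcycD : ∀ t, cyc t ∈ D := fun t => hCD (hcycC t)
      by_cases hcross : ∃ u ∈ D, u ∉ C ∧ ∃ j, j ≤ m ∧ A u (g j)
      · exfalso; apply hnot
        obtain ⟨u, hu, huC, j, hjm, huj⟩ := hcross
        set o := σ j with ho
        have hom : o ≤ m := hσle j hjm
        have hoj : σ o = j := hσinv j hjm
        have hcyco : cyc o = g j := by
          show g (σ (o % (m+1))) = g j
          rw [Nat.mod_eq_of_lt (by omega), hoj]
        refine ⟨fun s => if s = 0 then u else cyc (o + s - 1), ?_, ?_, ?_⟩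
        · intro a ha b hb hab
          simp only [Set.mem_Iio] at ha hb
          dsimp only at hab
          split_ifs at hab with h1 h2 h3
          · omega
          · exfalso; apply huC; rw [hab]; exact hcycC _
          · exfalso; apply huC; rw [← hab]; exact hcycC _
          · have hσa := hσle _ (hsmle (o + a - 1))
            have hσb := hσle _ (hsmle (o + b - 1))
            have hgg := hginj (hIio _ hσa) (hIio _ hσb) hab
            have hmm : (o + a - 1) % (m+1) = (o + b - 1) % (m+1) := by
              have h5 := congrArg σ hgg
              rw [hσinv _ (hsmle _), hσinv _ (hsmle _)] at h5
              exact h5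
            have hrw1 : o + a - 1 = o + (a - 1) := by omega
            have hrw2 : o + b - 1 = o + (b - 1) := by omega
            rw [hrw1, hrw2] at hmm
            have hmeq : (a - 1) % (m+1) = (b - 1) % (m+1) :=
              Nat.ModEq.add_left_cancel' o hmm
            rw [Nat.mod_eq_of_lt (by omega), Nat.mod_eq_of_lt (by omega)] at hmeq
            omega
        · intro s _; dsimp only; split_ifs
          · exact hu
          · exact hcycD _
        · intro t ht
          dsimp only
          rcases Nat.eq_zero_or_pos t with h0 | h1
          · subst h0
            rw [if_pos rfl, if_neg (by omega)]
            rw [show o + (0 + 1) - 1 = o by omega, hcyco]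
            exact huj
          · rw [if_neg (by omega), if_neg (by omega)]
            have := hcycadj (o + t - 1)
            rw [show o + t - 1 + 1 = o + (t+1) - 1 by omega] at this
            exact this
      · push_neg at hcross
        have hsub : ((D ×ˢ D).filter fun p => A p.1 p.2) ⊆
            ((C ×ˢ C).filter fun p => A p.1 p.2) ∪
              (((D \ C) ×ˢ (D \ C)).filter fun p => A p.1 p.2) := by
          intro p hp
          rw [Finset.mem_filter, Finset.mem_product] at hp
          obtain ⟨⟨hx, hy⟩, hA⟩ := hp
          rw [Finset.mem_union, Finset.mem_filter, Finset.mem_filter,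
            Finset.mem_product, Finset.mem_product, Finset.mem_sdiff, Finset.mem_sdiff]
          have himg : ∀ z, z ∈ C → ∃ j, j ≤ m ∧ g j = z := by
            intro z hz
            rw [hC, Finset.mem_image] at hz
            obtain ⟨j, hj, hje⟩ := hz
            rw [Finset.mem_range] at hj
            exact ⟨j, by omega, hje⟩
          by_cases hxC : p.1 ∈ C
          · left
            refine ⟨⟨hxC, ?_⟩, hA⟩
            by_contra hyC
            obtain ⟨j, hj, hje⟩ := himg p.1 hxC
            exact hcross p.2 hy hyC j hj (hje ▸ hsym hA)
          · right
            have hyC : p.2 ∉ C := by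
              intro hyC
              obtain ⟨j, hj, hje⟩ := himg p.2 hyC
              exact hcross p.1 hx hxC j hj (hje ▸ hA)
            exact ⟨⟨⟨hx, hxC⟩, hy, hyC⟩, hA⟩
        have hFC : ((C ×ˢ C).filter fun p => A p.1 p.2).card ≤ (ℓ-1) * (m+1) := by
          have h1 : ((C ×ˢ C).filter fun p => A p.1 p.2) ⊆ C.offDiag := by
            intro p hp
            rw [Finset.mem_filter, Finset.mem_product] at hp
            rw [Finset.mem_offDiag]
            refine ⟨hp.1.1, hp.1.2, fun h => ?_⟩
            have := hp.2
            rw [h] at this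
            exact hirr p.2 this
          have h2 := Finset.card_le_card h1
          rw [Finset.offDiag_card, hCcard] at h2
          have h3 : (m+1)*(m+1) - (m+1) = (m+1)*m := by
            have : (m+1)*(m+1) = (m+1)*m + (m+1)*1 := by ring
            omega
          rw [h3] at h2
          calc ((C ×ˢ C).filter fun p => A p.1 p.2).card ≤ (m+1)*m := h2
            _ ≤ (m+1)*(ℓ-1) := Nat.mul_le_mul_left _ (by omega)
            _ = (ℓ-1)*(m+1) := Nat.mul_comm _ _
        have hDC : (D \ C).card = D.card - (m+1) := by
          rw [Finset.card_sdiff_of_subset hCD, hCcard]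
        have hmle' : m + 1 ≤ D.card := by
          rw [← hCcard]; exact Finset.card_le_card hCD
        have hFDC := ih (D \ C) (by rw [hDC]; omega)
          (fun g' hg' => hnp g' (hg'.mono Finset.sdiff_subset))
        have hcard := Finset.card_le_card hsub
        have hun := Finset.card_union_le ((C ×ˢ C).filter fun p => A p.1 p.2)
          (((D \ C) ×ˢ (D \ C)).filter fun p => A p.1 p.2)
        rw [hDC] at hFDC
        have hmul2 : (ℓ-1) * (D.card - (m+1)) + (ℓ-1)*(m+1) = (ℓ-1)*D.card := by
          rw [← Nat.mul_add]; congr 1; omega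
        omega

/-- Base: monochromatic path in an `r`-coloured complete graph on `≥ rℓ` vertices. -/
lemma graphRamsey {r : ℕ} (hr : 2 ≤ r) {ℓ : ℕ} (hl : 1 ≤ ℓ) (χ : Finset α → Fin r)
    (V : Finset α) (hV : r * ℓ ≤ V.card) :
    ∃ (c : Fin r) (g : ℕ → α), Set.InjOn g (Set.Iio (ℓ+1)) ∧ (∀ j ≤ ℓ, g j ∈ V) ∧
      ∀ i < ℓ, χ {g i, g (i+1)} = c := by
  by_contra hcon
  push_neg at hcon
  -- each colour class has no path with ℓ edges
  have hnp : ∀ c : Fin r, ∀ g : ℕ → α,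
      ¬ PathIn (fun x y => x ≠ y ∧ χ {x, y} = c) V ℓ g := by
    intro c g hg
    obtain ⟨hinj, hmem, hadj⟩ := hg
    obtain ⟨i, hi, hne⟩ := hcon c g hinj (fun j hj => hmem j hj)
    exact hne (hadj i hi).2
  have hEG : ∀ c : Fin r,
      ((V ×ˢ V).filter fun p => p.1 ≠ p.2 ∧ χ {p.1, p.2} = c).card ≤ (ℓ - 1) * V.card := by
    intro c
    exact EG (A := fun x y => x ≠ y ∧ χ {x, y} = c)
      (fun x y h => ⟨h.1.symm, by rw [Finset.pair_comm]; exact h.2⟩)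
      (fun x h => h.1 rfl) hl V.card V le_rfl (hnp c)
  have hfib : V.offDiag.card =
      ∑ c ∈ (Finset.univ : Finset (Fin r)),
        (V.offDiag.filter fun p => χ {p.1, p.2} = c).card :=
    Finset.card_eq_sum_card_fiberwise (fun p _ => Finset.mem_univ _)
  have hsame : ∀ c : Fin r, (V.offDiag.filter fun p => χ {p.1, p.2} = c)
      = ((V ×ˢ V).filter fun p => p.1 ≠ p.2 ∧ χ {p.1, p.2} = c) := by
    intro c
    ext p
    simp only [Finset.mem_filter, Finset.mem_offDiag, Finset.mem_product]
    tauto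
  have hsum : V.offDiag.card ≤ r * ((ℓ - 1) * V.card) := by
    rw [hfib]
    calc ∑ c ∈ (Finset.univ : Finset (Fin r)),
          (V.offDiag.filter fun p => χ {p.1, p.2} = c).card
        ≤ ∑ _c ∈ (Finset.univ : Finset (Fin r)), (ℓ - 1) * V.card := by
          apply Finset.sum_le_sum
          intro c _
          rw [hsame c]
          exact hEG c
      _ = r * ((ℓ - 1) * V.card) := by
          rw [Finset.sum_const, Finset.card_univ, Fintype.card_fin, smul_eq_mul]
  rw [Finset.offDiag_card] at hsum
  -- now pure arithmetic contradiction
  have hv2 : 2 ≤ V.card := le_trans (by nlinarith) hV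
  have hh1 : V.card * V.card - V.card = V.card * (V.card - 1) := by
    have : V.card * V.card = V.card * (V.card - 1) + V.card * 1 := by
      rw [← Nat.mul_add]; congr 1; omega
    omega
  rw [hh1] at hsum
  have hsum2 : V.card * (V.card - 1) ≤ V.card * (r * (ℓ - 1)) := by
    calc V.card * (V.card - 1) ≤ r * ((ℓ-1) * V.card) := hsum
      _ = V.card * (r * (ℓ - 1)) := by ring
  have hcc : V.card - 1 ≤ r * (ℓ - 1) := Nat.le_of_mul_le_mul_left hsum2 (by omega)
  have hrl : r * (ℓ - 1) + r = r * ℓ := by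
    rw [← Nat.mul_succ]; congr 1; omega
  omega

/-- Greedy system of distinct representatives. -/
lemma sdr {ℓ : ℕ} (hl : 1 ≤ ℓ) (T : ℕ → Finset α) (hT : ∀ i < ℓ, ℓ ≤ (T i).card) :
    ∃ x : ℕ → α, Set.InjOn x (Set.Iio ℓ) ∧ ∀ i < ℓ, x i ∈ T i := by
  suffices h : ∀ m, m ≤ ℓ → ∃ x : ℕ → α, Set.InjOn x (Set.Iio m) ∧ ∀ i < m, x i ∈ T i from
    h ℓ le_rfl
  intro m
  induction m with
  | zero =>
    intro _
    have h0 : (T 0).Nonempty := by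
      rw [← Finset.card_pos]
      have := hT 0 (by omega); omega
    obtain ⟨y, _⟩ := h0
    refine ⟨fun _ => y, ?_, fun i hi => absurd hi (Nat.not_lt_zero _)⟩
    intro a ha
    exact absurd ha (by simp only [Set.mem_Iio]; omega)
  | succ m ihm =>
    intro hm
    obtain ⟨x, hxinj, hxmem⟩ := ihm (by omega)
    have hbig : (T m \ (Finset.range m).image x).Nonempty := by
      rw [← Finset.card_pos]
      have h1 : ((Finset.range m).image x).card ≤ m :=
        le_trans Finset.card_image_le (by rw [Finset.card_range])
      have h2 := hT m (by omega)
      have h3 := Finset.le_card_sdiff ((Finset.range m).image x) (T m)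
      omega
    obtain ⟨y, hy⟩ := hbig
    rw [Finset.mem_sdiff] at hy
    refine ⟨fun j => if j = m then y else x j, ?_, ?_⟩
    · intro a ha b hb hab
      simp only [Set.mem_Iio] at ha hb
      dsimp only at hab
      split_ifs at hab with h1 h2
      · omega
      · exfalso; apply hy.2; rw [hab]
        exact Finset.mem_image.mpr ⟨b, Finset.mem_range.mpr (by omega), rfl⟩
      · exfalso; apply hy.2; rw [← hab]
        exact Finset.mem_image.mpr ⟨a, Finset.mem_range.mpr (by omega), rfl⟩
      · exact hxinj (by simp only [Set.mem_Iio]; omega) (by simp only [Set.mem_Iio]; omega) hab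
    · intro i hi
      dsimp only; split_ifs with h1
      · exact h1 ▸ hy.1
      · exact hxmem i (by omega)

/-- Pigeonhole: some colour is popular among the extensions of `S` into `X`. -/
lemma popular {r ℓ : ℕ} (hr : 1 ≤ r) (χ : Finset α → Fin r) (X : Finset α)
    (hX : r * (ℓ - 1) + 1 ≤ X.card) (S : Finset α) :
    ∃ c : Fin r, ℓ ≤ (X.filter fun x => χ (insert x S) = c).card := by
  by_contra hcon
  push_neg at hcon
  have hfib : X.card = ∑ c ∈ (Finset.univ : Finset (Fin r)),
      (X.filter fun x => χ (insert x S) = c).card :=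
    Finset.card_eq_sum_card_fiberwise (fun x _ => Finset.mem_univ _)
  have hle : X.card ≤ r * (ℓ - 1) := by
    rw [hfib]
    calc ∑ c ∈ (Finset.univ : Finset (Fin r)), (X.filter fun x => χ (insert x S) = c).card
        ≤ ∑ _c ∈ (Finset.univ : Finset (Fin r)), (ℓ - 1) := by
          apply Finset.sum_le_sum
          intro c _
          have := hcon c; omega
      _ = r * (ℓ - 1) := by
          rw [Finset.sum_const, Finset.card_univ, Fintype.card_fin, smul_eq_mul]
  omega

lemma phi_inj_aux {k q1 s1 q2 s2 : ℕ} (hk : 2 ≤ k) (h1 : s1 ≤ k - 2) (h2 : s2 ≤ k - 2)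
    (he : q1 * (k-1) + s1 = q2 * (k-1) + s2) : q1 = q2 ∧ s1 = s2 := by
  rcases lt_trichotomy q1 q2 with h | h | h
  · exfalso
    have h3 : (q1 + 1) * (k-1) ≤ q2 * (k-1) := Nat.mul_le_mul_right _ (by omega)
    rw [Nat.succ_mul] at h3
    omega
  · subst h; omega
  · exfalso
    have h3 : (q2 + 1) * (k-1) ≤ q1 * (k-1) := Nat.mul_le_mul_right _ (by omega)
    rw [Nat.succ_mul] at h3
    omega

/-- Main induction on the uniformity `k`. -/
lemma mainInd {r ℓ : ℕ} (hr : 2 ≤ r) (hl : 1 ≤ ℓ) :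
    ∀ k, 2 ≤ k → ∀ (χ : Finset α → Fin r) (V : Finset α),
      r * ℓ + (k - 2) * (r * (ℓ - 1) + 1) ≤ V.card →
      ∃ c : Fin r, ∃ f : ℕ → α, Set.InjOn f (Set.Iio ((k - 1) * ℓ + 1)) ∧
        (∀ j < (k - 1) * ℓ + 1, f j ∈ V) ∧
        ∀ i < ℓ, χ ((Finset.Ico (i * (k - 1)) (i * (k - 1) + k)).image f) = c := by
  intro k hk
  induction k, hk using Nat.le_induction with
  | base =>
    intro χ V hV
    obtain ⟨c, g, hinj, hmem, hcol⟩ := graphRamsey hr hl χ V (by omega)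
    refine ⟨c, g, ?_, ?_, ?_⟩
    · simpa only [show (2:ℕ) - 1 = 1 from rfl, one_mul] using hinj
    · intro j hj
      simp only [show (2:ℕ) - 1 = 1 from rfl, one_mul] at hj
      exact hmem j (by omega)
    · intro i hi
      have h1 : Finset.Ico (i * (2 - 1)) (i * (2 - 1) + 2) = {i, i+1} := by
        ext a
        simp only [Finset.mem_Ico, Finset.mem_insert, Finset.mem_singleton, mul_one]
        omega
      rw [h1, Finset.image_insert, Finset.image_singleton]
      exact hcol i hi
  | succ k hk2 ihk =>
    intro χ V hV
    have hk1 : k + 1 - 2 = k - 1 := by omega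
    have hXle : r * (ℓ - 1) + 1 ≤ V.card := by
      have h1 : (r*(ℓ-1)+1) ≤ (k + 1 - 2) * (r*(ℓ-1)+1) :=
        Nat.le_mul_of_pos_left _ (by omega)
      omega
    obtain ⟨X, hXV, hXcard⟩ := Finset.exists_subset_card_eq hXle
    have hpop : ∀ S : Finset α, ∃ c : Fin r, ℓ ≤ (X.filter fun x => χ (insert x S) = c).card :=
      fun S => popular (by omega) χ X (by omega) S
    set χ' : Finset α → Fin r := fun S => (hpop S).choose with hχ'
    have hχ'spec : ∀ S, ℓ ≤ (X.filter fun x => χ (insert x S) = χ' S).card :=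
      fun S => (hpop S).choose_spec
    have hV' : r * ℓ + (k - 2) * (r * (ℓ - 1) + 1) ≤ (V \ X).card := by
      rw [Finset.card_sdiff_of_subset hXV, hXcard]
      have e1 : k + 1 - 2 = (k - 2) + 1 := by omega
      have e2 : (k + 1 - 2) * (r*(ℓ-1)+1) = (k-2)*(r*(ℓ-1)+1) + (r*(ℓ-1)+1) := by
        rw [e1, Nat.succ_mul]
      omega
    obtain ⟨c, f, hinj, hmem, hcol⟩ := ihk χ' (V \ X) hV'
    -- pick the distinct connector vertices
    set W : ℕ → Finset α := fun i => (Finset.Ico (i * (k - 1)) (i * (k - 1) + k)).image f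
      with hW
    set T : ℕ → Finset α := fun i => X.filter fun x => χ (insert x (W i)) = c with hT
    have hTcard : ∀ i < ℓ, ℓ ≤ (T i).card := by
      intro i hi
      have h1 := hχ'spec (W i)
      rw [hcol i hi] at h1
      exact h1
    obtain ⟨x, hxinj, hxmem⟩ := sdr hl T hTcard
    have hxX : ∀ i < ℓ, x i ∈ X ∧ χ (insert (x i) (W i)) = c := by
      intro i hi
      have := hxmem i hi
      rw [hT, Finset.mem_filter] at this
      exact this
    -- assemble the longer path
    set f' : ℕ → α := fun j => if j % k = k - 1 then x (j / k)
      else f (j / k * (k - 1) + j % k) with hf'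
    have hkpos : 0 < k := by omega
    have hdiv : ∀ j, j < k * ℓ + 1 → j % k = k - 1 → j / k < ℓ := by
      intro j hj hjr
      by_contra hge
      push_neg at hge
      have h1 : j / k * k ≤ j := Nat.div_mul_le_self j k
      have h2 : ℓ * k ≤ j / k * k := Nat.mul_le_mul_right _ hge
      have h3 : j ≤ k * ℓ := by omega
      have h4 : ℓ * k = k * ℓ := Nat.mul_comm _ _
      have h5 : j = k * ℓ := by omega
      rw [h5, Nat.mul_mod_right] at hjr
      omega
    have hphi_le : ∀ j, j < k * ℓ + 1 → ¬ (j % k = k - 1) →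
        j / k * (k - 1) + j % k ≤ (k - 1) * ℓ := by
      intro j hj hjr
      have hs : j % k < k := Nat.mod_lt _ hkpos
      have hs2 : j % k ≤ k - 2 := by omega
      have h1 : j / k * k ≤ j := Nat.div_mul_le_self j k
      have hq : j / k ≤ ℓ := by
        by_contra hq
        push_neg at hq
        have h2 : (ℓ+1) * k ≤ j / k * k := Nat.mul_le_mul_right _ hq
        rw [Nat.succ_mul] at h2
        have h4 : ℓ * k = k * ℓ := Nat.mul_comm _ _
        omega
      rcases Nat.lt_or_ge (j / k) ℓ with hql | hqe
      · have h2 : j / k * (k-1) ≤ (ℓ-1) * (k-1) := Nat.mul_le_mul_right _ (by omega)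
        have h3 : (k-1) * ℓ = (k-1) * (ℓ-1) + (k-1) := by
          rw [← Nat.mul_succ]; congr 1; omega
        have h4 : (ℓ-1) * (k-1) = (k-1) * (ℓ-1) := Nat.mul_comm _ _
        omega
      · have hqe2 : j / k = ℓ := by omega
        have h2 : j / k * k = k * ℓ := by rw [hqe2]; exact Nat.mul_comm _ _
        -- then j = k*ℓ and j % k = 0
        have h5 : j = k * ℓ := by omega
        have h6 : j % k = 0 := by rw [h5]; exact Nat.mul_mod_right _ _
        rw [hqe2, h6]
        have : ℓ * (k-1) = (k-1) * ℓ := Nat.mul_comm _ _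
        omega
    have hmemf : ∀ j, j < (k-1) * ℓ + 1 → f j ∈ V \ X := fun j hj => hmem j hj
    refine ⟨c, f', ?_, ?_, ?_⟩
    · -- injectivity
      simp only [Nat.add_sub_cancel]
      intro a ha b hb hab
      simp only [Set.mem_Iio] at ha hb
      simp only [hf'] at hab
      by_cases hak : a % k = k - 1 <;> by_cases hbk : b % k = k - 1
      · rw [if_pos hak, if_pos hbk] at hab
        have ha' : a / k < ℓ := hdiv a ha hak
        have hb' : b / k < ℓ := hdiv b hb hbk
        have heq := hxinj (by simp only [Set.mem_Iio]; omega)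
          (by simp only [Set.mem_Iio]; omega) hab
        have e1 := Nat.div_add_mod a k
        have e2 := Nat.div_add_mod b k
        have e3 : k * (a / k) = k * (b / k) := by rw [heq]
        omega
      · rw [if_pos hak, if_neg hbk] at hab
        exfalso
        have h1 : x (a / k) ∈ X := (hxX (a/k) (hdiv a ha hak)).1
        have h2 : f (b / k * (k-1) + b % k) ∈ V \ X := by
          apply hmemf
          have := hphi_le b hb hbk; omega
        rw [← hab, Finset.mem_sdiff] at h2
        exact h2.2 h1
      · rw [if_neg hak, if_pos hbk] at hab
        exfalso
        have h1 : x (b / k) ∈ X := (hxX (b/k) (hdiv b hb hbk)).1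
        have h2 : f (a / k * (k-1) + a % k) ∈ V \ X := by
          apply hmemf
          have := hphi_le a ha hak; omega
        rw [hab, Finset.mem_sdiff] at h2
        exact h2.2 h1
      · rw [if_neg hak, if_neg hbk] at hab
        have hpa := hphi_le a ha hak
        have hpb := hphi_le b hb hbk
        have heq := hinj (by simp only [Set.mem_Iio]; omega)
          (by simp only [Set.mem_Iio]; omega) hab
        have hsa : a % k < k := Nat.mod_lt _ hkpos
        have hsb : b % k < k := Nat.mod_lt _ hkpos
        obtain ⟨hq, hs⟩ := phi_inj_aux hk2 (by omega) (by omega) heq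
        have e1 := Nat.div_add_mod a k
        have e2 := Nat.div_add_mod b k
        have e3 : k * (a / k) = k * (b / k) := by rw [hq]
        omega
    · -- membership
      simp only [Nat.add_sub_cancel]
      intro j hj
      simp only [hf']
      split_ifs with h1
      · exact hXV (hxX (j/k) (hdiv j hj h1)).1
      · have h2 := hmemf (j / k * (k - 1) + j % k) (by have := hphi_le j hj h1; omega)
        rw [Finset.mem_sdiff] at h2
        exact h2.1
    · -- colours
      simp only [Nat.add_sub_cancel]
      intro i hi
      have hwin : (Finset.Ico (i * k) (i * k + (k+1))).image f' = insert (x i) (W i) := by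
        apply Finset.Subset.antisymm
        · intro z hz
          rw [Finset.mem_image] at hz
          obtain ⟨j, hj, rfl⟩ := hz
          rw [Finset.mem_Ico] at hj
          rcases Nat.lt_or_ge (j - i * k) k with hlt | hge
          · have hj3 : j = (j - i * k) + k * i := by
              have : k * i = i * k := Nat.mul_comm _ _
              omega
            have hdivj : j / k = i := by
              rw [hj3, Nat.add_mul_div_left _ _ hkpos, Nat.div_eq_of_lt hlt]
              omega
            have hmodj : j % k = j - i * k := by
              conv_lhs => rw [hj3]
              rw [Nat.add_mul_mod_self_left, Nat.mod_eq_of_lt hlt]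
            by_cases hsk : j - i * k = k - 1
            · have hfj : f' j = x i := by
                simp only [hf']
                rw [if_pos (by rw [hmodj]; exact hsk), hdivj]
              rw [hfj]; exact Finset.mem_insert_self _ _
            · have hfj : f' j = f (i * (k-1) + (j - i * k)) := by
                simp only [hf']
                rw [if_neg (by rw [hmodj]; exact hsk), hdivj, hmodj]
              rw [hfj]
              apply Finset.mem_insert_of_mem
              rw [hW, Finset.mem_image]
              refine ⟨i * (k-1) + (j - i * k), Finset.mem_Ico.mpr ⟨by omega, by omega⟩, rfl⟩
          · have hjk : j = k * (i + 1) := by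
              have e1 : k * (i+1) = k * i + k := by ring
              have e2 : k * i = i * k := Nat.mul_comm _ _
              omega
            have hdivj : j / k = i + 1 := by rw [hjk, Nat.mul_div_cancel_left _ hkpos]
            have hmodj : j % k = 0 := by rw [hjk]; exact Nat.mul_mod_right _ _
            have hfj : f' j = f ((i+1) * (k-1)) := by
              simp only [hf']
              rw [if_neg (by rw [hmodj]; omega), hdivj, hmodj, Nat.add_zero]
            rw [hfj]
            apply Finset.mem_insert_of_mem
            rw [hW, Finset.mem_image]
            refine ⟨(i+1) * (k-1), Finset.mem_Ico.mpr ⟨?_, ?_⟩, rfl⟩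
            · have : (i+1) * (k-1) = i * (k-1) + (k-1) := by ring
              omega
            · have : (i+1) * (k-1) = i * (k-1) + (k-1) := by ring
              omega
        · intro z hz
          rw [Finset.mem_insert] at hz
          rcases hz with rfl | hz
          · rw [Finset.mem_image]
            refine ⟨(k-1) + k * i, Finset.mem_Ico.mpr ⟨?_, ?_⟩, ?_⟩
            · have : k * i = i * k := Nat.mul_comm _ _
              omega
            · have : k * i = i * k := Nat.mul_comm _ _
              omega
            · simp only [hf']
              rw [Nat.add_mul_div_left _ _ hkpos, Nat.add_mul_mod_self_left,
                Nat.div_eq_of_lt (by omega), Nat.mod_eq_of_lt (by omega)]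
              rw [if_pos rfl, Nat.zero_add]
          · rw [hW, Finset.mem_image] at hz
            obtain ⟨w, hw, rfl⟩ := hz
            rw [Finset.mem_Ico] at hw
            rw [Finset.mem_image]
            by_cases hwt : w - i * (k-1) = k - 1
            · refine ⟨k * (i+1), Finset.mem_Ico.mpr ⟨?_, ?_⟩, ?_⟩
              · have e1 : k * (i+1) = k * i + k := by ring
                have e2 : k * i = i * k := Nat.mul_comm _ _
                omega
              · have e1 : k * (i+1) = k * i + k := by ring
                have e2 : k * i = i * k := Nat.mul_comm _ _
                omega
              · simp only [hf']
                rw [Nat.mul_div_cancel_left _ hkpos,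
                  (by exact Nat.mul_mod_right _ _ : k * (i+1) % k = 0)]
                rw [if_neg (by omega), Nat.add_zero]
                congr 1
                have : (i+1) * (k-1) = i * (k-1) + (k-1) := by ring
                omega
            · refine ⟨(w - i * (k-1)) + k * i, Finset.mem_Ico.mpr ⟨?_, ?_⟩, ?_⟩
              · have : k * i = i * k := Nat.mul_comm _ _
                omega
              · have : k * i = i * k := Nat.mul_comm _ _
                omega
              · simp only [hf']
                rw [Nat.add_mul_div_left _ _ hkpos, Nat.add_mul_mod_self_left,
                  Nat.div_eq_of_lt (by omega), Nat.mod_eq_of_lt (by omega)]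
                rw [if_neg (by omega), Nat.zero_add]
                congr 1
                omega
      have hgoal : Finset.Ico (i * k) (i * k + (k + 1)) =
          Finset.Ico (i * k) (i * k + (k + 1)) := rfl
      rw [hwin]
      exact (hxX i hi).2

end LPR


/-- The coloring `χ` of the `k`-element subsets contains a monochromatic copy of the
`k`-uniform loose path of length `ℓ`: there are a color `c` and distinct vertices
`f 0, …, f ((k-1)ℓ)` such that each of the `ℓ` consecutive edges
`{f (i(k-1)), …, f (i(k-1)+k-1)}` (consecutive edges sharing exactly one vertex)
receives color `c`. -/
def HasMonoLoosePath {α : Type} [DecidableEq α] {r : ℕ} (k ℓ : ℕ)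
    (χ : Finset α → Fin r) : Prop :=
  ∃ c : Fin r, ∃ f : ℕ → α, Set.InjOn f (Set.Iio ((k - 1) * ℓ + 1)) ∧
    ∀ i < ℓ, χ ((Finset.Ico (i * (k - 1)) (i * (k - 1) + k)).image f) = c

theorem loosePath_ramsey_upper (k ℓ r : ℕ) (hk : 2 ≤ k) (hl : 3 ≤ ℓ) (hr : 2 ≤ r)
    (n : ℕ) (hn : (k - 1) * ℓ * r ≤ n) (χ : Finset (Fin n) → Fin r) :
    HasMonoLoosePath k ℓ χ := by
  have hV : r * ℓ + (k - 2) * (r * (ℓ - 1) + 1) ≤ (Finset.univ : Finset (Fin n)).card := by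
    rw [Finset.card_univ, Fintype.card_fin]
    have h1 : r * (ℓ - 1) + 1 ≤ ℓ * r := by
      have e1 : r * (ℓ - 1) + r = r * ℓ := by rw [← Nat.mul_succ]; congr 1; omega
      have e2 : ℓ * r = r * ℓ := Nat.mul_comm _ _
      omega
    have h2 : (k - 2) * (r * (ℓ - 1) + 1) ≤ (k - 2) * (ℓ * r) := Nat.mul_le_mul_left _ h1
    have h3 : (k - 1) * ℓ * r = (k - 2) * (ℓ * r) + ℓ * r := by
      rw [Nat.mul_assoc]
      have e : k - 1 = (k - 2) + 1 := by omega
      rw [e, Nat.succ_mul]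
    have h4 : r * ℓ = ℓ * r := Nat.mul_comm _ _
    omega
  obtain ⟨c, f, hinj, hmem, hcol⟩ :=
    LPR.mainInd hr (by omega) k hk χ (Finset.univ : Finset (Fin n)) hV
  exact ⟨c, f, hinj, hcol⟩
end

section
/- Let k ≥ 3 and r ≥ 2 be integers, let H be a selfish k-uniform hypergraph, and let G = G_H be the (k−1)-uniform hypergraph obtained from H by removing one vertex of degree one from each edge of H. Suppose m is an integer such that every coloring of the (k−1)-element subsets of an m-element set with r colors yields a monochromatic copy of G. Then, for n = m + r(|E(H)|−1) + 1, every coloring of the k-element subsets of an n-element set with r colors yields a monochromatic copy of H. In particular, R(H; r) ≤ R(G; r) + r(|E(H)|−1) + 1. -/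
/-- **Lemma (selfish extension).**
`H` is a `k`-uniform hypergraph with (distinct) edges `H 0, …, H (m-1)` on the vertex
type `Fin N`.  It is selfish, witnessed by `w`: each edge `H i` contains the vertex
`w i` of degree one (belonging to no other edge).  The `(k-1)`-uniform hypergraph
`G = G_H` has edges `(H i).erase (w i)`, obtained from `H` by removing one vertex of
degree one from each edge; note `|E(G)| = |E(H)| = m`.
If every `r`-coloring of the `(k-1)`-element subsets of an `m₀`-element set yields a
monochromatic copy of `G`, then every `r`-coloring of the `k`-element subsets of an
`(m₀ + r(m-1) + 1)`-element set yields a monochromatic copy of `H`; in particular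
`R(H; r) ≤ R(G; r) + r(|E(H)| - 1) + 1`. -/
theorem selfish_ramsey_step (k r m N m₀ : ℕ) (hk : 3 ≤ k) (hr : 2 ≤ r)
    (H : Fin m → Finset (Fin N))
    (hedges : Function.Injective H)
    (hcard : ∀ i, (H i).card = k)
    (w : Fin m → Fin N) (hw : ∀ i, w i ∈ H i)
    (hdeg : ∀ i j, w i ∈ H j → j = i)
    (hG : ∀ χ : Finset (Fin m₀) → Fin r, ∃ c : Fin r, ∃ f : Fin N → Fin m₀,
      Set.InjOn f {v | ∃ i, v ∈ (H i).erase (w i)} ∧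
      ∀ i, χ (((H i).erase (w i)).image f) = c) :
    ∀ χ : Finset (Fin (m₀ + r * (m - 1) + 1)) → Fin r, ∃ c : Fin r,
      ∃ f : Fin N → Fin (m₀ + r * (m - 1) + 1),
      Set.InjOn f {v | ∃ i, v ∈ H i} ∧ ∀ i, χ ((H i).image f) = c := by
  intro χ
  classical
  have hle : m₀ ≤ m₀ + r * (m - 1) + 1 := by omega
  set cst : Fin m₀ → Fin (m₀ + r * (m - 1) + 1) := Fin.castLE hle with hcst
  set R : Finset (Fin (m₀ + r * (m - 1) + 1)) := Finset.univ.filter (fun x => m₀ ≤ x.val) with hR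
  have hRcard : R.card = r * (m - 1) + 1 := by
    have hEq : R = Finset.Ici (⟨m₀, by omega⟩ : Fin (m₀ + r * (m - 1) + 1)) := by
      ext x; simp [hR, Fin.le_def]
    rw [hEq, Fin.card_Ici]
    simp
    omega
  have key : ∀ S : Finset (Fin m₀), ∃ c : Fin r,
      m ≤ (R.filter (fun x => χ (insert x (S.image cst)) = c)).card := by
    intro S
    have hmap : ∀ x ∈ R, (fun x => χ (insert x (S.image cst))) x ∈ (Finset.univ : Finset (Fin r)) :=
      fun x _ => Finset.mem_univ _
    have hlt : (Finset.univ : Finset (Fin r)).card * (m - 1) < R.card := by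
      rw [hRcard, Finset.card_univ, Fintype.card_fin]; omega
    obtain ⟨c, _, hc⟩ := Finset.exists_lt_card_fiber_of_mul_lt_card_of_maps_to hmap hlt
    exact ⟨c, by omega⟩
  choose χ' hχ' using key
  obtain ⟨c, f, hinj, hcol⟩ := hG χ'
  set S : Fin m → Finset (Fin m₀) := fun i => ((H i).erase (w i)).image f with hSdef
  set A : Fin m → Finset (Fin (m₀ + r * (m - 1) + 1)) :=
    fun i => R.filter (fun x => χ (insert x ((S i).image cst)) = c) with hAdef
  have hAcard : ∀ i, m ≤ (A i).card := by
    intro i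
    have := hχ' (S i)
    rw [hcol i] at this
    exact this
  have hall : ∀ s : Finset (Fin m), s.card ≤ (s.biUnion A).card := by
    intro s
    rcases s.eq_empty_or_nonempty with h | ⟨i, hi⟩
    · simp [h]
    · calc s.card ≤ m := by
            simpa using Finset.card_le_univ s
        _ ≤ (A i).card := hAcard i
        _ ≤ (s.biUnion A).card :=
            Finset.card_le_card (fun y hy => Finset.mem_biUnion.2 ⟨i, hi, hy⟩)
  obtain ⟨x, hxinj, hxmem⟩ := (Finset.all_card_le_biUnion_card_iff_exists_injective A).1 hall
  have winj : Function.Injective w := by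
    intro i j h
    have hj := hw j
    rw [← h] at hj
    exact (hdeg i j hj).symm
  have hxR : ∀ i, m₀ ≤ (x i).val := by
    intro i
    have := hxmem i
    rw [hAdef] at this
    have := (Finset.mem_filter.1 this).1
    exact (Finset.mem_filter.1 this).2
  -- define extension
  set g : Fin N → Fin (m₀ + r * (m - 1) + 1) := fun v => if h : ∃ i, w i = v then x h.choose else cst (f v) with hg
  have hgw : ∀ i, g (w i) = x i := by
    intro i
    have h : ∃ j, w j = w i := ⟨i, rfl⟩
    have : h.choose = i := winj h.choose_spec
    simp only [hg, dif_pos h, this]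
  have hgother : ∀ i, ∀ v ∈ (H i).erase (w i), g v = cst (f v) := by
    intro i v hv
    have hnw : ¬ ∃ j, w j = v := by
      rintro ⟨j, rfl⟩
      have hj := hdeg j i (Finset.mem_of_mem_erase hv)
      subst hj
      exact (Finset.mem_erase.1 hv).1 rfl
    simp only [hg, dif_neg hnw]
  refine ⟨c, g, ?_, ?_⟩
  · intro u hu v hv heq
    obtain ⟨iu, hiu⟩ := hu
    obtain ⟨iv, hiv⟩ := hv
    by_cases hu' : ∃ j, w j = u <;> by_cases hv' : ∃ j, w j = v
    · obtain ⟨ju, rfl⟩ := hu'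
      obtain ⟨jv, rfl⟩ := hv'
      rw [hgw, hgw] at heq
      exact congrArg w (hxinj heq)
    · obtain ⟨ju, rfl⟩ := hu'
      have hvE : v ∈ (H iv).erase (w iv) := by
        refine Finset.mem_erase.2 ⟨?_, hiv⟩
        rintro rfl; exact hv' ⟨iv, rfl⟩
      rw [hgw, hgother iv v hvE] at heq
      have h1 := hxR ju
      have h2 : (cst (f v)).val < m₀ := (f v).isLt
      rw [heq] at h1; omega
    · obtain ⟨jv, rfl⟩ := hv'
      have huE : u ∈ (H iu).erase (w iu) := by
        refine Finset.mem_erase.2 ⟨?_, hiu⟩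
        rintro rfl; exact hu' ⟨iu, rfl⟩
      rw [hgw, hgother iu u huE] at heq
      have h1 := hxR jv
      have h2 : (cst (f u)).val < m₀ := (f u).isLt
      rw [← heq] at h1; omega
    · have huE : u ∈ (H iu).erase (w iu) := by
        refine Finset.mem_erase.2 ⟨?_, hiu⟩
        rintro rfl; exact hu' ⟨iu, rfl⟩
      have hvE : v ∈ (H iv).erase (w iv) := by
        refine Finset.mem_erase.2 ⟨?_, hiv⟩
        rintro rfl; exact hv' ⟨iv, rfl⟩
      rw [hgother iu u huE, hgother iv v hvE] at heq
      have hfe : f u = f v := Fin.castLE_injective hle heq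
      exact hinj ⟨iu, huE⟩ ⟨iv, hvE⟩ hfe
  · intro i
    have hHi : H i = insert (w i) ((H i).erase (w i)) := (Finset.insert_erase (hw i)).symm
    have himg : (H i).image g = insert (x i) ((S i).image cst) := by
      rw [hHi, Finset.image_insert, hgw]
      congr 1
      rw [hSdef]
      simp only
      rw [Finset.image_image]
      exact Finset.image_congr (fun v hv => hgother i v hv)
    rw [himg]
    have := hxmem i
    rw [hAdef] at this
    exact (Finset.mem_filter.1 this).2
end

section
/- For all integers k ≥ 2, ℓ ≥ 3, r ≥ 2, and n ≥ 2^{r+1}ℓ + (k−2)ℓr, every coloring of the k-element subsets of an n-element set with r colors yields a monochromatic copy of the k-uniform loose path P_ℓ^(k) of length ℓ. -/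
namespace LPaux

variable {α : Type} [DecidableEq α] {r : ℕ}

def blk (k : ℕ) (b : ℕ → ℕ → α) (j : ℕ) : Finset α := (Finset.range (k-2)).image (b j)

def Ed (k : ℕ) (b : ℕ → ℕ → α) (x y : α) (j : ℕ) : Finset α := insert x (insert y (blk k b j))

def Qc (k : ℕ) (χ : Finset α → Fin r) (b : ℕ → ℕ → α) (x y : α) (j : ℕ) : Fin r :=
  χ (Ed k b x y j)

lemma Qc_symm (k : ℕ) (χ : Finset α → Fin r) (b : ℕ → ℕ → α) (x y : α) (j : ℕ) :
    Qc k χ b x y j = Qc k χ b y x j := by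
  unfold Qc Ed; rw [Finset.insert_comm]

def cnt (k T : ℕ) (χ : Finset α → Fin r) (b : ℕ → ℕ → α) (γ : Fin r) (x y : α) : ℕ :=
  ((Finset.range T).filter (fun j => Qc k χ b x y j = γ)).card

def dcnt (k T : ℕ) (χ : Finset α → Fin r) (b : ℕ → ℕ → α) (live : Finset (Fin r)) (x y : α) : ℕ :=
  ((Finset.range T).filter (fun j => Qc k χ b x y j ∉ live)).card

lemma cnt_symm (k T : ℕ) (χ : Finset α → Fin r) (b : ℕ → ℕ → α) (γ : Fin r) (x y : α) :
    cnt k T χ b γ x y = cnt k T χ b γ y x := by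
  unfold cnt
  congr 1
  apply Finset.filter_congr
  intro j _
  rw [Qc_symm]

lemma dcnt_symm (k T : ℕ) (χ : Finset α → Fin r) (b : ℕ → ℕ → α) (live : Finset (Fin r)) (x y : α) :
    dcnt k T χ b live x y = dcnt k T χ b live y x := by
  unfold dcnt
  congr 1
  apply Finset.filter_congr
  intro j _
  rw [Qc_symm]

lemma dcnt_erase_le (k T : ℕ) (χ : Finset α → Fin r) (b : ℕ → ℕ → α) (live : Finset (Fin r))
    (γ : Fin r) (x y : α) :
    dcnt k T χ b (live.erase γ) x y ≤ dcnt k T χ b live x y + cnt k T χ b γ x y := by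
  unfold dcnt cnt
  refine le_trans (Finset.card_le_card ?_) (Finset.card_union_le _ _)
  intro j hj
  simp only [Finset.mem_filter, Finset.mem_union, Finset.mem_erase, not_and_or, not_not] at *
  tauto

def GP (k T ℓ : ℕ) (χ : Finset α → Fin r) (b : ℕ → ℕ → α) (S : Finset α) : Prop :=
  ∃ γ : Fin r, ∃ u : ℕ → α, ∃ js : ℕ → ℕ,
    Set.InjOn u (Set.Iio (ℓ+1)) ∧ Set.InjOn js (Set.Iio ℓ) ∧
    (∀ i ≤ ℓ, u i ∈ S) ∧ (∀ i < ℓ, js i < T) ∧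
    (∀ i < ℓ, Qc k χ b (u i) (u (i+1)) (js i) = γ)

lemma GP_mono {k T ℓ : ℕ} {χ : Finset α → Fin r} {b : ℕ → ℕ → α} {S S' : Finset α}
    (h : S ⊆ S') : GP k T ℓ χ b S → GP k T ℓ χ b S' := by
  rintro ⟨γ, u, js, h1, h2, h3, h4, h5⟩
  exact ⟨γ, u, js, h1, h2, fun i hi => h (h3 i hi), h4, h5⟩

lemma notmem4 {a : α} {A B C D : Finset α} :
    a ∉ A ∪ B ∪ C ∪ D ↔ (a ∉ A ∧ a ∉ B ∧ a ∉ C ∧ a ∉ D) := by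
  simp only [Finset.mem_union, not_or]
  tauto

lemma dfs [Inhabited α] (k ℓ T s : ℕ) (χ : Finset α → Fin r) (b : ℕ → ℕ → α) (γ : Fin r)
    (X Y : Finset α) (hXY : Disjoint X Y)
    (hs : 1 ≤ s) (hX : 2*s + ℓ ≤ X.card) (hY : 2*s + ℓ ≤ Y.card) :
    ∀ N (UX UY FX FY : Finset α) (cs : List (Bool × α)) (bs : List ℕ),
    2*(UX.card + UY.card) + cs.length ≤ N →
    UX ⊆ X → UY ⊆ Y → FX ⊆ X → FY ⊆ Y →
    Disjoint UX FX → Disjoint UY FY →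
    (cs.map Prod.snd).Nodup →
    (∀ p ∈ cs, p.2 ∉ UX ∪ UY ∪ FX ∪ FY) →
    (∀ p ∈ cs, (p.1 = true → p.2 ∈ X) ∧ (p.1 = false → p.2 ∈ Y)) →
    bs.Nodup → (∀ j ∈ bs, j < T) →
    (cs.length = bs.length + 1 ∨ (cs = [] ∧ bs = [])) →
    (∀ i, i + 1 < cs.length →
      Qc k χ b (cs.getD i default).2 (cs.getD (i+1) default).2 (bs.getD i 0) = γ) →
    cs.length ≤ ℓ + 1 →
    FX.card < s → FY.card < s →
    X.card ≤ FX.card + UX.card + (cs.filter (fun p => p.1)).length →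
    Y.card ≤ FY.card + UY.card + (cs.filter (fun p => !p.1)).length →
    (∀ x ∈ FX, ∀ y ∈ UY, cnt k T χ b γ x y ≤ ℓ - 1) →
    (∀ y ∈ FY, ∀ x ∈ UX, cnt k T χ b γ y x ≤ ℓ - 1) →
    GP k T ℓ χ b (X ∪ Y) ∨
      ∃ A B : Finset α, ((A ⊆ X ∧ B ⊆ Y) ∨ (A ⊆ Y ∧ B ⊆ X)) ∧ s ≤ A.card ∧ s ≤ B.card ∧
        ∀ a ∈ A, ∀ b' ∈ B, cnt k T χ b γ a b' ≤ ℓ := by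
  intro N
  induction N with
  | zero =>
    intro UX UY FX FY cs bs hm hUX hUY hFX hFY hdUX hdUY hnd hstU hflag hbnd hbT hlen hchain
      hcl hFXs hFYs hcX hcY hceX hceY
    exfalso
    have h2 : (cs.filter (fun p => p.1)).length ≤ cs.length := List.length_filter_le _ _
    omega
  | succ N ih =>
    intro UX UY FX FY cs bs hm hUX hUY hFX hFY hdUX hdUY hnd hstU hflag hbnd hbT hlen hchain
      hcl hFXs hFYs hcX hcY hceX hceY
    by_cases hwin : cs.length = ℓ + 1
    · -- success: the stack is a full path
      left
      have hbsl : bs.length = ℓ := by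
        rcases hlen with h | ⟨h, _⟩
        · omega
        · exfalso; rw [h] at hwin; simp at hwin
      refine ⟨γ, fun i => (cs.getD (ℓ - i) default).2, fun i => bs.getD (ℓ - 1 - i) 0,
        ?_, ?_, ?_, ?_, ?_⟩
      · intro i hi i' hi' he
        simp only [Set.mem_Iio] at hi hi'
        have h1 : ℓ - i < cs.length := by omega
        have h2 : ℓ - i' < cs.length := by omega
        replace he : (cs.getD (ℓ - i) default).2 = (cs.getD (ℓ - i') default).2 := he
        rw [List.getD_eq_getElem _ _ h1, List.getD_eq_getElem _ _ h2] at he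
        have h3 : (cs.map Prod.snd)[ℓ - i]'(by simpa using h1) =
            (cs.map Prod.snd)[ℓ - i']'(by simpa using h2) := by
          simp only [List.getElem_map]; exact he
        have := hnd.getElem_inj_iff.mp h3
        omega
      · intro i hi i' hi' he
        simp only [Set.mem_Iio] at hi hi'
        have h1 : ℓ - 1 - i < bs.length := by omega
        have h2 : ℓ - 1 - i' < bs.length := by omega
        replace he : bs.getD (ℓ - 1 - i) 0 = bs.getD (ℓ - 1 - i') 0 := he
        rw [List.getD_eq_getElem _ _ h1, List.getD_eq_getElem _ _ h2] at he
        have := hbnd.getElem_inj_iff.mp he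
        omega
      · intro i hi
        have h1 : ℓ - i < cs.length := by omega
        show (cs.getD (ℓ - i) default).2 ∈ X ∪ Y
        rw [List.getD_eq_getElem _ _ h1]
        have hmem := List.getElem_mem h1
        rcases hflag _ hmem with ⟨hfT, hfF⟩
        rcases Bool.eq_false_or_eq_true (cs[ℓ-i]'h1).1 with h | h
        · exact Finset.mem_union_left _ (hfT h)
        · exact Finset.mem_union_right _ (hfF h)
      · intro i hi
        have h1 : ℓ - 1 - i < bs.length := by omega
        show bs.getD (ℓ - 1 - i) 0 < T
        rw [List.getD_eq_getElem _ _ h1]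
        exact hbT _ (List.getElem_mem h1)
      · intro i hi
        have e1 : ℓ - i = (ℓ - 1 - i) + 1 := by omega
        have e2 : ℓ - (i+1) = ℓ - 1 - i := by omega
        show Qc k χ b (cs.getD (ℓ - i) default).2 (cs.getD (ℓ - (i+1)) default).2
          (bs.getD (ℓ - 1 - i) 0) = γ
        rw [e1, e2, Qc_symm]
        exact hchain (ℓ - 1 - i) (by omega)
    · rcases cs with _ | ⟨⟨fl, x⟩, rest⟩
      · -- empty stack: pick a new root from UX
        simp only [List.filter_nil, List.length_nil, add_zero] at hcX hcY
        by_cases hUXe : UX = ∅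
        · exfalso
          rw [hUXe] at hcX
          simp at hcX
          omega
        · obtain ⟨x, hx⟩ := Finset.nonempty_iff_ne_empty.mpr hUXe
          have hxX : x ∈ X := hUX hx
          have hbse : bs = [] := by
            rcases hlen with h | ⟨_, h⟩
            · simp at h
            · exact h
          subst hbse
          have hUXpos : 0 < UX.card := Finset.card_pos.mpr ⟨x, hx⟩
          have hec : (UX.erase x).card = UX.card - 1 := Finset.card_erase_of_mem hx
          refine ih (UX.erase x) UY FX FY [(true, x)] []
            (by simp only [List.length_nil, add_zero, List.length_cons] at hm ⊢; omega)
            ((Finset.erase_subset _ _).trans hUX) hUY hFX hFY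
            (hdUX.mono_left (Finset.erase_subset _ _)) hdUY
            (by simp)
            ?_ ?_ (by simp) (by simp) (Or.inl rfl)
            (by intro i hi; simp only [List.length_cons, List.length_nil] at hi; omega)
            (by simp only [List.length_cons, List.length_nil]; omega)
            hFXs hFYs ?_ ?_ hceX ?_
          · intro p hp
            simp only [List.mem_singleton] at hp
            subst hp
            rw [notmem4]
            refine ⟨Finset.notMem_erase _ _, ?_, ?_, ?_⟩
            · exact fun h => Finset.disjoint_left.mp hXY hxX (hUY h)
            · exact Finset.disjoint_left.mp hdUX hx
            · exact fun h => Finset.disjoint_left.mp hXY hxX (hFY h)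
          · intro p hp
            simp only [List.mem_singleton] at hp
            subst hp
            exact ⟨fun _ => hxX, fun h => by simp at h⟩
          · have e : (List.filter (fun p => p.1) [((true : Bool), x)]).length = 1 := rfl
            omega
          · have e : (List.filter (fun p => !p.1) [((true : Bool), x)]).length = 0 := rfl
            omega
          · intro y hy x' hx'
            exact hceY y hy x' (Finset.mem_of_mem_erase hx')
      · -- nonempty stack
        have hxmem := hflag (fl, x) List.mem_cons_self
        have hxU := hstU (fl, x) List.mem_cons_self
        simp only [List.length_cons] at hm hcl hwin
        have hbsl : rest.length = bs.length := by
          rcases hlen with h | ⟨h, _⟩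
          · simp only [List.length_cons] at h; omega
          · simp at h
        have hclen : rest.length + 1 ≤ ℓ := by omega
        rw [notmem4] at hxU
        obtain ⟨hxUX, hxUY, hxFX, hxFY⟩ := hxU
        simp only [List.map_cons] at hnd
        have hndr : (rest.map Prod.snd).Nodup := hnd.of_cons
        have hxnr : x ∉ rest.map Prod.snd := (List.nodup_cons.mp hnd).1
        cases fl with
        | true =>
          have hxX : x ∈ X := hxmem.1 rfl
          by_cases hpush : ∃ v ∈ UY, ∃ j, j < T ∧ j ∉ bs ∧ Qc k χ b x v j = γ
          · -- PUSH into Y side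
            obtain ⟨v, hv, j, hjT, hjbs, hQ⟩ := hpush
            have hvY : v ∈ Y := hUY hv
            have hUYpos : 0 < UY.card := Finset.card_pos.mpr ⟨v, hv⟩
            have hec : (UY.erase v).card = UY.card - 1 := Finset.card_erase_of_mem hv
            refine ih UX (UY.erase v) FX FY ((false, v) :: (true, x) :: rest) (j :: bs)
              (by simp only [List.length_cons]; omega)
              hUX ((Finset.erase_subset _ _).trans hUY) hFX hFY
              hdUX (hdUY.mono_left (Finset.erase_subset _ _))
              ?_ ?_ ?_ (List.nodup_cons.mpr ⟨hjbs, hbnd⟩) ?_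
              (Or.inl (by simp only [List.length_cons]; omega))
              ?_ (by simp only [List.length_cons]; omega)
              hFXs hFYs ?_ ?_ ?_ hceY
            · simp only [List.map_cons]
              refine List.nodup_cons.mpr ⟨?_, hnd⟩
              simp only [List.mem_cons, not_or]
              constructor
              · intro h; subst h; exact hxUY hv
              · intro h
                obtain ⟨p, hp, he⟩ := List.mem_map.mp h
                have := hstU p (List.mem_cons_of_mem _ hp)
                rw [notmem4] at this
                exact this.2.1 (he ▸ hv)
            · intro p hp
              rcases List.mem_cons.mp hp with rfl | hp'
              · rw [notmem4]
                refine ⟨?_, Finset.notMem_erase _ _, ?_, ?_⟩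
                · exact fun h => Finset.disjoint_left.mp hXY (hUX h) hvY
                · exact fun h => Finset.disjoint_left.mp hXY (hFX h) hvY
                · exact Finset.disjoint_left.mp hdUY hv
              · have := hstU p hp'
                rw [notmem4] at this
                rw [notmem4]
                exact ⟨this.1, fun h => this.2.1 (Finset.mem_of_mem_erase h), this.2.2.1, this.2.2.2⟩
            · intro p hp
              rcases List.mem_cons.mp hp with rfl | hp'
              · exact ⟨fun h => by simp at h, fun _ => hvY⟩
              · exact hflag p hp'
            · intro j' hj'
              rcases List.mem_cons.mp hj' with rfl | hj''
              · exact hjT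
              · exact hbT _ hj''
            · intro i hi
              match i with
              | 0 =>
                simp only [List.getD_cons_zero, List.getD_cons_succ]
                rw [Qc_symm]
                exact hQ
              | (i+1) =>
                simp only [List.getD_cons_succ]
                exact hchain i (by simp only [List.length_cons] at hi ⊢; omega)
            · have he : ((((false, v)) :: ((true, x)) :: rest).filter (fun p => p.1)).length
                  = (((true, x) :: rest).filter (fun p => p.1)).length := by
                simp [List.filter_cons]
              rw [he]
              omega
            · have he : ((((false, v)) :: ((true, x)) :: rest).filter (fun p => !p.1)).length
                  = (((true, x) :: rest).filter (fun p => !p.1)).length + 1 := by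
                simp [List.filter_cons]
              rw [he]
              omega
            · intro x' hx' y hy
              exact hceX x' hx' y (Finset.mem_of_mem_erase hy)
          · -- POP to FX
            push_neg at hpush
            have hcnew : ∀ y ∈ UY, cnt k T χ b γ x y ≤ ℓ - 1 := by
              intro y hy
              have hsub : (Finset.range T).filter (fun j => Qc k χ b x y j = γ) ⊆ bs.toFinset := by
                intro j hj
                simp only [Finset.mem_filter, Finset.mem_range] at hj
                rw [List.mem_toFinset]
                by_contra hjb
                exact hpush y hy j hj.1 hjb hj.2
              calc cnt k T χ b γ x y ≤ bs.toFinset.card := Finset.card_le_card hsub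
                _ ≤ bs.length := List.toFinset_card_le _
                _ ≤ ℓ - 1 := by omega
            by_cases hstop : FX.card + 1 = s
            · right
              have hfb : (((true,x) :: rest).filter (fun p => !p.1)).length ≤ rest.length := by
                have : (((true,x) :: rest).filter (fun p => !p.1)) = rest.filter (fun p => !p.1) := by
                  simp [List.filter_cons]
                rw [this]
                exact List.length_filter_le _ _
              refine ⟨insert x FX, UY, Or.inl ⟨Finset.insert_subset hxX hFX, hUY⟩, ?_, ?_, ?_⟩
              · rw [Finset.card_insert_of_notMem hxFX]; omega
              · omega
              · intro a ha b' hb'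
                rcases Finset.mem_insert.mp ha with rfl | ha'
                · exact le_trans (hcnew b' hb') (by omega)
                · exact le_trans (hceX a ha' b' hb') (by omega)
            · refine ih UX UY (insert x FX) FY rest bs.tail
                (by omega)
                hUX hUY (Finset.insert_subset hxX hFX) hFY
                (Finset.disjoint_insert_right.mpr ⟨hxUX, hdUX⟩) hdUY
                hndr ?_ (fun p hp => hflag p (List.mem_cons_of_mem _ hp))
                ?_ (fun j' hj' => hbT _ (List.mem_of_mem_tail hj'))
                ?_ ?_ (by omega)
                ?_ hFYs ?_ ?_ ?_ hceY
              · intro p hp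
                have h1 := hstU p (List.mem_cons_of_mem _ hp)
                rw [notmem4] at h1
                rw [notmem4]
                refine ⟨h1.1, h1.2.1, ?_, h1.2.2.2⟩
                rw [Finset.mem_insert]
                push_neg
                refine ⟨?_, h1.2.2.1⟩
                intro he
                exact hxnr (he ▸ List.mem_map_of_mem (f := Prod.snd) hp)
              · cases bs with
                | nil => simp
                | cons j0 bt => exact (List.nodup_cons.mp hbnd).2
              · by_cases hre : rest.length = 0
                · right
                  refine ⟨List.length_eq_zero_iff.mp hre, ?_⟩
                  have : bs = [] := List.length_eq_zero_iff.mp (by omega)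
                  simp [this]
                · left; rw [List.length_tail]; omega
              · intro i hi
                have h1 := hchain (i+1) (by simp only [List.length_cons]; omega)
                simp only [List.getD_cons_succ] at h1
                cases bs with
                | nil => simp only [List.length_nil] at hbsl; omega
                | cons j0 bt => simpa using h1
              · rw [Finset.card_insert_of_notMem hxFX]; omega
              · rw [Finset.card_insert_of_notMem hxFX]
                have he : (((true,x) :: rest).filter (fun p => p.1)).length
                    = (rest.filter (fun p => p.1)).length + 1 := by
                  simp [List.filter_cons]
                omega
              · have he : (((true,x) :: rest).filter (fun p => !p.1)).length
                    = (rest.filter (fun p => !p.1)).length := by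
                  simp [List.filter_cons]
                omega
              · intro x' hx' y hy
                rcases Finset.mem_insert.mp hx' with rfl | hx''
                · exact hcnew y hy
                · exact hceX x' hx'' y hy
        | false =>
          have hxY : x ∈ Y := hxmem.2 rfl
          by_cases hpush : ∃ v ∈ UX, ∃ j, j < T ∧ j ∉ bs ∧ Qc k χ b x v j = γ
          · -- PUSH into X side
            obtain ⟨v, hv, j, hjT, hjbs, hQ⟩ := hpush
            have hvX : v ∈ X := hUX hv
            have hUXpos : 0 < UX.card := Finset.card_pos.mpr ⟨v, hv⟩
            have hec : (UX.erase v).card = UX.card - 1 := Finset.card_erase_of_mem hv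
            refine ih (UX.erase v) UY FX FY ((true, v) :: (false, x) :: rest) (j :: bs)
              (by simp only [List.length_cons]; omega)
              ((Finset.erase_subset _ _).trans hUX) hUY hFX hFY
              (hdUX.mono_left (Finset.erase_subset _ _)) hdUY
              ?_ ?_ ?_ (List.nodup_cons.mpr ⟨hjbs, hbnd⟩) ?_
              (Or.inl (by simp only [List.length_cons]; omega))
              ?_ (by simp only [List.length_cons]; omega)
              hFXs hFYs ?_ ?_ hceX ?_
            · simp only [List.map_cons]
              refine List.nodup_cons.mpr ⟨?_, hnd⟩
              simp only [List.mem_cons, not_or]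
              constructor
              · intro h; subst h; exact hxUX hv
              · intro h
                obtain ⟨p, hp, he⟩ := List.mem_map.mp h
                have := hstU p (List.mem_cons_of_mem _ hp)
                rw [notmem4] at this
                exact this.1 (he ▸ hv)
            · intro p hp
              rcases List.mem_cons.mp hp with rfl | hp'
              · rw [notmem4]
                refine ⟨Finset.notMem_erase _ _, ?_, ?_, ?_⟩
                · exact fun h => Finset.disjoint_left.mp hXY hvX (hUY h)
                · exact Finset.disjoint_left.mp hdUX hv
                · exact fun h => Finset.disjoint_left.mp hXY hvX (hFY h)
              · have := hstU p hp'
                rw [notmem4] at this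
                rw [notmem4]
                exact ⟨fun h => this.1 (Finset.mem_of_mem_erase h), this.2.1, this.2.2.1, this.2.2.2⟩
            · intro p hp
              rcases List.mem_cons.mp hp with rfl | hp'
              · exact ⟨fun _ => hvX, fun h => by simp at h⟩
              · exact hflag p hp'
            · intro j' hj'
              rcases List.mem_cons.mp hj' with rfl | hj''
              · exact hjT
              · exact hbT _ hj''
            · intro i hi
              match i with
              | 0 =>
                simp only [List.getD_cons_zero, List.getD_cons_succ]
                rw [Qc_symm]
                exact hQ
              | (i+1) =>
                simp only [List.getD_cons_succ]
                exact hchain i (by simp only [List.length_cons] at hi ⊢; omega)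
            · have he : ((((true, v)) :: ((false, x)) :: rest).filter (fun p => p.1)).length
                  = (((false, x) :: rest).filter (fun p => p.1)).length + 1 := by
                simp [List.filter_cons]
              rw [he]
              omega
            · have he : ((((true, v)) :: ((false, x)) :: rest).filter (fun p => !p.1)).length
                  = (((false, x) :: rest).filter (fun p => !p.1)).length := by
                simp [List.filter_cons]
              rw [he]
              omega
            · intro y hy x' hx'
              exact hceY y hy x' (Finset.mem_of_mem_erase hx')
          · -- POP to FY
            push_neg at hpush
            have hcnew : ∀ y ∈ UX, cnt k T χ b γ x y ≤ ℓ - 1 := by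
              intro y hy
              have hsub : (Finset.range T).filter (fun j => Qc k χ b x y j = γ) ⊆ bs.toFinset := by
                intro j hj
                simp only [Finset.mem_filter, Finset.mem_range] at hj
                rw [List.mem_toFinset]
                by_contra hjb
                exact hpush y hy j hj.1 hjb hj.2
              calc cnt k T χ b γ x y ≤ bs.toFinset.card := Finset.card_le_card hsub
                _ ≤ bs.length := List.toFinset_card_le _
                _ ≤ ℓ - 1 := by omega
            by_cases hstop : FY.card + 1 = s
            · right
              have hfb : (((false,x) :: rest).filter (fun p => p.1)).length ≤ rest.length := by
                have : (((false,x) :: rest).filter (fun p => p.1)) = rest.filter (fun p => p.1) := by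
                  simp [List.filter_cons]
                rw [this]
                exact List.length_filter_le _ _
              refine ⟨insert x FY, UX, Or.inr ⟨Finset.insert_subset hxY hFY, hUX⟩, ?_, ?_, ?_⟩
              · rw [Finset.card_insert_of_notMem hxFY]; omega
              · omega
              · intro a ha b' hb'
                rcases Finset.mem_insert.mp ha with rfl | ha'
                · exact le_trans (hcnew b' hb') (by omega)
                · exact le_trans (hceY a ha' b' hb') (by omega)
            · refine ih UX UY FX (insert x FY) rest bs.tail
                (by omega)
                hUX hUY hFX (Finset.insert_subset hxY hFY)
                hdUX (Finset.disjoint_insert_right.mpr ⟨hxUY, hdUY⟩)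
                hndr ?_ (fun p hp => hflag p (List.mem_cons_of_mem _ hp))
                ?_ (fun j' hj' => hbT _ (List.mem_of_mem_tail hj'))
                ?_ ?_ (by omega)
                hFXs ?_ ?_ ?_ hceX ?_
              · intro p hp
                have h1 := hstU p (List.mem_cons_of_mem _ hp)
                rw [notmem4] at h1
                rw [notmem4]
                refine ⟨h1.1, h1.2.1, h1.2.2.1, ?_⟩
                rw [Finset.mem_insert]
                push_neg
                refine ⟨?_, h1.2.2.2⟩
                intro he
                exact hxnr (he ▸ List.mem_map_of_mem (f := Prod.snd) hp)
              · cases bs with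
                | nil => simp
                | cons j0 bt => exact (List.nodup_cons.mp hbnd).2
              · by_cases hre : rest.length = 0
                · right
                  refine ⟨List.length_eq_zero_iff.mp hre, ?_⟩
                  have : bs = [] := List.length_eq_zero_iff.mp (by omega)
                  simp [this]
                · left; rw [List.length_tail]; omega
              · intro i hi
                have h1 := hchain (i+1) (by simp only [List.length_cons]; omega)
                simp only [List.getD_cons_succ] at h1
                cases bs with
                | nil => simp only [List.length_nil] at hbsl; omega
                | cons j0 bt => simpa using h1
              · rw [Finset.card_insert_of_notMem hxFY]; omega
              · have he : (((false,x) :: rest).filter (fun p => p.1)).length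
                    = (rest.filter (fun p => p.1)).length := by
                  simp [List.filter_cons]
                omega
              · rw [Finset.card_insert_of_notMem hxFY]
                have he : (((false,x) :: rest).filter (fun p => !p.1)).length
                    = (rest.filter (fun p => !p.1)).length + 1 := by
                  simp [List.filter_cons]
                omega
              · intro y' hy' x'' hx''
                rcases Finset.mem_insert.mp hy' with rfl | hy''
                · exact hcnew x'' hx''
                · exact hceY y' hy'' x'' hx''

lemma main [Inhabited α] (k ℓ T : ℕ) (χ : Finset α → Fin r) (b : ℕ → ℕ → α)
    (hT : T = r * ℓ) (hl : 2 ≤ ℓ) :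
    ∀ c (live : Finset (Fin r)) (X Y : Finset α), live.card = c + 1 →
    Disjoint X Y → (2^(c+1) - 1) * ℓ ≤ X.card → (2^(c+1) - 1) * ℓ ≤ Y.card →
    (∀ x ∈ X, ∀ y ∈ Y, dcnt k T χ b live x y ≤ (r - (c+1)) * ℓ) →
    GP k T ℓ χ b (X ∪ Y) := by
  intro c
  induction c with
  | zero =>
    intro live X Y hlive hXY hXc hYc hdc
    obtain ⟨γ, rfl⟩ := Finset.card_eq_one.mp hlive
    have hr1 : 0 < r := γ.pos
    have hXl : ℓ ≤ X.card := by
      have : (2^(0+1) - 1) * ℓ = ℓ := by norm_num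
      omega
    have hYl : ℓ ≤ Y.card := by
      have : (2^(0+1) - 1) * ℓ = ℓ := by norm_num
      omega
    have hcnt : ∀ x ∈ X, ∀ y ∈ Y, ℓ ≤ cnt k T χ b γ x y := by
      intro x hx y hy
      have h1 := Finset.card_filter_add_card_filter_not
        (s := Finset.range T) (p := fun j => Qc k χ b x y j = γ)
      have h2 : ((Finset.range T).filter (fun j => ¬ Qc k χ b x y j = γ)).card
          = dcnt k T χ b {γ} x y := by
        unfold dcnt
        congr 1
        apply Finset.filter_congr
        intro j _
        simp
      have h3 := hdc x hx y hy
      have h4 : (r - 1) * ℓ + ℓ = r * ℓ := by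
        have e : r - 1 + 1 = r := by omega
        calc (r-1)*ℓ + ℓ = (r-1+1)*ℓ := by ring
          _ = r*ℓ := by rw [e]
      have h5 : (r - (0+1)) * ℓ = (r-1) * ℓ := by norm_num
      unfold cnt
      simp only [Finset.card_range] at h1
      omega
    -- build the path greedily
    set Lx := X.toList with hLxd
    set Ly := Y.toList with hLyd
    have hLxl : Lx.length = X.card := Finset.length_toList X
    have hLyl : Ly.length = Y.card := Finset.length_toList Y
    set u : ℕ → α := fun i => if i % 2 = 0 then Lx.getD (i/2) default else Ly.getD (i/2) default
      with hud
    have hix : ∀ i, i ≤ ℓ → i/2 < Lx.length := by intro i hi; omega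
    have hiy : ∀ i, i ≤ ℓ → i/2 < Ly.length := by intro i hi; omega
    have huX : ∀ i, i ≤ ℓ → i % 2 = 0 → u i ∈ X := by
      intro i hi hp
      show (if i % 2 = 0 then Lx.getD (i/2) default else Ly.getD (i/2) default) ∈ X
      rw [if_pos hp, List.getD_eq_getElem _ _ (hix i hi)]
      have := List.getElem_mem (hix i hi)
      exact Finset.mem_toList.mp this
    have huY : ∀ i, i ≤ ℓ → i % 2 = 1 → u i ∈ Y := by
      intro i hi hp
      show (if i % 2 = 0 then Lx.getD (i/2) default else Ly.getD (i/2) default) ∈ Y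
      rw [if_neg (by omega), List.getD_eq_getElem _ _ (hiy i hi)]
      have := List.getElem_mem (hiy i hi)
      exact Finset.mem_toList.mp this
    have humem : ∀ i, i ≤ ℓ → u i ∈ X ∪ Y := by
      intro i hi
      rcases Nat.even_or_odd i with h | h
      · exact Finset.mem_union_left _ (huX i hi (Nat.even_iff.mp h))
      · exact Finset.mem_union_right _ (huY i hi (Nat.odd_iff.mp h))
    have huinj : Set.InjOn u (Set.Iio (ℓ+1)) := by
      intro i hi i' hi' he
      simp only [Set.mem_Iio] at hi hi'
      have hi2 : i ≤ ℓ := by omega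
      have hi2' : i' ≤ ℓ := by omega
      by_cases p1 : i % 2 = 0 <;> by_cases p2 : i' % 2 = 0
      · replace he : Lx.getD (i/2) default = Lx.getD (i'/2) default := by
          simpa only [hud, p1, p2, if_pos] using he
        rw [List.getD_eq_getElem _ _ (hix i hi2), List.getD_eq_getElem _ _ (hix i' hi2')] at he
        have := (Finset.nodup_toList X).getElem_inj_iff.mp he
        omega
      · exfalso
        have h1 : u i ∈ X := huX i hi2 p1
        have h2 : u i' ∈ Y := huY i' hi2' (by omega)
        rw [he] at h1
        exact Finset.disjoint_left.mp hXY h1 h2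
      · exfalso
        have h1 : u i ∈ Y := huY i hi2 (by omega)
        have h2 : u i' ∈ X := huX i' hi2' p2
        rw [← he] at h2
        exact Finset.disjoint_left.mp hXY h2 h1
      · replace he : Ly.getD (i/2) default = Ly.getD (i'/2) default := by
          simpa only [hud, p1, p2, if_neg, ↓reduceIte] using he
        rw [List.getD_eq_getElem _ _ (hiy i hi2), List.getD_eq_getElem _ _ (hiy i' hi2')] at he
        have := (Finset.nodup_toList Y).getElem_inj_iff.mp he
        omega
    have hblocks : ∀ m, m ≤ ℓ → ∃ L : List ℕ, L.length = m ∧ L.Nodup ∧ (∀ j ∈ L, j < T) ∧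
        ∀ i, i < m → Qc k χ b (u i) (u (i+1)) (L.getD i 0) = γ := by
      intro m
      induction m with
      | zero => intro _; exact ⟨[], rfl, List.nodup_nil, by simp, by omega⟩
      | succ m ihm =>
        intro hm
        obtain ⟨L, hL1, hL2, hL3, hL4⟩ := ihm (by omega)
        have hcross : ℓ ≤ cnt k T χ b γ (u m) (u (m+1)) := by
          by_cases hp : m % 2 = 0
          · exact hcnt _ (huX m (by omega) hp) _ (huY (m+1) (by omega) (by omega))
          · rw [cnt_symm]
            exact hcnt _ (huX (m+1) (by omega) (by omega)) _ (huY m (by omega) (by omega))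
        have hex : ∃ j ∈ (Finset.range T).filter (fun j => Qc k χ b (u m) (u (m+1)) j = γ),
            j ∉ L := by
          by_contra hco
          push_neg at hco
          have hsub : (Finset.range T).filter (fun j => Qc k χ b (u m) (u (m+1)) j = γ)
              ⊆ L.toFinset := fun j hj => List.mem_toFinset.mpr (hco j hj)
          have h5 := (Finset.card_le_card hsub).trans (List.toFinset_card_le L)
          rw [hL1] at h5
          have h6 : cnt k T χ b γ (u m) (u (m+1))
              = ((Finset.range T).filter (fun j => Qc k χ b (u m) (u (m+1)) j = γ)).card := rfl
          omega
        obtain ⟨j, hjG, hjL⟩ := hex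
        have hjT : j < T := Finset.mem_range.mp (Finset.mem_filter.mp hjG).1
        refine ⟨L ++ [j], by simp [hL1], ?_, ?_, ?_⟩
        · rw [List.nodup_append]
          refine ⟨hL2, List.nodup_singleton j, ?_⟩
          intro a ha c hb
          simp only [List.mem_singleton] at hb
          subst hb
          intro hac; subst hac
          exact hjL ha
        · intro j' hj'
          rcases List.mem_append.mp hj' with h | h
          · exact hL3 _ h
          · simp only [List.mem_singleton] at h
            subst h
            exact hjT
        · intro i hi
          rcases Nat.lt_succ_iff_lt_or_eq.mp hi with h | rfl
          · rw [List.getD_append _ _ _ _ (by omega)]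
            exact hL4 i h
          · rw [List.getD_append_right _ _ _ _ (by omega)]
            rw [hL1, Nat.sub_self, List.getD_cons_zero]
            exact (Finset.mem_filter.mp hjG).2
    obtain ⟨L, hL1, hL2, hL3, hL4⟩ := hblocks ℓ le_rfl
    refine ⟨γ, u, fun i => L.getD i 0, huinj, ?_, humem, ?_, fun i hi => hL4 i hi⟩
    · intro i hi i' hi' he
      simp only [Set.mem_Iio] at hi hi'
      replace he : L.getD i 0 = L.getD i' 0 := he
      have hi1 : i < L.length := by omega
      have hi1' : i' < L.length := by omega
      rw [List.getD_eq_getElem _ _ hi1, List.getD_eq_getElem _ _ hi1'] at he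
      exact hL2.getElem_inj_iff.mp he
    · intro i hi
      show L.getD i 0 < T
      have hi1 : i < L.length := by omega
      rw [List.getD_eq_getElem _ _ hi1]
      exact hL3 _ (List.getElem_mem _)
  | succ c ih =>
    intro live X Y hlive hXY hXc hYc hdc
    have hlpos : 0 < live.card := by omega
    obtain ⟨γ, hγ⟩ := Finset.card_pos.mp hlpos
    have hrc : c + 2 ≤ r := by
      have h1 : live.card ≤ r := le_trans (Finset.card_le_univ live) (by simp)
      omega
    have h2c : 2 ≤ 2^(c+1) := by
      calc 2 = 2^1 := rfl
        _ ≤ 2^(c+1) := Nat.pow_le_pow_right (by omega) (by omega)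
    have h2c2 : 2^(c+2) = 2*2^(c+1) := by rw [pow_succ]; ring
    have hs1 : 1 ≤ (2^(c+1) - 1) * ℓ := by
      have := Nat.mul_le_mul (show 1 ≤ 2^(c+1) - 1 by omega) (show 1 ≤ ℓ by omega)
      simpa using this
    have hXc' : (2^(c+2) - 1)*ℓ ≤ X.card := by rwa [show c+1+1 = c+2 from rfl] at hXc
    have hYc' : (2^(c+2) - 1)*ℓ ≤ Y.card := by rwa [show c+1+1 = c+2 from rfl] at hYc
    have hsize : 2*((2^(c+1) - 1) * ℓ) + ℓ ≤ X.card ∧ 2*((2^(c+1) - 1) * ℓ) + ℓ ≤ Y.card := by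
      have he : 2*((2^(c+1) - 1) * ℓ) + ℓ = (2^(c+2) - 1)*ℓ := by
        have e : 2*(2^(c+1) - 1) + 1 = 2^(c+2) - 1 := by omega
        calc 2*((2^(c+1)-1)*ℓ) + ℓ = (2*(2^(c+1)-1) + 1)*ℓ := by ring
          _ = (2^(c+2)-1)*ℓ := by rw [e]
      omega
    have hdfs := dfs k ℓ T ((2^(c+1) - 1) * ℓ) χ b γ X Y hXY hs1 hsize.1 hsize.2
      (2*(X.card + Y.card)) X Y ∅ ∅ [] []
      (by simp) (le_refl X) (le_refl Y) (by simp) (by simp)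
      (by simp) (by simp) (by simp) (by simp) (by simp)
      (by simp) (by simp) (Or.inr ⟨rfl, rfl⟩)
      (by intro i hi; simp at hi)
      (by simp)
      (by simp only [Finset.card_empty]; omega) (by simp only [Finset.card_empty]; omega)
      (by simp) (by simp) (by simp) (by simp)
    rcases hdfs with hGP | ⟨A, B, hAB, hAc, hBc, hce⟩
    · exact hGP
    · have herase : (live.erase γ).card = c + 1 := by
        rw [Finset.card_erase_of_mem hγ, hlive]
        omega
      have harith : ∀ a b', dcnt k T χ b live a b' ≤ (r - (c+2))*ℓ →
          cnt k T χ b γ a b' ≤ ℓ →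
          dcnt k T χ b (live.erase γ) a b' ≤ (r - (c+1))*ℓ := by
        intro a b' h1 h2
        have h3 := dcnt_erase_le k T χ b live γ a b'
        have h4 : (r - (c+2))*ℓ + ℓ = (r - (c+1))*ℓ := by
          have e : r - (c+2) + 1 = r - (c+1) := by omega
          calc (r-(c+2))*ℓ + ℓ = (r-(c+2)+1)*ℓ := by ring
            _ = _ := by rw [e]
        omega
      rcases hAB with ⟨hAX, hBY⟩ | ⟨hAY, hBX⟩
      · refine GP_mono (Finset.union_subset_union hAX hBY)
          (ih (live.erase γ) A B herase (hXY.mono hAX hBY) hAc hBc ?_)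
        intro a ha b' hb'
        refine harith a b' ?_ (hce a ha b' hb')
        have := hdc a (hAX ha) b' (hBY hb')
        rwa [show c+1+1 = c+2 from rfl] at this
      · refine GP_mono ?_ (ih (live.erase γ) A B herase
          ((hXY.symm).mono hAY hBX) hAc hBc ?_)
        · intro v hv
          rcases Finset.mem_union.mp hv with h | h
          · exact Finset.mem_union_right _ (hAY h)
          · exact Finset.mem_union_left _ (hBX h)
        · intro a ha b' hb'
          refine harith a b' ?_ (hce a ha b' hb')
          rw [dcnt_symm]
          have := hdc b' (hBX hb') a (hAY ha)
          rwa [show c+1+1 = c+2 from rfl] at this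

end LPaux

theorem loosePath_constructive_bound (k ℓ r : ℕ) (hk : 2 ≤ k) (hl : 3 ≤ ℓ) (hr : 2 ≤ r)
    (n : ℕ) (hn : 2 ^ (r + 1) * ℓ + (k - 2) * ℓ * r ≤ n) (χ : Finset (Fin n) → Fin r) :
    HasMonoLoosePath k ℓ χ := by
  classical
  have hn0 : 0 < n := by
    have h1 : 0 < 2^(r+1)*ℓ := by positivity
    omega
  haveI : Inhabited (Fin n) := ⟨⟨0, hn0⟩⟩
  have h2r : 2 ≤ 2^r := by
    calc 2 = 2^1 := rfl
      _ ≤ 2^r := Nat.pow_le_pow_right (by omega) (by omega)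
  have hbig : (k-2)*(r*ℓ) + (2^r - 1)*ℓ + (2^r - 1)*ℓ ≤ n := by
    have h1 : 2^(r+1)*ℓ = 2^r*ℓ + 2^r*ℓ := by rw [pow_succ]; ring
    have h2 : (2^r - 1)*ℓ + ℓ = 2^r*ℓ := by
      have e : (2^r - 1) + 1 = 2^r := by omega
      calc (2^r - 1)*ℓ + ℓ = ((2^r - 1) + 1)*ℓ := by ring
        _ = 2^r*ℓ := by rw [e]
    have h3 : (k-2)*ℓ*r = (k-2)*(r*ℓ) := by ring
    omega
  set T := r*ℓ with hT
  set P := (k-2)*T with hPd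
  set fz := (2^r - 1)*ℓ with hfzd
  have hfzl : ℓ ≤ fz := by
    have := Nat.mul_le_mul_right ℓ (show 1 ≤ 2^r - 1 by omega)
    simpa [hfzd] using this
  set i2f : ℕ → Fin n := fun m => ⟨m % n, Nat.mod_lt m hn0⟩ with hi2fd
  have hi2f : ∀ m, m < n → (i2f m).val = m := fun m hm => Nat.mod_eq_of_lt hm
  set b : ℕ → ℕ → Fin n := fun j q => i2f (j * (k-2) + q) with hbd
  have hbval : ∀ j q, j < T → q < k-2 → (b j q).val = j*(k-2)+q ∧ j*(k-2)+q < P := by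
    intro j q hj hq
    have h1 : j*(k-2)+q < T*(k-2) := by
      calc j*(k-2)+q < j*(k-2)+(k-2) := by omega
        _ = (j+1)*(k-2) := by ring
        _ ≤ T*(k-2) := Nat.mul_le_mul_right _ (by omega)
    have h2 : T*(k-2) = P := by rw [hPd]; ring
    exact ⟨hi2f _ (by omega), by omega⟩
  set X : Finset (Fin n) := (Finset.range fz).image (fun t => i2f (P + t)) with hXd
  set Y : Finset (Fin n) := (Finset.range fz).image (fun t => i2f (P + fz + t)) with hYd
  have hXmem : ∀ v ∈ X, P ≤ v.val ∧ v.val < P + fz := by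
    intro v hv
    rw [hXd] at hv
    obtain ⟨t, ht, rfl⟩ := Finset.mem_image.mp hv
    rw [Finset.mem_range] at ht
    rw [hi2f _ (by omega)]
    omega
  have hYmem : ∀ v ∈ Y, P + fz ≤ v.val ∧ v.val < P + fz + fz := by
    intro v hv
    rw [hYd] at hv
    obtain ⟨t, ht, rfl⟩ := Finset.mem_image.mp hv
    rw [Finset.mem_range] at ht
    rw [hi2f _ (by omega)]
    omega
  have hXcard : fz ≤ X.card := by
    have hinj : Set.InjOn (fun t => i2f (P + t)) ↑(Finset.range fz) := by
      intro t1 h1 t2 h2 he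
      simp only [Finset.mem_coe, Finset.mem_range] at h1 h2
      have e1 : (i2f (P+t1)).val = P+t1 := hi2f _ (by omega)
      have e2 : (i2f (P+t2)).val = P+t2 := hi2f _ (by omega)
      replace he : i2f (P+t1) = i2f (P+t2) := he
      rw [he] at e1
      omega
    rw [hXd, Finset.card_image_of_injOn hinj, Finset.card_range]
  have hYcard : fz ≤ Y.card := by
    have hinj : Set.InjOn (fun t => i2f (P + fz + t)) ↑(Finset.range fz) := by
      intro t1 h1 t2 h2 he
      simp only [Finset.mem_coe, Finset.mem_range] at h1 h2
      have e1 : (i2f (P+fz+t1)).val = P+fz+t1 := hi2f _ (by omega)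
      have e2 : (i2f (P+fz+t2)).val = P+fz+t2 := hi2f _ (by omega)
      replace he : i2f (P+fz+t1) = i2f (P+fz+t2) := he
      rw [he] at e1
      omega
    rw [hYd, Finset.card_image_of_injOn hinj, Finset.card_range]
  have hXY : Disjoint X Y := by
    rw [Finset.disjoint_left]
    intro v hv hv'
    have h1 := hXmem v hv
    have h2 := hYmem v hv'
    omega
  obtain ⟨γ, u, js, huinj, hjinj, humem, hjT, hedge⟩ :=
    LPaux.main k ℓ T χ b hT (by omega) (r-1) Finset.univ X Y
      (by rw [Finset.card_univ, Fintype.card_fin]; omega)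
      hXY
      (by rw [show r-1+1 = r from by omega]; exact hXcard)
      (by rw [show r-1+1 = r from by omega]; exact hYcard)
      (by intro x _ y _; simp [LPaux.dcnt])
  have huP : ∀ i, i ≤ ℓ → P ≤ (u i).val ∧ (u i).val < P + fz + fz := by
    intro i hi
    rcases Finset.mem_union.mp (humem i hi) with h | h
    · have := hXmem _ h; omega
    · have := hYmem _ h; omega
  have hk1 : 0 < k - 1 := by omega
  have hdiv : ∀ m, m ≤ (k-1)*ℓ → m / (k-1) ≤ ℓ := by
    intro m hm
    have h1 := Nat.div_le_div_right (c := k-1) hm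
    rwa [Nat.mul_div_cancel_left _ hk1] at h1
  have hstrict : ∀ m, m ≤ (k-1)*ℓ → m % (k-1) ≠ 0 → m/(k-1) < ℓ := by
    intro m hm hq
    by_contra h
    push_neg at h
    have h2 := Nat.mul_le_mul_left (k-1) h
    have h3 := Nat.div_add_mod m (k-1)
    have h4 : m % (k-1) < k-1 := Nat.mod_lt _ hk1
    omega
  have euclid : ∀ w a1 a2 b1 b2 : ℕ, b1 < w → b2 < w → a1*w + b1 = a2*w + b2 →
      a1 = a2 ∧ b1 = b2 := by
    intro w a1 a2 b1 b2 h1 h2 he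
    have d1 : (a1*w + b1) / w = a1 := by
      rw [mul_comm, Nat.mul_add_div (by omega), Nat.div_eq_of_lt h1]
      omega
    have d2 : (a2*w + b2) / w = a2 := by
      rw [mul_comm, Nat.mul_add_div (by omega), Nat.div_eq_of_lt h2]
      omega
    have m1' : (a1*w + b1) % w = b1 := by
      rw [mul_comm, Nat.mul_add_mod, Nat.mod_eq_of_lt h1]
    have m2' : (a2*w + b2) % w = b2 := by
      rw [mul_comm, Nat.mul_add_mod, Nat.mod_eq_of_lt h2]
    constructor
    · rw [← d1, ← d2, he]
    · rw [← m1', ← m2', he]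
  set f : ℕ → Fin n := fun m =>
    if m % (k-1) = 0 then u (m/(k-1)) else b (js (m/(k-1))) (m % (k-1) - 1) with hfd
  refine ⟨γ, f, ?_, ?_⟩
  · -- injectivity
    intro m1 hm1 m2 hm2 he
    simp only [Set.mem_Iio] at hm1 hm2
    have hm1' : m1 ≤ (k-1)*ℓ := by omega
    have hm2' : m2 ≤ (k-1)*ℓ := by omega
    have hd1 := hdiv m1 hm1'
    have hd2 := hdiv m2 hm2'
    have hmod1 : m1 % (k-1) < k-1 := Nat.mod_lt _ hk1
    have hmod2 : m2 % (k-1) < k-1 := Nat.mod_lt _ hk1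
    have hdm1 := Nat.div_add_mod m1 (k-1)
    have hdm2 := Nat.div_add_mod m2 (k-1)
    replace he : (if m1 % (k-1) = 0 then u (m1/(k-1)) else b (js (m1/(k-1))) (m1 % (k-1) - 1))
        = (if m2 % (k-1) = 0 then u (m2/(k-1)) else b (js (m2/(k-1))) (m2 % (k-1) - 1)) := he
    by_cases q1 : m1 % (k-1) = 0 <;> by_cases q2 : m2 % (k-1) = 0
    · rw [if_pos q1, if_pos q2] at he
      have hdd := huinj (Set.mem_Iio.mpr (by omega)) (Set.mem_Iio.mpr (by omega)) he
      rw [← hdm1, ← hdm2, hdd, q1, q2]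
    · exfalso
      rw [if_pos q1, if_neg q2] at he
      have hl2 : m2/(k-1) < ℓ := hstrict m2 hm2' q2
      have hb2 := hbval (js (m2/(k-1))) (m2 % (k-1) - 1) (hjT _ hl2) (by omega)
      have hup := huP (m1/(k-1)) hd1
      rw [he] at hup
      have hv2 : (b (js (m2/(k-1))) (m2 % (k-1) - 1)).val < P := by
        rw [hb2.1]; exact hb2.2
      exact Nat.lt_irrefl P (Nat.lt_of_le_of_lt hup.1 hv2)
    · exfalso
      rw [if_neg q1, if_pos q2] at he
      have hl1 : m1/(k-1) < ℓ := hstrict m1 hm1' q1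
      have hb1 := hbval (js (m1/(k-1))) (m1 % (k-1) - 1) (hjT _ hl1) (by omega)
      have hup := huP (m2/(k-1)) hd2
      rw [← he] at hup
      have hv1 : (b (js (m1/(k-1))) (m1 % (k-1) - 1)).val < P := by
        rw [hb1.1]; exact hb1.2
      exact Nat.lt_irrefl P (Nat.lt_of_le_of_lt hup.1 hv1)
    · rw [if_neg q1, if_neg q2] at he
      have hl1 : m1/(k-1) < ℓ := hstrict m1 hm1' q1
      have hl2 : m2/(k-1) < ℓ := hstrict m2 hm2' q2
      have hb1 := hbval (js (m1/(k-1))) (m1 % (k-1) - 1) (hjT _ hl1) (by omega)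
      have hb2 := hbval (js (m2/(k-1))) (m2 % (k-1) - 1) (hjT _ hl2) (by omega)
      have hv : js (m1/(k-1)) * (k-2) + (m1 % (k-1) - 1)
          = js (m2/(k-1)) * (k-2) + (m2 % (k-1) - 1) := by
        rw [← hb1.1, ← hb2.1, he]
      obtain ⟨e1, e2⟩ := euclid (k-2) _ _ _ _ (by omega) (by omega) hv
      have hdd := hjinj (Set.mem_Iio.mpr hl1) (Set.mem_Iio.mpr hl2) e1
      have hqq : m1 % (k-1) = m2 % (k-1) := by omega
      rw [← hdm1, ← hdm2, hdd, hqq]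
  · -- edges
    intro i hi
    set a := i*(k-1) with had
    have hmod0 : a % (k-1) = 0 := Nat.mul_mod_left i (k-1)
    have hdiv0 : a / (k-1) = i := by rw [had, mul_comm, Nat.mul_div_cancel_left _ hk1]
    have hfa : f a = u i := by
      show (if a % (k-1) = 0 then u (a/(k-1)) else b (js (a/(k-1))) (a % (k-1) - 1)) = u i
      rw [if_pos hmod0, hdiv0]
    have hfe : f (a + (k-1)) = u (i+1) := by
      have e : a + (k-1) = (i+1)*(k-1) := by rw [had]; ring
      rw [e]
      show (if ((i+1)*(k-1)) % (k-1) = 0 then u (((i+1)*(k-1))/(k-1))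
        else b (js (((i+1)*(k-1))/(k-1))) (((i+1)*(k-1)) % (k-1) - 1)) = u (i+1)
      rw [if_pos (Nat.mul_mod_left _ _)]
      rw [mul_comm, Nat.mul_div_cancel_left _ hk1]
    have hfq : ∀ q, 1 ≤ q → q ≤ k-2 → f (a + q) = b (js i) (q - 1) := by
      intro q h1 h2
      have hmq : (a + q) % (k-1) = q := by
        rw [had, mul_comm, Nat.mul_add_mod, Nat.mod_eq_of_lt (by omega)]
      have hdq : (a + q) / (k-1) = i := by
        rw [had, mul_comm, Nat.mul_add_div hk1, Nat.div_eq_of_lt (by omega)]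
        omega
      show (if (a+q) % (k-1) = 0 then u ((a+q)/(k-1))
        else b (js ((a+q)/(k-1))) ((a+q) % (k-1) - 1)) = b (js i) (q - 1)
      rw [hmq, hdq, if_neg (by omega)]
    have himg : (Finset.Ico a (a+k)).image f = LPaux.Ed k b (u i) (u (i+1)) (js i) := by
      ext v
      simp only [Finset.mem_image, Finset.mem_Ico, LPaux.Ed, LPaux.blk, Finset.mem_insert,
        Finset.mem_range]
      constructor
      · rintro ⟨m, hm, rfl⟩
        obtain ⟨q, rfl⟩ : ∃ q, m = a + q := ⟨m - a, by omega⟩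
        by_cases hq0 : q = 0
        · subst hq0; left; exact hfa
        · by_cases hqk : q = k-1
          · subst hqk; right; left; exact hfe
          · right; right
            refine ⟨q - 1, by omega, ?_⟩
            rw [hfq q (by omega) (by omega)]
      · rintro (rfl | rfl | ⟨t, ht, rfl⟩)
        · exact ⟨a, by omega, hfa⟩
        · exact ⟨a + (k-1), by omega, hfe⟩
        · refine ⟨a + (t+1), by omega, ?_⟩
          rw [hfq (t+1) (by omega) (by omega)]
          simp
    rw [himg]
    exact hedge i hi
end

section
/- For all integers k ≥ 2 and ℓ ≥ 3, and every integer n ≥ (2k−2)ℓ + k, every coloring of the k-element subsets of an n-element set with 2 colors yields a monochromatic copy of the k-uniform loose path P_ℓ^(k) of length ℓ. -/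
-- enumeration helper
lemma exists_enum {α : Type} [DecidableEq α] [Nonempty α] (S : Finset α) :
    ∃ g : ℕ → α, Set.InjOn g (Set.Iio S.card) ∧ (∀ i < S.card, g i ∈ S) ∧
      Finset.image g (Finset.range S.card) = S := by
  classical
  refine ⟨fun i => if h : i < S.card then (S.equivFin.symm ⟨i, h⟩ : α) else Classical.arbitrary α,
    ?_, ?_, ?_⟩
  · intro i hi j hj hij
    simp only [Set.mem_Iio] at hi hj
    simp only [dif_pos hi, dif_pos hj] at hij
    have := S.equivFin.symm.injective (Subtype.coe_injective hij)
    simpa using congrArg Fin.val this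
  · intro i hi
    simp only [dif_pos hi]
    exact (S.equivFin.symm ⟨i, hi⟩).2
  · apply Finset.Subset.antisymm
    · intro x hx
      simp only [Finset.mem_image, Finset.mem_range] at hx
      obtain ⟨i, hi, rfl⟩ := hx
      simp only [dif_pos hi]
      exact (S.equivFin.symm ⟨i, hi⟩).2
    · intro x hx
      refine Finset.mem_image.mpr ⟨(S.equivFin ⟨x, hx⟩ : Fin S.card), ?_, ?_⟩
      · simp
      · rw [dif_pos (S.equivFin ⟨x, hx⟩).2]
        simp

-- swap image helper
lemma image_swap_self {s : Finset ℕ} {p b : ℕ} (hp : p ∈ s) (hb : b ∈ s) :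
    s.image (Equiv.swap p b) = s := by
  ext x
  simp only [Finset.mem_image]
  constructor
  · rintro ⟨y, hy, rfl⟩
    rcases eq_or_ne y p with rfl | h1
    · rwa [Equiv.swap_apply_left]
    rcases eq_or_ne y b with rfl | h2
    · rwa [Equiv.swap_apply_right]
    · rwa [Equiv.swap_apply_of_ne_of_ne h1 h2]
  · intro hx
    refine ⟨Equiv.swap p b x, ?_, Equiv.swap_apply_self _ _ _⟩
    rcases eq_or_ne x p with rfl | h1
    · rwa [Equiv.swap_apply_left]
    rcases eq_or_ne x b with rfl | h2
    · rwa [Equiv.swap_apply_right]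
    · rwa [Equiv.swap_apply_of_ne_of_ne h1 h2]

lemma blue_construct {n d ℓ : ℕ} (χ : Finset (Fin n) → Fin 2) (hl : 1 ≤ ℓ)
    (T U : Finset (Fin n)) (hTU : Disjoint T U)
    (hT : (ℓ+1)/2 ≤ T.card)
    (hU : (ℓ/2) * (2*d+1) + (d+1) ≤ U.card)
    (cert : ∀ t ∈ T, ∀ S : Finset (Fin n), S ⊆ U → S.card = d + 1 → χ (insert t S) = 1) :
    ∃ f : ℕ → Fin n, Set.InjOn f (Set.Iio ((d+1)*ℓ+1)) ∧
      ∀ i < ℓ, χ ((Finset.Ico (i*(d+1)) (i*(d+1)+(d+2))).image f) = 1 := by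
  classical
  set q := d + 1 with hqdef
  have hq0 : 0 < q := Nat.succ_pos d
  set X := 2*d+1 with hXdef
  have hX0 : 0 < X := by omega
  -- nonempty
  have hT0 : 0 < T.card := lt_of_lt_of_le (by omega) hT
  obtain ⟨t0, ht0⟩ := Finset.card_pos.mp hT0
  have : Nonempty (Fin n) := ⟨t0⟩
  obtain ⟨t, tinj, tmem, -⟩ := exists_enum T
  obtain ⟨u, uinj, umem, -⟩ := exists_enum U
  -- position function
  set ψ : ℕ → ℕ := fun m => (m/q/2)*X + (if (m/q) % 2 = 0 then m % q else d + m % q) with hψdef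
  set f : ℕ → Fin n := fun m =>
    if (m % q = 0 ∧ (m/q) % 2 = 1) then t (m/q/2) else u (ψ m) with hfdef
  -- basic facts
  have tval : ∀ j, j % 2 = 1 → f (j*q) = t (j/2) := by
    intro j hj
    have h1 : j*q % q = 0 := Nat.mul_mod_left j q
    have h2 : j*q / q = j := Nat.mul_div_cancel j hq0
    simp only [hfdef, h1, h2, hj, and_self, if_pos, if_true]
  have uval : ∀ m, ¬(m % q = 0 ∧ (m/q) % 2 = 1) → f m = u (ψ m) := by
    intro m hm
    simp only [hfdef, if_neg hm]
  have tidx : ∀ m, m ≤ q*ℓ → m % q = 0 → (m/q) % 2 = 1 → m/q/2 < (ℓ+1)/2 := by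
    intro m hm h0 h1
    have hj : m / q ≤ ℓ := by
      have := Nat.div_le_div_right (c := q) hm
      rwa [Nat.mul_div_cancel_left ℓ hq0] at this
    omega
  have uidx : ∀ m, m ≤ q*ℓ → ¬(m % q = 0 ∧ (m/q) % 2 = 1) → ψ m < (ℓ/2)*X + q := by
    intro m hm hnt
    have hr : m % q < q := Nat.mod_lt m hq0
    have hj : m / q ≤ ℓ := by
      have := Nat.div_le_div_right (c := q) hm
      rwa [Nat.mul_div_cancel_left ℓ hq0] at this
    have hdecomp : m % q + q * (m / q) = m := Nat.mod_add_div m q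
    rcases Nat.even_or_odd (m / q) with he | ho
    · have he2 : (m/q) % 2 = 0 := Nat.even_iff.mp he
      have h1 : m/q/2 ≤ ℓ/2 := Nat.div_le_div_right hj
      have h2 : (m/q/2)*X ≤ (ℓ/2)*X := Nat.mul_le_mul_right X h1
      have hev : ψ m = m/q/2*X + m % q := by
        show m/q/2*X + (if (m/q) % 2 = 0 then m % q else d + m % q) = _
        rw [if_pos he2]
      omega
    · have ho2 : (m/q) % 2 = 1 := Nat.odd_iff.mp ho
      have hr1 : 1 ≤ m % q := by
        rcases Nat.eq_zero_or_pos (m % q) with h | h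
        · exact absurd ⟨h, ho2⟩ hnt
        · exact h
      -- j < ℓ
      have hjlt : m / q < ℓ := by
        rcases Nat.lt_or_ge (m/q) ℓ with h | h
        · exact h
        · exfalso
          have : m / q = ℓ := le_antisymm hj h
          have : m = m % q + q * ℓ := by rw [← this]; omega
          omega
      have h1 : m/q/2 + 1 ≤ ℓ/2 := by omega
      have h2 : (m/q/2 + 1)*X ≤ (ℓ/2)*X := Nat.mul_le_mul_right X h1
      have h3 : (m/q/2 + 1)*X = (m/q/2)*X + X := by ring
      have hev : ψ m = m/q/2*X + (d + m % q) := by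
        show m/q/2*X + (if (m/q) % 2 = 0 then m % q else d + m % q) = _
        rw [if_neg (by omega)]
      omega
  -- injectivity
  have finj : Set.InjOn f (Set.Iio (q*ℓ+1)) := by
    intro m1 hm1 m2 hm2 heq
    simp only [Set.mem_Iio] at hm1 hm2
    have hm1' : m1 ≤ q*ℓ := by omega
    have hm2' : m2 ≤ q*ℓ := by omega
    have hd1 : m1 % q + q * (m1 / q) = m1 := Nat.mod_add_div m1 q
    have hd2 : m2 % q + q * (m2 / q) = m2 := Nat.mod_add_div m2 q
    by_cases h1 : m1 % q = 0 ∧ (m1/q) % 2 = 1 <;>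
      by_cases h2 : m2 % q = 0 ∧ (m2/q) % 2 = 1
    · -- both t positions
      rw [hfdef] at heq
      simp only [if_pos h1, if_pos h2] at heq
      have i1 : m1/q/2 < (ℓ+1)/2 := tidx m1 hm1' h1.1 h1.2
      have i2 : m2/q/2 < (ℓ+1)/2 := tidx m2 hm2' h2.1 h2.2
      have hjj : m1/q/2 = m2/q/2 := tinj (Set.mem_Iio.mpr (lt_of_lt_of_le i1 hT)) (Set.mem_Iio.mpr (lt_of_lt_of_le i2 hT)) heq
      have hj2 : m1/q = m2/q := by omega
      have : q * (m1/q) = q * (m2/q) := by rw [hj2]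
      omega
    · -- t vs u : contradiction via disjointness
      rw [hfdef] at heq
      simp only [if_pos h1, if_neg h2] at heq
      exfalso
      have hmt : t (m1/q/2) ∈ T := tmem _ (lt_of_lt_of_le (tidx m1 hm1' h1.1 h1.2) hT)
      have hmu : u (ψ m2) ∈ U := umem _ (lt_of_lt_of_le (uidx m2 hm2' h2) hU)
      rw [heq] at hmt
      exact Finset.disjoint_left.mp hTU hmt hmu
    · rw [hfdef] at heq
      simp only [if_neg h1, if_pos h2] at heq
      exfalso
      have hmt : t (m2/q/2) ∈ T := tmem _ (lt_of_lt_of_le (tidx m2 hm2' h2.1 h2.2) hT)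
      have hmu : u (ψ m1) ∈ U := umem _ (lt_of_lt_of_le (uidx m1 hm1' h1) hU)
      rw [← heq] at hmt
      exact Finset.disjoint_left.mp hTU hmt hmu
    · -- both u positions
      rw [hfdef] at heq
      simp only [if_neg h1, if_neg h2] at heq
      have hps : ψ m1 = ψ m2 :=
        uinj (Set.mem_Iio.mpr (lt_of_lt_of_le (uidx m1 hm1' h1) hU))
          (Set.mem_Iio.mpr (lt_of_lt_of_le (uidx m2 hm2' h2) hU)) heq
      -- decompose ψ
      have hr1 : m1 % q < q := Nat.mod_lt m1 hq0
      have hr2 : m2 % q < q := Nat.mod_lt m2 hq0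
      set o1 := (if (m1/q) % 2 = 0 then m1 % q else d + m1 % q) with ho1def
      set o2 := (if (m2/q) % 2 = 0 then m2 % q else d + m2 % q) with ho2def
      have hψ1 : ψ m1 = (m1/q/2)*X + o1 := rfl
      have hψ2 : ψ m2 = (m2/q/2)*X + o2 := rfl
      have hbo1 : o1 < X := by
        rw [ho1def]; split
        · omega
        · have : 1 ≤ m1 % q := by
            rcases Nat.eq_zero_or_pos (m1 % q) with h | h
            · exact absurd ⟨h, by omega⟩ h1
            · exact h
          omega
      have hbo2 : o2 < X := by
        rw [ho2def]; split
        · omega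
        · have : 1 ≤ m2 % q := by
            rcases Nat.eq_zero_or_pos (m2 % q) with h | h
            · exact absurd ⟨h, by omega⟩ h2
            · exact h
          omega
      have hAB : m1/q/2 = m2/q/2 := by
        have e1 : (o1 + (m1/q/2)*X) / X = m1/q/2 := by
          rw [Nat.add_mul_div_right _ _ hX0, Nat.div_eq_of_lt hbo1]; omega
        have e2 : (o2 + (m2/q/2)*X) / X = m2/q/2 := by
          rw [Nat.add_mul_div_right _ _ hX0, Nat.div_eq_of_lt hbo2]; omega
        have : o1 + (m1/q/2)*X = o2 + (m2/q/2)*X := by omega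
        rw [← e1, ← e2, this]
      have hoo : o1 = o2 := by
        rw [hψ1, hψ2, hAB] at hps
        omega
      -- now case on parities
      rcases Nat.even_or_odd (m1/q) with p1 | p1 <;> rcases Nat.even_or_odd (m2/q) with p2 | p2
      · have q1 : (m1/q) % 2 = 0 := Nat.even_iff.mp p1
        have q2 : (m2/q) % 2 = 0 := Nat.even_iff.mp p2
        rw [ho1def, if_pos q1] at hoo
        rw [ho2def, if_pos q2] at hoo
        have hj2 : m1 / q = m2 / q := by omega
        have : q * (m1/q) = q * (m2/q) := by rw [hj2]
        omega
      · have q1 : (m1/q) % 2 = 0 := Nat.even_iff.mp p1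
        have q2 : (m2/q) % 2 = 1 := Nat.odd_iff.mp p2
        have hrr : 1 ≤ m2 % q := by
          rcases Nat.eq_zero_or_pos (m2 % q) with h | h
          · exact absurd ⟨h, q2⟩ h2
          · exact h
        rw [ho1def, if_pos q1] at hoo
        rw [ho2def, if_neg (by omega)] at hoo
        omega
      · have q1 : (m1/q) % 2 = 1 := Nat.odd_iff.mp p1
        have q2 : (m2/q) % 2 = 0 := Nat.even_iff.mp p2
        have hrr : 1 ≤ m1 % q := by
          rcases Nat.eq_zero_or_pos (m1 % q) with h | h
          · exact absurd ⟨h, q1⟩ h1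
          · exact h
        rw [ho1def, if_neg (by omega)] at hoo
        rw [ho2def, if_pos q2] at hoo
        omega
      · have q1 : (m1/q) % 2 = 1 := Nat.odd_iff.mp p1
        have q2 : (m2/q) % 2 = 1 := Nat.odd_iff.mp p2
        rw [ho1def, if_neg (by omega)] at hoo
        rw [ho2def, if_neg (by omega)] at hoo
        have hj2 : m1 / q = m2 / q := by omega
        have : q * (m1/q) = q * (m2/q) := by rw [hj2]
        omega
  refine ⟨f, finj, ?_⟩
  -- edges
  intro i hi
  set jodd := if i % 2 = 1 then i else i + 1 with hjodddef
  have hjo : jodd % 2 = 1 := by rw [hjodddef]; split <;> omega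
  have hjole : i ≤ jodd ∧ jodd ≤ i + 1 := by rw [hjodddef]; split <;> omega
  have hrw : i*q+(d+2) = i*q+(q+1) := by omega
  rw [hrw]
  set E := Finset.Ico (i*q) (i*q+(q+1)) with hEdef
  have hmem : jodd * q ∈ E := by
    rw [hEdef, Finset.mem_Ico]
    constructor
    · exact Nat.mul_le_mul_right q hjole.1
    · have h1 : jodd * q ≤ (i+1) * q := Nat.mul_le_mul_right q hjole.2
      have h2 : (i+1) * q = i*q + q := by ring
      omega
  have himg : E.image f = insert (f (jodd*q)) ((E.erase (jodd*q)).image f) := by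
    conv_lhs => rw [(Finset.insert_erase hmem).symm]
    rw [Finset.image_insert]
  have hfjodd : f (jodd*q) = t (jodd/2) := tval jodd hjo
  have hupos : ∀ m ∈ E.erase (jodd*q), ¬(m % q = 0 ∧ (m/q) % 2 = 1) := by
    intro m hm
    obtain ⟨hne, hmE⟩ := Finset.mem_erase.mp hm
    rw [hEdef, Finset.mem_Ico] at hmE
    rintro ⟨hz, hodd⟩
    have hdm : q * (m / q) = m := by
      have := Nat.mod_add_div m q
      omega
    have hlow : i ≤ m / q := by
      by_contra hcon
      push_neg at hcon
      have h1 : q * (m/q) + q ≤ q * i := by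
        have h2 : m/q + 1 ≤ i := hcon
        calc q * (m/q) + q = q * (m/q + 1) := by ring
        _ ≤ q * i := Nat.mul_le_mul_left q h2
      have h3 : i * q = q * i := Nat.mul_comm i q
      omega
    have hhigh : m / q ≤ i + 1 := by
      by_contra hcon
      push_neg at hcon
      have h1 : q * (i + 2) ≤ q * (m / q) := Nat.mul_le_mul_left q hcon
      have h2 : q * (i+2) = i*q + q + q := by ring
      omega
    have hjeq : m / q = jodd := by rw [hjodddef]; split <;> omega
    exact hne (by rw [← hdm, hjeq, Nat.mul_comm])
  have huval : ∀ m ∈ E.erase (jodd*q), f m = u (ψ m) := fun m hm => uval m (hupos m hm)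
  set S := (E.erase (jodd*q)).image f with hSdef
  have hEsub : ∀ m ∈ E, m < q*ℓ+1 := by
    intro m hm
    rw [hEdef, Finset.mem_Ico] at hm
    have h1 : (i+1) * q ≤ ℓ * q := Nat.mul_le_mul_right q hi
    have h2 : (i+1)*q = i*q+q := by ring
    have h3 : ℓ * q = q * ℓ := Nat.mul_comm ℓ q
    omega
  have hinj' : Set.InjOn f ↑(E.erase (jodd*q)) :=
    finj.mono (fun m hm => Set.mem_Iio.mpr (hEsub m (Finset.mem_of_mem_erase (Finset.mem_coe.mp hm))))
  have hScard : S.card = q := by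
    rw [hSdef, Finset.card_image_of_injOn hinj', Finset.card_erase_of_mem hmem, hEdef,
      Nat.card_Ico]
    omega
  have hSsubU : S ⊆ U := by
    intro x hx
    obtain ⟨m, hm, rfl⟩ := Finset.mem_image.mp hx
    rw [huval m hm]
    apply umem
    refine lt_of_lt_of_le (uidx m ?_ (hupos m hm)) hU
    have := hEsub m (Finset.mem_of_mem_erase hm)
    omega
  have hjoddidx : jodd/2 < (ℓ+1)/2 := by
    have h1 : jodd ≤ ℓ := by omega
    omega
  rw [himg, hfjodd]
  exact cert _ (tmem _ (lt_of_lt_of_le hjoddidx hT)) S hSsubU (by omega)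

lemma dfs {n d ℓ : ℕ} (χ : Finset (Fin n) → Fin 2) (hl : 3 ≤ ℓ)
    (hn : (2*d+2) * ℓ + (d+2) ≤ n) :
    ∀ m a (T : Finset (Fin n)) (f : ℕ → Fin n),
    a ≤ ℓ →
    T.card ≤ (ℓ+1)/2 + d →
    Set.InjOn f (Set.Iio ((d+1)*a+1)) →
    (∀ i < a, χ ((Finset.Ico (i*(d+1)) (i*(d+1)+(d+2))).image f) = 0) →
    Disjoint ((Finset.range ((d+1)*a+1)).image f) T →
    (∀ t ∈ T, ∀ S : Finset (Fin n),
        S ⊆ (((Finset.range ((d+1)*a+1)).image f) ∪ T)ᶜ → S.card = d+1 → χ (insert t S) = 1) →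
    2*n ≤ (d+1)*a + 2*T.card + m →
    (∃ c : Fin 2, ∃ g : ℕ → Fin n, Set.InjOn g (Set.Iio ((d+1)*ℓ+1)) ∧
      ∀ i < ℓ, χ ((Finset.Ico (i*(d+1)) (i*(d+1)+(d+2))).image g) = c) := by
  have fin2 : ∀ c : Fin 2, c ≠ 0 → c = 1 := by decide
  have hl2 : 2*ℓ ≤ (2*d+2)*ℓ := Nat.mul_le_mul_right ℓ (by omega)
  intro m
  induction m with
  | zero =>
    intro a T f ha hT _ _ _ _ hmeas
    exfalso
    have h1 : (d+1)*a ≤ (d+1)*ℓ := Nat.mul_le_mul_left (d+1) ha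
    have h2 : (d+1)*ℓ ≤ (2*d+2)*ℓ := Nat.mul_le_mul_right ℓ (by omega)
    omega
  | succ m ih =>
    intro a T f ha hTcap hfinj hedges hPT hcert hmeas
    by_cases haℓ : a = ℓ
    · subst haℓ
      exact ⟨0, f, hfinj, hedges⟩
    -- a < ℓ from here
    have haℓ' : a + 1 ≤ ℓ := by omega
    by_cases hTbig : (ℓ+1)/2 ≤ T.card
    · -- blue terminal case
      set P := (Finset.range ((d+1)*a+1)).image f with hPdef
      have hPcard : P.card ≤ (d+1)*a+1 := le_trans Finset.card_image_le (by simp)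
      have hPTcard : (P ∪ T).card ≤ P.card + T.card := Finset.card_union_le P T
      have hUcard : ((P ∪ T)ᶜ).card = n - (P ∪ T).card := by
        rw [Finset.card_compl, Fintype.card_fin]
      have harith : (ℓ/2) * (2*d+1) + (d+1) ≤ ((P ∪ T)ᶜ).card := by
        have e1 : (d+1)*(a+1) ≤ (d+1)*ℓ := Nat.mul_le_mul_left (d+1) haℓ'
        have e2 : (d+1)*(a+1) = (d+1)*a + (d+1) := by ring
        have e3 : ℓ/2 + (ℓ+1)/2 = ℓ := by omega
        have e4 : d * ℓ = d * (ℓ/2) + d * ((ℓ+1)/2) := by rw [← Nat.mul_add, e3]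
        have e5 : d * (ℓ/2) ≤ d * ((ℓ+1)/2) := Nat.mul_le_mul_left d (by omega)
        have e6 : (ℓ/2) * (2*d+1) = 2*(d*(ℓ/2)) + ℓ/2 := by ring
        have e7 : (d+1)*ℓ = d*ℓ + ℓ := by ring
        have e8 : (2*d+2)*ℓ = 2*(d*ℓ) + 2*ℓ := by ring
        omega
      have hTU : Disjoint T (P ∪ T)ᶜ :=
        disjoint_compl_right.mono_left Finset.subset_union_right
      obtain ⟨g, hg1, hg2⟩ := blue_construct χ (by omega) T ((P ∪ T)ᶜ) hTU hTbig harith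
        (fun t ht S hSsub hScard => hcert t ht S hSsub hScard)
      exact ⟨1, g, hg1, hg2⟩
    -- main branching
    push_neg at hTbig
    set P := (Finset.range ((d+1)*a+1)).image f with hPdef
    set U := (P ∪ T)ᶜ with hUdef
    have hPU : Disjoint P U :=
      disjoint_compl_right.mono_left Finset.subset_union_left
    have hTU : Disjoint T U :=
      disjoint_compl_right.mono_left Finset.subset_union_right
    have hnpos : 0 < n := by omega
    have : Nonempty (Fin n) := ⟨⟨0, hnpos⟩⟩
    by_cases hpush : ∃ p ∈ Finset.Ico ((d+1)*a+1-(d+1)) ((d+1)*a+1),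
        ∃ S ∈ Finset.powersetCard (d+1) U, χ (insert (f p) S) = 0
    · -- PUSH
      obtain ⟨p, hp, S, hS, hcol⟩ := hpush
      rw [Finset.mem_powersetCard] at hS
      obtain ⟨hSU, hScard⟩ := hS
      obtain ⟨g, ginj, gmem, gimg⟩ := exists_enum S
      rw [hScard] at ginj gmem gimg
      rw [Finset.mem_Ico] at hp
      have hpw : p ≤ (d+1)*a := by omega
      set w := (d+1)*a with hwdef
      set σ := Equiv.swap p w with hσdef
      set f' : ℕ → Fin n := fun m => if m < w+1 then f (σ m) else g (m - (w+1)) with hf'def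
      have hσw : σ w = p := Equiv.swap_apply_right p w
      have hσmem : ∀ m, m < w+1 → σ m < w+1 := by
        intro m hm
        rcases eq_or_ne m p with rfl | h1
        · rw [hσdef, Equiv.swap_apply_left]; omega
        rcases eq_or_ne m w with rfl | h2
        · rw [hσdef, Equiv.swap_apply_right]; omega
        · rw [hσdef, Equiv.swap_apply_of_ne_of_ne h1 h2]; exact hm
      have hfσ : ∀ m, m < w+1 → f' m = f (σ m) := by
        intro m hm; rw [hf'def]; simp only [if_pos hm]
      have hfg : ∀ m, w+1 ≤ m → f' m = g (m - (w+1)) := by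
        intro m hm; rw [hf'def]; simp only [if_neg (by omega : ¬ m < w+1)]
      have hwexp : (d+1)*(a+1) = w + (d+1) := by rw [hwdef]; ring
      have hmemP : ∀ m, m < w+1 → f (σ m) ∈ P := by
        intro m hm
        exact Finset.mem_image_of_mem f (Finset.mem_range.mpr (hσmem m hm))
      have hmemS : ∀ m, w+1 ≤ m → m < w+1+(d+1) → g (m - (w+1)) ∈ S := by
        intro m hm1 hm2
        exact gmem _ (by omega)
      -- injectivity of f'
      have hinj' : Set.InjOn f' (Set.Iio ((d+1)*(a+1)+1)) := by
        intro m1 hm1 m2 hm2 heq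
        simp only [Set.mem_Iio, hwexp] at hm1 hm2
        by_cases c1 : m1 < w+1 <;> by_cases c2 : m2 < w+1
        · rw [hfσ m1 c1, hfσ m2 c2] at heq
          have := hfinj (Set.mem_Iio.mpr (hσmem m1 c1)) (Set.mem_Iio.mpr (hσmem m2 c2)) heq
          exact σ.injective this
        · exfalso
          rw [hfσ m1 c1, hfg m2 (by omega)] at heq
          have h1 : f (σ m1) ∈ P := hmemP m1 c1
          have h2 : g (m2 - (w+1)) ∈ U := hSU (hmemS m2 (by omega) (by omega))
          rw [heq] at h1
          exact Finset.disjoint_left.mp hPU h1 h2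
        · exfalso
          rw [hfg m1 (by omega), hfσ m2 c2] at heq
          have h1 : f (σ m2) ∈ P := hmemP m2 c2
          have h2 : g (m1 - (w+1)) ∈ U := hSU (hmemS m1 (by omega) (by omega))
          rw [← heq] at h1
          exact Finset.disjoint_left.mp hPU h1 h2
        · rw [hfg m1 (by omega), hfg m2 (by omega)] at heq
          have := ginj (Set.mem_Iio.mpr (by omega : m1 - (w+1) < d+1))
            (Set.mem_Iio.mpr (by omega : m2 - (w+1) < d+1)) heq
          omega
      -- new P
      have hrangesplit : Finset.range ((d+1)*(a+1)+1) =
          Finset.range (w+1) ∪ Finset.Ico (w+1) (w+1+(d+1)) := by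
        ext x
        simp only [Finset.mem_range, Finset.mem_union, Finset.mem_Ico, hwexp]
        omega
      have himgtail : (Finset.Ico (w+1) (w+1+(d+1))).image f' = S := by
        rw [Finset.image_congr (g := fun m => g (m - (w+1)))
          (fun x hx => hfg x (Finset.mem_Ico.mp hx).1)]
        have : Finset.Ico (w+1) (w+1+(d+1)) = (Finset.range (d+1)).image (fun i => i + (w+1)) := by
          ext x
          simp only [Finset.mem_Ico, Finset.mem_image, Finset.mem_range]
          constructor
          · intro hx; exact ⟨x - (w+1), by omega, by omega⟩
          · rintro ⟨i, hi, rfl⟩; omega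
        rw [this, Finset.image_image, ← gimg]
        apply Finset.image_congr
        intro x _
        simp only [Function.comp_apply, Nat.add_sub_cancel]
      have himghead : (Finset.range (w+1)).image f' = P := by
        rw [Finset.image_congr (g := fun m => f (σ m))
          (fun x hx => hfσ x (Finset.mem_range.mp hx))]
        have h1 : (Finset.range (w+1)).image (fun m => f (σ m))
            = ((Finset.range (w+1)).image σ).image f := by
          rw [Finset.image_image]; rfl
        rw [h1, hσdef, image_swap_self (Finset.mem_range.mpr (by omega))
          (Finset.mem_range.mpr (by omega))]
      have hP' : (Finset.range ((d+1)*(a+1)+1)).image f' = P ∪ S := by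
        rw [hrangesplit, Finset.image_union, himghead, himgtail]
      have hedges' : ∀ i < a + 1, χ ((Finset.Ico (i*(d+1)) (i*(d+1)+(d+2))).image f') = 0 := by
        intro i hi
        rcases Nat.lt_or_ge i a with hia | hia
        · have hsub : ∀ x ∈ Finset.Ico (i*(d+1)) (i*(d+1)+(d+2)), x < w+1 := by
            intro x hx
            rw [Finset.mem_Ico] at hx
            have h1 : (i+1)*(d+1) ≤ a*(d+1) := Nat.mul_le_mul_right (d+1) hia
            have h2 : (i+1)*(d+1) = i*(d+1)+(d+1) := by ring
            have h3 : a*(d+1) = w := by rw [hwdef]; ring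
            omega
          rw [Finset.image_congr (g := fun m => f (σ m)) (fun x hx => hfσ x (hsub x hx))]
          have h1 : (Finset.Ico (i*(d+1)) (i*(d+1)+(d+2))).image (fun m => f (σ m))
              = ((Finset.Ico (i*(d+1)) (i*(d+1)+(d+2))).image σ).image f := by
            rw [Finset.image_image]; rfl
          have hpb : w + 1 ≤ p + (d+1) := by omega
          have himgσ : (Finset.Ico (i*(d+1)) (i*(d+1)+(d+2))).image σ
              = Finset.Ico (i*(d+1)) (i*(d+1)+(d+2)) := by
            rcases Nat.lt_or_ge (i+1) a with hia2 | hia2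
            · rw [hσdef]
              have hid : ∀ x ∈ Finset.Ico (i*(d+1)) (i*(d+1)+(d+2)),
                  Equiv.swap p w x = id x := by
                intro x hx
                rw [Finset.mem_Ico] at hx
                have h1 : (i+2)*(d+1) ≤ a*(d+1) := Nat.mul_le_mul_right (d+1) hia2
                have h2 : (i+2)*(d+1) = i*(d+1)+(d+1)+(d+1) := by ring
                have h3 : a*(d+1) = w := by rw [hwdef]; ring
                exact Equiv.swap_apply_of_ne_of_ne (by omega) (by omega)
              rw [Finset.image_congr hid, Finset.image_id]
            · have haeq : a = i + 1 := by omega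
              have h3 : a*(d+1) = w := by rw [hwdef]; ring
              have hwmem : w ∈ Finset.Ico (i*(d+1)) (i*(d+1)+(d+2)) := by
                rw [Finset.mem_Ico]
                have h2 : (i+1)*(d+1) = i*(d+1)+(d+1) := by ring
                rw [haeq] at h3
                omega
              have hpmem : p ∈ Finset.Ico (i*(d+1)) (i*(d+1)+(d+2)) := by
                rw [Finset.mem_Ico]
                rw [haeq] at h3
                have h2 : (i+1)*(d+1) = i*(d+1)+(d+1) := by ring
                rw [Finset.mem_Ico] at hwmem
                omega
              rw [hσdef]
              exact image_swap_self hpmem hwmem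
          rw [h1, himgσ]
          exact hedges i hia
        · have hia' : a = i := by omega
          subst hia'
          have h3 : a*(d+1) = w := by rw [hwdef]; ring
          have hsplit2 : Finset.Ico (a*(d+1)) (a*(d+1)+(d+2)) =
              insert w (Finset.Ico (w+1) (w+1+(d+1))) := by
            ext x
            simp only [Finset.mem_Ico, Finset.mem_insert]
            omega
          rw [hsplit2, Finset.image_insert, himgtail]
          have hfw : f' w = f p := by rw [hfσ w (by omega), hσw]
          rw [hfw]
          exact hcol
      apply ih (a+1) T f' haℓ' hTcap hinj' hedges' ?_ ?_ ?_
      · rw [hP', Finset.disjoint_union_left]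
        exact ⟨hPT, (hTU.symm.mono_left hSU)⟩
      · intro t ht S' hS'sub hS'card
        apply hcert t ht S' ?_ hS'card
        refine hS'sub.trans (Finset.compl_subset_compl.mpr ?_)
        rw [hP']
        exact Finset.union_subset_union Finset.subset_union_left (Finset.Subset.refl T)
      · have hrr : (d+1)*(a+1) = (d+1)*a + (d+1) := by ring
        omega
    · -- POP
      push_neg at hpush
      rcases Nat.eq_zero_or_pos a with rfl | hapos
      · -- a = 0 : move single start vertex to T, restart
        have hz : (d+1)*0 = 0 := by ring
        have hP0 : P = {f 0} := by
          rw [hPdef, hz]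
          simp
        have hf0P : f 0 ∈ P := by rw [hP0]; exact Finset.mem_singleton_self _
        have hU1 : 0 < U.card := by
          have hUc : U.card = n - (P ∪ T).card := by
            rw [hUdef, Finset.card_compl, Fintype.card_fin]
          have h2 : (P ∪ T).card ≤ P.card + T.card := Finset.card_union_le P T
          have h3 : P.card = 1 := by rw [hP0]; simp
          omega
        obtain ⟨u0, hu0⟩ := Finset.card_pos.mp hU1
        have hu0P : u0 ∉ P := fun h => Finset.disjoint_left.mp hPU h hu0
        have hu0T : u0 ∉ T := fun h => Finset.disjoint_left.mp hTU h hu0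
        have hf0T : f 0 ∉ T := fun h => Finset.disjoint_left.mp hPT hf0P h
        have hcompl : ((Finset.range ((d+1)*0+1)).image (fun _ => u0) ∪ insert (f 0) T)ᶜ ⊆ U := by
          rw [hUdef]
          apply Finset.compl_subset_compl.mpr
          intro x hx
          rw [Finset.mem_union] at hx
          rcases hx with hx | hx
          · rw [hP0, Finset.mem_singleton] at hx
            subst hx
            exact Finset.mem_union_right _ (Finset.mem_insert_self _ _)
          · exact Finset.mem_union_right _ (Finset.mem_insert_of_mem hx)
        apply ih 0 (insert (f 0) T) (fun _ => u0) (by omega) ?_ ?_ ?_ ?_ ?_ ?_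
        · have := Finset.card_insert_le (f 0) T
          omega
        · intro x hx y hy _
          rw [Set.mem_Iio, hz] at hx hy
          omega
        · intro i hi
          exact absurd hi (Nat.not_lt_zero i)
        · rw [hz]
          simp only [zero_add, Finset.range_one, Finset.image_singleton]
          rw [Finset.disjoint_singleton_left, Finset.mem_insert]
          rintro (h | h)
          · exact hu0P (h ▸ hf0P)
          · exact hu0T h
        · intro t ht S' hsub hcard
          rw [Finset.mem_insert] at ht
          rcases ht with rfl | ht
          · have h0mem : (0:ℕ) ∈ Finset.Ico ((d+1)*0+1-(d+1)) ((d+1)*0+1) := by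
              rw [Finset.mem_Ico]
              omega
            exact fin2 _ (hpush 0 h0mem S'
              (Finset.mem_powersetCard.mpr ⟨hsub.trans hcompl, hcard⟩))
          · exact hcert t ht S' (hsub.trans hcompl) hcard
        · have hci : (insert (f 0) T).card = T.card + 1 := Finset.card_insert_of_notMem hf0T
          omega
      · -- a = b + 1 : pop the last edge into T
        obtain ⟨b, rfl⟩ : ∃ b, a = b + 1 := ⟨a - 1, by omega⟩
        have hrr : (d+1)*(b+1) = (d+1)*b + (d+1) := by ring
        have hsplitr : Finset.range ((d+1)*(b+1)+1) =
            Finset.range ((d+1)*b+1) ∪ Finset.Ico ((d+1)*b+1) ((d+1)*(b+1)+1) := by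
          ext x
          simp only [Finset.mem_range, Finset.mem_union, Finset.mem_Ico]
          omega
        set C := (Finset.Ico ((d+1)*b+1) ((d+1)*(b+1)+1)).image f with hCdef
        set P' := (Finset.range ((d+1)*b+1)).image f with hP'def
        have hPsplit : P = P' ∪ C := by
          rw [hPdef, hsplitr, Finset.image_union]
        have hCsub : C ⊆ P := hPsplit ▸ Finset.subset_union_right
        have hP'sub : P' ⊆ P := hPsplit ▸ Finset.subset_union_left
        have hCcard : C.card = d+1 := by
          rw [hCdef, Finset.card_image_of_injOn, Nat.card_Ico]
          · omega
          · exact hfinj.mono (fun x hx => by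
              rw [Finset.mem_coe, Finset.mem_Ico] at hx
              exact Set.mem_Iio.mpr (by omega))
        have hDCT : Disjoint C T := hPT.mono_left hCsub
        have hDP'C : Disjoint P' C := by
          rw [Finset.disjoint_left]
          rintro x hx1 hx2
          obtain ⟨m1, hm1, rfl⟩ := Finset.mem_image.mp hx1
          obtain ⟨m2, hm2, heq2⟩ := Finset.mem_image.mp hx2
          rw [Finset.mem_range] at hm1
          rw [Finset.mem_Ico] at hm2
          have := hfinj (Set.mem_Iio.mpr (by omega : m2 < (d+1)*(b+1)+1))
            (Set.mem_Iio.mpr (by omega : m1 < (d+1)*(b+1)+1)) heq2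
          omega
        have hunion : P' ∪ (T ∪ C) = P ∪ T := by
          rw [hPsplit]
          ext x
          simp only [Finset.mem_union]
          tauto
        have hcompl2 : (P' ∪ (T ∪ C))ᶜ = U := by rw [hunion, hUdef]
        apply ih b (T ∪ C) f (by omega) ?_ ?_ ?_ ?_ ?_ ?_
        · have h1 : (T ∪ C).card ≤ T.card + C.card := Finset.card_union_le T C
          omega
        · exact hfinj.mono (fun x hx => Set.mem_Iio.mpr (by
            rw [Set.mem_Iio] at hx
            omega))
        · exact fun i hi => hedges i (by omega)
        · rw [Finset.disjoint_union_right]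
          exact ⟨hPT.mono_left hP'sub, hDP'C⟩
        · intro t ht S' hsub hcard
          rw [Finset.mem_union] at ht
          have hsub' : S' ⊆ U := by
            rw [← hcompl2]
            exact hsub
          rcases ht with ht | ht
          · apply hcert t ht S' ?_ hcard
            rw [hUdef] at hsub'
            exact hsub'
          · obtain ⟨pp, hpp, rfl⟩ := Finset.mem_image.mp ht
            have hppmem : pp ∈ Finset.Ico ((d+1)*(b+1)+1-(d+1)) ((d+1)*(b+1)+1) := by
              rw [Finset.mem_Ico] at hpp ⊢
              omega
            exact fin2 _ (hpush pp hppmem S'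
              (Finset.mem_powersetCard.mpr ⟨hsub', hcard⟩))
        · have h1 : (T ∪ C).card = T.card + (d+1) := by
            rw [Finset.card_union_of_disjoint hDCT.symm, hCcard]
          omega

theorem loosePath_dfs_bound_two_colors (k ℓ : ℕ) (hk : 2 ≤ k) (hl : 3 ≤ ℓ)
    (n : ℕ) (hn : (2 * k - 2) * ℓ + k ≤ n) (χ : Finset (Fin n) → Fin 2) :
    HasMonoLoosePath k ℓ χ := by
  obtain ⟨d, rfl⟩ : ∃ d, k = d + 2 := ⟨k - 2, by omega⟩
  have hn' : (2*d+2) * ℓ + (d+2) ≤ n := by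
    have h1 : 2*(d+2) - 2 = 2*d+2 := by omega
    rw [h1] at hn
    exact hn
  have h0n : 0 < n := by
    have h2 : 0 ≤ (2*d+2)*ℓ := Nat.zero_le _
    omega
  have hz : (d+1)*0 = 0 := by ring
  obtain ⟨c, g, hg1, hg2⟩ := dfs χ hl hn' (2*n) 0 (∅ : Finset (Fin n)) (fun _ => ⟨0, h0n⟩)
    (Nat.zero_le ℓ)
    (by simp)
    (by
      intro x hx y hy _
      rw [Set.mem_Iio, hz] at hx hy
      omega)
    (fun i hi => absurd hi (Nat.not_lt_zero i))
    (Finset.disjoint_empty_right _)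
    (fun t ht => absurd ht (Finset.notMem_empty t))
    (by simp [hz])
  unfold HasMonoLoosePath
  have he : d + 2 - 1 = d + 1 := rfl
  simp only [he]
  exact ⟨c, g, hg1, hg2⟩
end

section
/- For all integers k ≥ 3, ℓ ≥ 3, and 2 ≤ r ≤ k−1, and every integer n ≥ k(ℓ+1)r(1 + ln(1 + (r−1)/(k−r))), every coloring of the k-element subsets of an n-element set with r colors yields a monochromatic copy of the k-uniform loose path P_ℓ^(k) of length ℓ. -/
open Finset

namespace LPDFS

set_option linter.unusedSectionVars false
variable {α : Type} [DecidableEq α] [Nonempty α] {ι : Type}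

def StackGeom : List (Finset α) → Prop
  | [] => True
  | [_] => True
  | a :: b :: l => (a ∩ b).card = 1 ∧ (∀ u ∈ l, Disjoint a u) ∧ StackGeom (b :: l)

def stackU : List (Finset α × ι) → Finset α
  | [] => ∅
  | p :: l => p.1 ∪ stackU l

def belowOf : List (Finset α × ι) → Finset α
  | [] => ∅
  | q :: _ => q.1

noncomputable def conn (a b : Finset α) : α :=
  if h : (a ∩ b).Nonempty then h.choose else Classical.arbitrary α

theorem conn_mem {a b : Finset α} (h : (a ∩ b).Nonempty) : conn a b ∈ a ∩ b := by
  rw [conn, dif_pos h]; exact h.choose_spec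

theorem inter_eq_conn {a b : Finset α} (h : (a ∩ b).card = 1) : a ∩ b = {conn a b} := by
  obtain ⟨x, hx⟩ := Finset.card_eq_one.mp h
  have hne : (a ∩ b).Nonempty := by rw [hx]; exact ⟨x, Finset.mem_singleton_self x⟩
  have := conn_mem hne
  rw [hx] at this ⊢
  rw [Finset.mem_singleton] at this
  rw [this]

theorem mem_stackU {x : α} : ∀ {S : List (Finset α × ι)}, x ∈ stackU S ↔ ∃ p ∈ S, x ∈ p.1 := by
  intro S
  induction S with
  | nil => simp [stackU]
  | cons p l ih => simp [stackU, ih]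

theorem StackGeom.tail : ∀ {l : List (Finset α)} {a : Finset α}, StackGeom (a :: l) → StackGeom l := by
  intro l a h
  match l with
  | [] => trivial
  | b :: l' => exact h.2.2

theorem notin_stackU_of_geom {p : Finset α × ι} {rest : List (Finset α × ι)} {y : α}
    (hg : StackGeom ((p :: rest).map Prod.fst)) (hy : y ∈ p.1) (hyb : y ∉ belowOf rest) :
    y ∉ stackU rest := by
  intro hmem
  rw [mem_stackU] at hmem
  obtain ⟨q, hq, hyq⟩ := hmem
  cases rest with
  | nil => simp at hq
  | cons q' l' =>
    rcases List.mem_cons.mp hq with rfl | hq'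
    · exact hyb hyq
    · have hdis : Disjoint p.1 q.1 :=
        hg.2.1 q.1 (List.mem_map_of_mem (f := Prod.fst) hq')
      exact Finset.disjoint_left.mp hdis hy hyq

theorem stackU_card_le {d : ℕ} : ∀ {S : List (Finset α × ι)},
    StackGeom (S.map Prod.fst) → (∀ p ∈ S, p.1.card = d) →
    (stackU S).card ≤ S.length * (d - 1) + 1 := by
  intro S
  induction S with
  | nil => simp [stackU]
  | cons p l ih =>
    intro hg hc
    cases l with
    | nil =>
      have := hc p (by simp)
      simp only [stackU, Finset.union_empty, List.length_cons, List.length_nil]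
      omega
    | cons q l' =>
      have h1 : (p.1 ∩ q.1).card = 1 := hg.1
      have hrec := ih hg.tail (fun x hx => hc x (List.mem_cons_of_mem _ hx))
      have hsub : p.1 ∩ q.1 ⊆ stackU (q :: l') := by
        intro x hx
        rw [mem_stackU]
        exact ⟨q, by simp, (Finset.mem_inter.mp hx).2⟩
      calc (stackU (p :: q :: l')).card = (p.1 ∪ stackU (q :: l')).card := rfl
        _ ≤ (p.1 \ stackU (q :: l')).card + (stackU (q :: l')).card := by
            rw [← Finset.card_union_of_disjoint Finset.sdiff_disjoint,
              Finset.sdiff_union_self_eq_union]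
        _ ≤ (p.1 \ (p.1 ∩ q.1)).card + (stackU (q :: l')).card := by
            gcongr
        _ ≤ (d - 1) + ((q :: l').length * (d - 1) + 1) := by
            have hpc : p.1.card = d := hc p (by simp)
            have : (p.1 \ (p.1 ∩ q.1)).card = d - 1 := by
              rw [Finset.card_sdiff_of_subset Finset.inter_subset_left, h1, hpc]
            omega
        _ ≤ (p :: q :: l').length * (d - 1) + 1 := by
            simp only [List.length_cons]
            have : (l'.length + 1 + 1) * (d - 1) = (l'.length + 1) * (d - 1) + (d - 1) := by ring
            omega

noncomputable def lay (T : ι → Finset α) : α → List (Finset α × ι) → List α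
  | s, [] => [s]
  | s, [p] => s :: ((T p.2 ∪ p.1).erase s).toList
  | s, p :: q :: l =>
      (s :: (((T p.2 ∪ p.1).erase s).erase (conn p.1 q.1)).toList)
        ++ lay T (conn p.1 q.1) (q :: l)

theorem lay_cons (T : ι → Finset α) (s : α) (S : List (Finset α × ι)) :
    ∃ t, lay T s S = s :: t := by
  match S with
  | [] => exact ⟨[], rfl⟩
  | [p] => exact ⟨_, rfl⟩
  | p :: q :: l =>
    exact ⟨(((T p.2 ∪ p.1).erase s).erase (conn p.1 q.1)).toList
      ++ lay T (conn p.1 q.1) (q :: l), rfl⟩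

theorem lay_spec (k c d : ℕ) (hcd : c + d = k) (hd : 2 ≤ d)
    (A₀ : Finset α) (T : ι → Finset α)
    (hTc : ∀ i, (T i).card = c)
    (hTp : ∀ i i', i ≠ i' → Disjoint (T i) (T i'))
    (hTA : ∀ i, Disjoint (T i) A₀) :
    ∀ (l : List (Finset α × ι)) (p : Finset α × ι) (s : α),
    StackGeom ((p :: l).map Prod.fst) →
    (∀ q ∈ p :: l, q.1.card = d) →
    (∀ q ∈ p :: l, q.1 ⊆ A₀) →
    ((p :: l).map Prod.snd).Nodup →
    s ∈ p.1 → s ∉ stackU l →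
    (lay T s (p :: l)).length = (p :: l).length * (k - 1) + 1 ∧
    (lay T s (p :: l)).Nodup ∧
    (∀ x ∈ lay T s (p :: l), x = s ∨ ∃ q ∈ p :: l, x ∈ T q.2 ∪ q.1) ∧
    ∀ m (hm : m < (p :: l).length),
      (((lay T s (p :: l)).drop (m * (k - 1))).take k).toFinset
        = T ((p :: l).get ⟨m, hm⟩).2 ∪ ((p :: l).get ⟨m, hm⟩).1 := by
  intro l
  induction l with
  | nil =>
    intro p s hg hcard hsub hnd hsp _
    have hTd : Disjoint (T p.2) p.1 := (hTA p.2).mono_right (hsub p (by simp))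
    have hU : (T p.2 ∪ p.1).card = k := by
      rw [Finset.card_union_of_disjoint hTd, hTc, hcard p (by simp), hcd]
    have hsU : s ∈ T p.2 ∪ p.1 := Finset.mem_union_right _ hsp
    have hE : ((T p.2 ∪ p.1).erase s).card = k - 1 := by
      rw [Finset.card_erase_of_mem hsU, hU]
    refine ⟨?_, ?_, ?_, ?_⟩
    · simp only [lay, List.length_cons, Finset.length_toList, hE, List.length_nil]
      omega
    · refine List.nodup_cons.mpr ⟨?_, Finset.nodup_toList _⟩
      rw [Finset.mem_toList]
      exact Finset.notMem_erase s _
    · intro x hx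
      rcases List.mem_cons.mp hx with rfl | hx
      · exact Or.inl rfl
      · refine Or.inr ⟨p, by simp, ?_⟩
        rw [Finset.mem_toList] at hx
        exact Finset.mem_of_mem_erase hx
    · intro m hm
      simp only [List.length_cons, List.length_nil] at hm
      interval_cases m
      simp only [Nat.zero_mul, List.drop_zero]
      have hlen : (lay T s [p]).length = k := by
        simp [lay, Finset.length_toList, hE]; omega
      rw [List.take_of_length_le (le_of_eq hlen)]
      show (s :: ((T p.2 ∪ p.1).erase s).toList).toFinset = _
      rw [List.toFinset_cons, Finset.toList_toFinset, Finset.insert_erase hsU]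
      rfl
  | cons q l' ih =>
    intro p s hg hcard hsub hnd hsp hsl
    have hTd : Disjoint (T p.2) p.1 := (hTA p.2).mono_right (hsub p (by simp))
    have hU : (T p.2 ∪ p.1).card = k := by
      rw [Finset.card_union_of_disjoint hTd, hTc, hcard p (by simp), hcd]
    have hsU : s ∈ T p.2 ∪ p.1 := Finset.mem_union_right _ hsp
    have h1 : (p.1 ∩ q.1).card = 1 := hg.1
    have hcq : conn p.1 q.1 ∈ p.1 ∩ q.1 := conn_mem (Finset.card_pos.mp (by omega))
    set cq := conn p.1 q.1 with hcqdef
    have hcqp : cq ∈ p.1 := (Finset.mem_inter.mp hcq).1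
    have hcqq : cq ∈ q.1 := (Finset.mem_inter.mp hcq).2
    have hscq : s ≠ cq := by
      intro h
      exact hsl (by rw [mem_stackU]; exact ⟨q, by simp, h ▸ hcqq⟩)
    have hcqU : cq ∈ (T p.2 ∪ p.1).erase s :=
      Finset.mem_erase.mpr ⟨Ne.symm hscq, Finset.mem_union_right _ hcqp⟩
    set E2 := ((T p.2 ∪ p.1).erase s).erase cq with hE2def
    have hE2 : E2.card = k - 2 := by
      rw [hE2def, Finset.card_erase_of_mem hcqU, Finset.card_erase_of_mem hsU, hU]
      omega
    -- p.1 disjoint from all edges in l'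
    have hpl' : ∀ u ∈ l'.map Prod.fst, Disjoint p.1 u := hg.2.1
    have hcql' : cq ∉ stackU l' := by
      intro hmem
      rw [mem_stackU] at hmem
      obtain ⟨u, hu, hcu⟩ := hmem
      exact Finset.disjoint_left.mp (hpl' u.1 (List.mem_map_of_mem hu)) hcqp hcu
    have IH := ih q cq hg.tail
      (fun x hx => hcard x (List.mem_cons_of_mem _ hx))
      (fun x hx => hsub x (List.mem_cons_of_mem _ hx))
      hnd.of_cons
      hcqq hcql'
    obtain ⟨IHlen, IHnd, IHmem, IHblock⟩ := IH
    have hlay : lay T s (p :: q :: l')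
        = (s :: E2.toList) ++ lay T cq (q :: l') := rfl
    -- facts for nodup
    have hsnotr : s ∉ lay T cq (q :: l') := by
      intro hx
      rcases IHmem s hx with h | ⟨q', hq', hq'm⟩
      · exact hscq h
      · rcases Finset.mem_union.mp hq'm with h | h
        · exact Finset.disjoint_left.mp (hTA q'.2) h (hsub p (by simp) hsp)
        · exact hsl (by rw [mem_stackU]; exact ⟨q', hq', h⟩)
    have hE2notr : ∀ x ∈ E2, x ∉ lay T cq (q :: l') := by
      intro x hxE hx
      have hxne : x ≠ cq := (Finset.mem_erase.mp hxE).1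
      have hxU : x ∈ T p.2 ∪ p.1 :=
        Finset.mem_of_mem_erase (Finset.mem_of_mem_erase hxE)
      rcases IHmem x hx with h | ⟨q', hq', hq'm⟩
      · exact hxne h
      · have hpq' : p.2 ≠ q'.2 := by
          have hnd' := hnd
          rw [List.map_cons] at hnd'
          exact List.rel_of_pairwise_cons hnd' (List.mem_map_of_mem (f := Prod.snd) hq')
        rcases Finset.mem_union.mp hxU with hxT | hxP
        · rcases Finset.mem_union.mp hq'm with h | h
          · exact Finset.disjoint_left.mp (hTp _ _ hpq') hxT h
          · exact Finset.disjoint_left.mp (hTA p.2) hxT (hsub q' (List.mem_cons_of_mem _ hq') h)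
        · rcases Finset.mem_union.mp hq'm with h | h
          · exact Finset.disjoint_left.mp (hTA q'.2) h (hsub p (by simp) hxP)
          · rcases List.mem_cons.mp hq' with rfl | hq'l
            · have : x ∈ p.1 ∩ q'.1 := Finset.mem_inter.mpr ⟨hxP, h⟩
              rw [inter_eq_conn h1] at this
              exact hxne (Finset.mem_singleton.mp this)
            · exact Finset.disjoint_left.mp
                (hpl' q'.1 (List.mem_map_of_mem hq'l)) hxP h
    refine ⟨?_, ?_, ?_, ?_⟩
    · rw [hlay]
      simp only [List.length_append, List.length_cons, Finset.length_toList, hE2, IHlen]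
      have : (l'.length + 1 + 1) * (k - 1) = (l'.length + 1) * (k - 1) + (k - 1) := by ring
      omega
    · rw [hlay, List.nodup_append]
      refine ⟨?_, IHnd, ?_⟩
      · refine List.nodup_cons.mpr ⟨?_, Finset.nodup_toList _⟩
        rw [Finset.mem_toList]
        exact fun h => (Finset.notMem_erase s _) (Finset.mem_of_mem_erase h)
      · intro x hx
        rcases List.mem_cons.mp hx with rfl | hx
        · exact fun b hb h => by subst h; exact hsnotr hb
        · exact fun b hb h => by subst h; exact hE2notr x (Finset.mem_toList.mp hx) hb
    · intro x hx
      rw [hlay, List.mem_append] at hx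
      rcases hx with hx | hx
      · rcases List.mem_cons.mp hx with rfl | hx
        · exact Or.inl rfl
        · refine Or.inr ⟨p, by simp, ?_⟩
          rw [Finset.mem_toList] at hx
          exact Finset.mem_of_mem_erase (Finset.mem_of_mem_erase hx)
      · rcases IHmem x hx with rfl | ⟨q', hq', h⟩
        · exact Or.inr ⟨q, by simp, Finset.mem_union_right _ hcqq⟩
        · exact Or.inr ⟨q', List.mem_cons_of_mem _ hq', h⟩
    · intro m hm
      have hleft : (s :: E2.toList).length = k - 1 := by
        simp only [List.length_cons, Finset.length_toList, hE2]
        omega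
      match m with
      | 0 =>
        simp only [Nat.zero_mul, List.drop_zero]
        rw [hlay]
        rw [List.take_append,
          List.take_of_length_le (by omega : (s :: E2.toList).length ≤ k), hleft]
        obtain ⟨t, ht⟩ := lay_cons T cq (q :: l')
        rw [ht]
        have hk1 : k - (k - 1) = 1 := by omega
        rw [hk1]
        have h1take : List.take 1 (cq :: t) = [cq] := rfl
        rw [h1take]
        have hstep1 : E2 ∪ {cq} = (T p.2 ∪ p.1).erase s := by
          rw [hE2def, Finset.union_comm]
          rw [show ({cq} : Finset α) ∪ ((T p.2 ∪ p.1).erase s).erase cq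
            = insert cq (((T p.2 ∪ p.1).erase s).erase cq) by ext z; simp [or_comm]]
          rw [Finset.insert_erase hcqU]
        show ((s :: (E2.toList ++ [cq]))).toFinset = _
        rw [List.toFinset_cons, List.toFinset_append, Finset.toList_toFinset]
        simp only [List.toFinset_cons, List.toFinset_nil, insert_empty_eq]
        rw [hstep1, Finset.insert_erase hsU]
        rfl
      | Nat.succ m' =>
        rw [hlay]
        have e : (m' + 1) * (k - 1) = (k - 1) + m' * (k - 1) := by ring
        rw [e, ← List.drop_drop, List.drop_left' hleft]
        exact IHblock m' (by simp only [List.length_cons] at hm ⊢; omega)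
theorem image_Ico_getD (l : List α) (x₀ : α) (a : ℕ) :
    ∀ (m : ℕ), a + m ≤ l.length →
    (Finset.Ico a (a + m)).image (fun i => l.getD i x₀) = ((l.drop a).take m).toFinset := by
  intro m
  induction m with
  | zero => simp
  | succ m ih =>
    intro h
    have h' : a + m ≤ l.length := by omega
    have hIco : Finset.Ico a (a + (m + 1)) = insert (a + m) (Finset.Ico a (a + m)) := by
      have : a + (m + 1) = (a + m) + 1 := by omega
      rw [this, Nat.Ico_succ_right_eq_insert_Ico (by omega)]
    rw [hIco, Finset.image_insert, ih h']
    have hm : m < (l.drop a).length := by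
      rw [List.length_drop]; omega
    rw [List.take_succ]
    have hsome : (l.drop a)[m]? = some (l.getD (a + m) x₀) := by
      rw [List.getElem?_drop]
      rw [List.getElem?_eq_getElem (by omega)]
      rw [List.getD_eq_getElem l x₀ (by omega)]
    rw [hsome]
    simp only [Option.toList_some, List.toFinset_append, List.toFinset_cons,
      List.toFinset_nil, insert_empty_eq]
    ext z
    simp only [Finset.mem_insert, Finset.mem_union, Finset.mem_singleton]
    tauto

theorem getD_injOn (l : List α) (x₀ : α) (h : l.Nodup) :
    Set.InjOn (fun i => l.getD i x₀) (Set.Iio l.length) := by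
  intro i hi j hj hij
  simp only [Set.mem_Iio] at hi hj
  simp only [List.getD_eq_getElem l x₀ hi, List.getD_eq_getElem l x₀ hj] at hij
  exact (List.Nodup.getElem_inj_iff h).mp hij

theorem win_extract {r : ℕ} (χ : Finset α → Fin r) (k ℓ c d : ℕ) (colc : Fin r)
    (A₀ : Finset α) (T : ι → Finset α)
    (hd : 2 ≤ d) (hcd : c + d = k) (hl : 1 ≤ ℓ)
    (hTc : ∀ i, (T i).card = c)
    (hTp : ∀ i i', i ≠ i' → Disjoint (T i) (T i'))
    (hTA : ∀ i, Disjoint (T i) A₀)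
    (S : List (Finset α × ι)) (hS : S.length = ℓ)
    (hgeom : StackGeom (S.map Prod.fst))
    (hcard : ∀ p ∈ S, p.1.card = d)
    (hsub : ∀ p ∈ S, p.1 ⊆ A₀)
    (hidxS : (S.map Prod.snd).Nodup)
    (hcol : ∀ p ∈ S, χ (T p.2 ∪ p.1) = colc) :
    HasMonoLoosePath k ℓ χ := by
  cases S with
  | nil => exact absurd hS (by simp; omega)
  | cons p rest =>
    -- choose the initial endpoint
    have hs0 : ∃ s₀, s₀ ∈ p.1 ∧ s₀ ∉ belowOf rest := by
      cases rest with
      | nil =>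
        obtain ⟨s₀, hs₀⟩ := Finset.card_pos.mp (by rw [hcard p (by simp)]; omega)
        exact ⟨s₀, hs₀, by simp [belowOf]⟩
      | cons q l' =>
        have h1 : (p.1 ∩ q.1).card = 1 := hgeom.1
        have : (p.1 \ q.1).Nonempty := by
          apply Finset.card_pos.mp
          have : p.1 \ q.1 = p.1 \ (p.1 ∩ q.1) := by
            ext z; simp only [Finset.mem_sdiff, Finset.mem_inter]; tauto
          rw [this, Finset.card_sdiff_of_subset Finset.inter_subset_left, h1, hcard p (by simp)]
          omega
        obtain ⟨s₀, hs₀⟩ := this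
        exact ⟨s₀, (Finset.mem_sdiff.mp hs₀).1, (Finset.mem_sdiff.mp hs₀).2⟩
    obtain ⟨s₀, hs₀p, hs₀b⟩ := hs0
    have hs₀st : s₀ ∉ stackU rest := notin_stackU_of_geom hgeom hs₀p hs₀b
    obtain ⟨Hlen, Hnd, Hmem, Hblock⟩ :=
      lay_spec k c d hcd hd A₀ T hTc hTp hTA rest p s₀ hgeom hcard hsub hidxS hs₀p hs₀st
    set L := lay T s₀ (p :: rest) with hLdef
    refine ⟨colc, fun i => L.getD i (Classical.arbitrary α), ?_, ?_⟩
    · have : (k - 1) * ℓ + 1 = L.length := by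
        rw [Hlen, hS]; ring
      rw [this]
      exact getD_injOn L _ Hnd
    · intro i hi
      have hbound : i * (k - 1) + k ≤ L.length := by
        rw [Hlen, hS]
        have h1 : i + 1 ≤ ℓ := hi
        have h2 : (i + 1) * (k - 1) ≤ ℓ * (k - 1) := Nat.mul_le_mul_right _ h1
        have h3 : (i + 1) * (k - 1) = i * (k - 1) + (k - 1) := by ring
        omega
      have him : (Finset.Ico (i * (k - 1)) (i * (k - 1) + k)).image
          (fun j => L.getD j (Classical.arbitrary α))
          = ((L.drop (i * (k - 1))).take k).toFinset :=
        image_Ico_getD L _ (i * (k - 1)) k hbound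
      rw [him]
      have hm : i < (p :: rest).length := by rw [hS]; exact hi
      rw [Hblock i hm]
      exact hcol _ (List.get_mem _ _)



def emY : List (ι × α) → Finset α := fun em => (em.map Prod.snd).toFinset

theorem mem_emY {em : List (ι × α)} {y : α} : y ∈ emY em ↔ ∃ q ∈ em, q.2 = y := by
  simp [emY]

theorem belowOf_subset_stackU (rest : List (Finset α × ι)) :
    belowOf rest ⊆ stackU rest := by
  cases rest with
  | nil => simp [belowOf]
  | cons q l => exact Finset.subset_union_left

theorem nodup_map_get_ne {β γ : Type*} (f : β → γ) {l : List β} (h : (l.map f).Nodup)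
    {a b : Fin l.length} (hab : a ≠ b) : f (l.get a) ≠ f (l.get b) := by
  intro he
  apply hab
  have ha : (a : ℕ) < (l.map f).length := by simp [a.isLt]
  have hb : (b : ℕ) < (l.map f).length := by simp [b.isLt]
  have e1 : (l.map f)[(a : ℕ)]'ha = f (l.get a) := by
    simp [List.getElem_map, List.get_eq_getElem]
  have e2 : (l.map f)[(b : ℕ)]'hb = f (l.get b) := by
    simp [List.getElem_map, List.get_eq_getElem]
  have : (l.map f)[(a : ℕ)]'ha = (l.map f)[(b : ℕ)]'hb := by rw [e1, e2, he]
  have := (List.Nodup.getElem_inj_iff h).mp this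
  exact Fin.ext this

def Cert {r : ℕ} (χ : Finset α → Fin r) (k : ℕ) (T A : Finset α) : Prop :=
  ∀ X ⊆ A, X.card = k - T.card → Disjoint X T → T.card ≤ ((χ (T ∪ X)) : ℕ)

structure Inv {r : ℕ} (χ : Finset α → Fin r) (ℓ d M : ℕ) {Q : ℕ} (colc : Fin r)
    (A₀ : Finset α) (T : Fin Q → Finset α)
    (A : Finset α) (S : List (Finset α × Fin Q)) (em : List (Fin Q × α)) : Prop where
  hAsub : A ⊆ A₀
  hlen : S.length ≤ ℓ
  hemlen : em.length ≤ M
  hcard : ∀ p ∈ S, p.1.card = d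
  hsub : ∀ p ∈ S, p.1 ⊆ A₀
  hdisA : ∀ p ∈ S, Disjoint p.1 A
  hgeom : StackGeom (S.map Prod.fst)
  hidxS : (S.map Prod.snd).Nodup
  hidxE : (em.map Prod.fst).Nodup
  hidxSE : ∀ p ∈ S, ∀ q ∈ em, p.2 ≠ q.1
  hcol : ∀ p ∈ S, χ (T p.2 ∪ p.1) = colc
  hy : ∀ q ∈ em, q.2 ∈ A₀ ∧ q.2 ∉ A
  hynd : (em.map Prod.snd).Nodup
  hemcert : ∀ q ∈ em, ∀ X ⊆ A, X.card = d - 1 → Disjoint X (T q.1 ∪ {q.2}) →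
      (colc : ℕ) + 1 ≤ ((χ ((T q.1 ∪ {q.2}) ∪ X)) : ℕ)
  hcount : A₀.card ≤ A.card + (stackU S \ emY em).card + em.length

def Ret {r : ℕ} (χ : Finset α → Fin r) (k ℓ d M : ℕ) (colc : Fin r)
    (A₀ : Finset α) : Prop :=
  ∃ (A' : Finset α) (T' : Fin M → Finset α), A' ⊆ A₀ ∧
    (∀ j, (T' j).card = (colc : ℕ) + 1) ∧
    (∀ j j', j ≠ j' → Disjoint (T' j) (T' j')) ∧
    (∀ j, Disjoint (T' j) A') ∧
    (∀ j, Cert χ k (T' j) A') ∧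
    A₀.card ≤ A'.card + ((ℓ - 1) * (d - 1) + 1 + M)

def meas (k ℓ : ℕ) (A : Finset α) (S : List (Finset α × ι)) (em : List (ι × α)) : ℕ :=
  A.card * ((ℓ + 1) * k + 2) + (stackU S \ emY em).card + S.length

section Level

variable {r : ℕ} (χ : Finset α → Fin r) (k ℓ d M Q : ℕ) (colc : Fin r)
  (A₀ : Finset α) (T : Fin Q → Finset α)

theorem level_run
    (hd : 2 ≤ d) (hcd : (colc : ℕ) + d = k) (hl : 3 ≤ ℓ) (hM : 1 ≤ M)
    (hQ : M + ℓ = Q + 1)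
    (hTc : ∀ i, (T i).card = (colc : ℕ))
    (hTp : ∀ i j, i ≠ j → Disjoint (T i) (T j))
    (hTA : ∀ i, Disjoint (T i) A₀)
    (hTcert : ∀ i, Cert χ k (T i) A₀)
    (hA₀ : ℓ * d + M ≤ A₀.card) :
    ∀ (fuel : ℕ) (A : Finset α) (S : List (Finset α × Fin Q)) (em : List (Fin Q × α)),
      Inv χ ℓ d M colc A₀ T A S em → meas k ℓ A S em ≤ fuel →
      HasMonoLoosePath k ℓ χ ∨ Ret χ k ℓ d M colc A₀ := by
  have hk : 2 ≤ k := by omega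
  intro fuel
  induction fuel with
  | zero =>
    intro A S em hinv hm
    exfalso
    -- A is nonempty, so meas ≥ 1 > 0
    have hpos : 1 ≤ A.card := by
      have h1 := hinv.hcount
      have h2 : (stackU S \ emY em).card ≤ ℓ * (d - 1) + 1 := by
        calc (stackU S \ emY em).card ≤ (stackU S).card :=
              Finset.card_le_card (Finset.sdiff_subset)
          _ ≤ S.length * (d - 1) + 1 := stackU_card_le hinv.hgeom hinv.hcard
          _ ≤ ℓ * (d - 1) + 1 := by
              have := Nat.mul_le_mul_right (d - 1) hinv.hlen
              omega
      have h3 : em.length ≤ M := hinv.hemlen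
      have h4 : ℓ * (d - 1) + ℓ = ℓ * d := by
        obtain ⟨D, rfl⟩ : ∃ D, d = D + 2 := ⟨d - 2, by omega⟩
        have : D + 2 - 1 = D + 1 := rfl
        rw [this]; ring
      omega
    have : 1 ≤ meas k ℓ A S em := by
      have : 1 ≤ A.card * ((ℓ + 1) * k + 2) :=
        Nat.one_le_iff_ne_zero.mpr (by positivity)
      unfold meas; omega
    omega
  | succ fuel ih =>
    intro A S em hinv hm
    have hK : d + 2 ≤ (ℓ + 1) * k + 2 := by
      have : k ≤ (ℓ + 1) * k := Nat.le_mul_of_pos_left k (by omega)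
      omega
    by_cases hwin : S.length = ℓ
    · -- WIN
      left
      exact win_extract χ k ℓ (colc : ℕ) d colc A₀ T hd hcd (by omega)
        hTc hTp hTA S hwin hinv.hgeom hinv.hcard hinv.hsub hinv.hidxS hinv.hcol
    by_cases hret : em.length = M
    · -- RETURN
      right
      have hlen1 : S.length ≤ ℓ - 1 := by
        have := hinv.hlen
        omega
      have hstack : (stackU S \ emY em).card ≤ (ℓ - 1) * (d - 1) + 1 := by
        calc (stackU S \ emY em).card ≤ (stackU S).card :=
              Finset.card_le_card Finset.sdiff_subset
          _ ≤ S.length * (d - 1) + 1 := stackU_card_le hinv.hgeom hinv.hcard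
          _ ≤ (ℓ - 1) * (d - 1) + 1 := by
              have := Nat.mul_le_mul_right (d - 1) hlen1
              omega
      have hget : ∀ j : Fin M, em.get (Fin.cast hret.symm j) ∈ em :=
        fun j => List.get_mem em _
      have hycard : ∀ q ∈ em, (T q.1 ∪ {q.2}).card = (colc : ℕ) + 1 := by
        intro q hq
        have hdisj : Disjoint (T q.1) {q.2} := by
          rw [Finset.disjoint_singleton_right]
          exact fun h => Finset.disjoint_left.mp (hTA q.1) h (hinv.hy q hq).1
        rw [Finset.card_union_of_disjoint hdisj, hTc, Finset.card_singleton]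
      refine ⟨A, fun j => T (em.get (Fin.cast hret.symm j)).1 ∪ {(em.get (Fin.cast hret.symm j)).2},
        hinv.hAsub, ?_, ?_, ?_, ?_, ?_⟩
      · intro j
        exact hycard _ (hget j)
      · intro j j' hjj'
        have hidx : Fin.cast hret.symm j ≠ Fin.cast hret.symm j' := by
          simp only [ne_eq, Fin.ext_iff, Fin.coe_cast]
          exact fun h => hjj' (Fin.ext h)
        have h1 : (em.get (Fin.cast hret.symm j)).1 ≠ (em.get (Fin.cast hret.symm j')).1 :=
          nodup_map_get_ne Prod.fst hinv.hidxE hidx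
        have h2 : (em.get (Fin.cast hret.symm j)).2 ≠ (em.get (Fin.cast hret.symm j')).2 :=
          nodup_map_get_ne Prod.snd hinv.hynd hidx
        rw [Finset.disjoint_union_left]
        constructor
        · rw [Finset.disjoint_union_right]
          refine ⟨hTp _ _ h1, ?_⟩
          rw [Finset.disjoint_singleton_right]
          exact fun h => Finset.disjoint_left.mp (hTA _) h (hinv.hy _ (hget j')).1
        · rw [Finset.disjoint_union_right]
          constructor
          · rw [Finset.disjoint_singleton_left]
            exact fun h => Finset.disjoint_left.mp (hTA _) h (hinv.hy _ (hget j)).1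
          · rw [Finset.disjoint_singleton_right, Finset.mem_singleton]
            exact h2.symm
      · intro j
        rw [Finset.disjoint_union_left]
        refine ⟨(hTA _).mono_right hinv.hAsub, ?_⟩
        rw [Finset.disjoint_singleton_left]
        exact (hinv.hy _ (hget j)).2
      · intro j
        intro X hXsub hXcard hXdis
        have hc1 := hycard _ (hget j)
        have hXcard' : X.card = d - 1 := by
          rw [hXcard, hc1]
          omega
        have := hinv.hemcert _ (hget j) X hXsub hXcard' hXdis
        rw [hc1]
        exact this
      · have h1 := hinv.hcount
        omega
    -- find a free tuple index
    have hfree : ∃ i₀ : Fin Q, (∀ p ∈ S, p.2 ≠ i₀) ∧ (∀ q ∈ em, q.1 ≠ i₀) := by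
      set F := (S.map Prod.snd).toFinset ∪ (em.map Prod.fst).toFinset with hF
      have hcards : F.card < Q := by
        calc F.card ≤ (S.map Prod.snd).toFinset.card + (em.map Prod.fst).toFinset.card :=
              Finset.card_union_le _ _
          _ ≤ S.length + em.length := by
              have h1 := (S.map Prod.snd).toFinset_card_le
              have h2 := (em.map Prod.fst).toFinset_card_le
              simp only [List.length_map] at h1 h2
              omega
          _ < Q := by
              have h3 := hinv.hlen
              have h4 := hinv.hemlen
              omega
      have hne : (Fᶜ : Finset (Fin Q)).Nonempty := by
        rw [← Finset.card_pos, Finset.card_compl]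
        simp only [Fintype.card_fin]
        omega
      obtain ⟨i₀, hi₀⟩ := hne
      rw [Finset.mem_compl, hF, Finset.mem_union, not_or] at hi₀
      refine ⟨i₀, ?_, ?_⟩
      · intro p hp h
        exact hi₀.1 (by rw [List.mem_toFinset]; exact h ▸ List.mem_map_of_mem (f := Prod.snd) hp)
      · intro q hq h
        exact hi₀.2 (by rw [List.mem_toFinset]; exact h ▸ List.mem_map_of_mem (f := Prod.fst) hq)
    obtain ⟨i₀, hi₀S, hi₀E⟩ := hfree
    -- A is nonempty
    have hApos : 1 ≤ A.card := by
      have h1 := hinv.hcount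
      have h2 : (stackU S \ emY em).card ≤ ℓ * (d - 1) + 1 := by
        calc (stackU S \ emY em).card ≤ (stackU S).card :=
              Finset.card_le_card (Finset.sdiff_subset)
          _ ≤ S.length * (d - 1) + 1 := stackU_card_le hinv.hgeom hinv.hcard
          _ ≤ ℓ * (d - 1) + 1 := by
              have := Nat.mul_le_mul_right (d - 1) hinv.hlen
              omega
      have h4 : ℓ * (d - 1) + ℓ = ℓ * d := by
        obtain ⟨D, rfl⟩ : ∃ D, d = D + 2 := ⟨d - 2, by omega⟩
        have : D + 2 - 1 = D + 1 := rfl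
        rw [this]; ring
      have h3 : em.length ≤ M := hinv.hemlen
      omega
    cases S with
    | nil =>
      by_cases hx : ∃ X ∈ A.powersetCard d, χ (T i₀ ∪ X) = colc
      · -- START new edge
        obtain ⟨X, hXmem, hXcol⟩ := hx
        obtain ⟨hXsub, hXcard⟩ := Finset.mem_powersetCard.mp hXmem
        have hXE : Disjoint X (emY em) := by
          rw [Finset.disjoint_left]
          intro w hw hwE
          obtain ⟨q, hq, hq2⟩ := mem_emY.mp hwE
          exact (hinv.hy q hq).2 (hq2 ▸ hXsub hw)
        have hsetU : stackU [(X, i₀)] \ emY em = X := by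
          simp only [stackU, Finset.union_empty]
          exact Finset.sdiff_eq_self_of_disjoint hXE
        have hdX : d ≤ A.card := hXcard ▸ Finset.card_le_card hXsub
        have hAX : (A \ X).card + d = A.card := by
          rw [Finset.card_sdiff_of_subset hXsub, hXcard]
          omega
        refine ih (A \ X) [(X, i₀)] em
          ⟨Finset.sdiff_subset.trans hinv.hAsub, by simp; omega, hinv.hemlen,
            by simpa using hXcard,
            by simpa using hXsub.trans hinv.hAsub,
            by simp [Finset.disjoint_sdiff],
            trivial,
            by simp,
            hinv.hidxE,
            by intro p' hp' q hq
               simp only [List.mem_singleton] at hp'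
               subst hp'
               exact Ne.symm (hi₀E q hq),
            by simpa using hXcol,
            ?_, hinv.hynd, ?_, ?_⟩ ?_
        · intro q hq
          exact ⟨(hinv.hy q hq).1, fun h => (hinv.hy q hq).2 (Finset.sdiff_subset h)⟩
        · intro q hq X' hX'sub hX'card hX'dis
          exact hinv.hemcert q hq X' (hX'sub.trans Finset.sdiff_subset) hX'card hX'dis
        · rw [hsetU, hXcard]
          have h1 := hinv.hcount
          simp only [stackU, List.length_cons] at h1 ⊢
          have h2 : ((∅ : Finset α) \ emY em).card = 0 := by simp
          omega
        · -- measure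
          have h3 : d + 2 ≤ d * ((ℓ + 1) * k + 2) := by
            have : 1 * ((ℓ + 1) * k + 2) ≤ d * ((ℓ + 1) * k + 2) :=
              Nat.mul_le_mul_right _ (by omega)
            omega
          have hmeas : meas k ℓ (A \ X) [(X, i₀)] em + 1 ≤ meas k ℓ A [] em := by
            unfold meas
            rw [hsetU, hXcard]
            have e1 : (A \ X).card * ((ℓ + 1) * k + 2) + d * ((ℓ + 1) * k + 2)
                = A.card * ((ℓ + 1) * k + 2) := by
              rw [← hAX]; ring
            have h2 : ((∅ : Finset α) \ emY em).card = 0 := by simp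
            simp only [stackU, List.length_cons, List.length_nil, h2]
            omega
          omega
      · -- PAD
        obtain ⟨z, hz⟩ := Finset.card_pos.mp hApos
        have hzA₀ : z ∈ A₀ := hinv.hAsub hz
        have hznewcert : ∀ X ⊆ A.erase z, X.card = d - 1 → Disjoint X (T i₀ ∪ {z}) →
            (colc : ℕ) + 1 ≤ ((χ ((T i₀ ∪ {z}) ∪ X)) : ℕ) := by
          intro X hXsub hXcard hXdis
          have hzX : z ∉ X := fun h => (Finset.notMem_erase z A) (hXsub h)
          have hXA : insert z X ⊆ A := by
            intro w hw
            rcases Finset.mem_insert.mp hw with rfl | hw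
            · exact hz
            · exact Finset.erase_subset _ _ (hXsub hw)
          have hunion : (T i₀ ∪ {z}) ∪ X = T i₀ ∪ insert z X := by
            rw [Finset.insert_eq, Finset.union_assoc]
          have hXcard' : (insert z X).card = k - (T i₀).card := by
            rw [Finset.card_insert_of_notMem hzX, hXcard, hTc]
            omega
          have hXdis' : Disjoint (insert z X) (T i₀) := by
            rw [Finset.disjoint_left]
            intro w hw hwT
            exact Finset.disjoint_left.mp (hTA i₀) hwT (hinv.hAsub (hXA hw))
          have h1 : (colc : ℕ) ≤ ((χ (T i₀ ∪ insert z X)) : ℕ) := by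
            have := hTcert i₀ (insert z X) (fun w hw => hinv.hAsub (hXA hw)) hXcard' hXdis'
            rw [hTc] at this
            exact this
          have h2 : χ (T i₀ ∪ insert z X) ≠ colc := by
            intro h
            refine hx ⟨insert z X, Finset.mem_powersetCard.mpr ⟨hXA, ?_⟩, h⟩
            rw [Finset.card_insert_of_notMem hzX, hXcard]
            omega
          have h3 : ((χ (T i₀ ∪ insert z X)) : ℕ) ≠ (colc : ℕ) :=
            fun h => h2 (Fin.ext h)
          rw [hunion]
          omega
        refine ih (A.erase z) [] ((i₀, z) :: em)
          ⟨(Finset.erase_subset _ _).trans hinv.hAsub, by simp,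
            by have := hinv.hemlen; simp only [List.length_cons]; omega,
            by simp, by simp, by simp, trivial, by simp, ?_, by simp, by simp,
            ?_, ?_, ?_, ?_⟩ ?_
        · refine List.nodup_cons.mpr ⟨?_, hinv.hidxE⟩
          simp only [List.mem_map]
          rintro ⟨q, hq, hq2⟩
          exact hi₀E q hq hq2
        · intro q hq
          rcases List.mem_cons.mp hq with rfl | hq
          · exact ⟨hzA₀, Finset.notMem_erase z A⟩
          · exact ⟨(hinv.hy q hq).1, fun h => (hinv.hy q hq).2 (Finset.erase_subset _ _ h)⟩
        · refine List.nodup_cons.mpr ⟨?_, hinv.hynd⟩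
          intro h
          simp only [List.mem_map] at h
          obtain ⟨q, hq, hq2⟩ := h
          exact (hinv.hy q hq).2 (hq2 ▸ hz)
        · intro q hq
          rcases List.mem_cons.mp hq with rfl | hq
          · exact hznewcert
          · intro X hXsub hXcard hXdis
            exact hinv.hemcert q hq X (hXsub.trans (Finset.erase_subset _ _)) hXcard hXdis
        · have h1 := hinv.hcount
          have h2 : (A.erase z).card + 1 = A.card := by
            rw [Finset.card_erase_of_mem hz]
            omega
          simp only [stackU, List.length_cons] at h1 ⊢
          have h3 : (∅ \ emY ((i₀, z) :: em) : Finset α).card = 0 := by simp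
          have h4 : ((∅ : Finset α) \ emY em).card = 0 := by simp
          omega
        · have h2 : (A.erase z).card + 1 = A.card := by
            rw [Finset.card_erase_of_mem hz]
            omega
          have hmeas : meas k ℓ (A.erase z) [] ((i₀, z) :: em) + ((ℓ + 1) * k + 2)
              ≤ meas k ℓ A [] em + (stackU ([] : List (Finset α × Fin Q)) \ emY ((i₀, z) :: em)).card := by
            unfold meas
            have e1 : (A.erase z).card * ((ℓ + 1) * k + 2) + ((ℓ + 1) * k + 2)
                = A.card * ((ℓ + 1) * k + 2) := by
              rw [← h2]; ring
            omega
          have h5 : (stackU ([] : List (Finset α × Fin Q)) \ emY ((i₀, z) :: em)).card = 0 := by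
            simp [stackU]
          omega
    | cons p rest =>
      by_cases hC : (p.1 \ (emY em ∪ belowOf rest)).Nonempty
      · obtain ⟨y, hy⟩ := hC
        have hyp : y ∈ p.1 := (Finset.mem_sdiff.mp hy).1
        have hyE : y ∉ emY em := fun h =>
          (Finset.mem_sdiff.mp hy).2 (Finset.mem_union_left _ h)
        have hyB : y ∉ belowOf rest := fun h =>
          (Finset.mem_sdiff.mp hy).2 (Finset.mem_union_right _ h)
        have hyrest : y ∉ stackU rest := notin_stackU_of_geom hinv.hgeom hyp hyB
        by_cases hx : ∃ X ∈ A.powersetCard (d - 1), χ (T i₀ ∪ insert y X) = colc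
        · -- PUSH
          obtain ⟨X, hXmem, hXcol⟩ := hx
          obtain ⟨hXsub, hXcard⟩ := Finset.mem_powersetCard.mp hXmem
          have hyA : y ∉ A := Finset.disjoint_left.mp (hinv.hdisA p (by simp)) hyp
          have hyX : y ∉ X := fun h => hyA (hXsub h)
          have hW'card : (insert y X).card = d := by
            rw [Finset.card_insert_of_notMem hyX, hXcard]
            omega
          have hXdisS : ∀ q ∈ p :: rest, Disjoint X q.1 :=
            fun q hq => ((hinv.hdisA q hq).mono_right hXsub).symm
          have hXE : Disjoint X (emY em) := by
            rw [Finset.disjoint_left]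
            intro w hw hwE
            obtain ⟨q, hq, hq2⟩ := mem_emY.mp hwE
            exact (hinv.hy q hq).2 (hq2 ▸ hXsub hw)
          have hXdisU : Disjoint X (stackU (p :: rest)) := by
            rw [Finset.disjoint_left]
            intro w hw hwU
            obtain ⟨q, hq, hq2⟩ := mem_stackU.mp hwU
            exact Finset.disjoint_left.mp (hXdisS q hq) hw hq2
          have hWp : insert y X ∩ p.1 = {y} := by
            ext w
            simp only [Finset.mem_inter, Finset.mem_insert, Finset.mem_singleton]
            constructor
            · rintro ⟨rfl | hw, hwp⟩
              · rfl
              · exact absurd hwp (Finset.disjoint_left.mp (hXdisS p (by simp)) hw)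
            · rintro rfl
              exact ⟨Or.inl rfl, hyp⟩
          have hgeom' : StackGeom (((insert y X, i₀) :: p :: rest).map Prod.fst) := by
            refine ⟨by rw [hWp]; exact Finset.card_singleton y, ?_, hinv.hgeom⟩
            intro u hu
            simp only [List.mem_map] at hu
            obtain ⟨q, hq, rfl⟩ := hu
            rw [Finset.disjoint_left]
            intro w hw hwq
            rcases Finset.mem_insert.mp hw with rfl | hw
            · exact hyrest (mem_stackU.mpr ⟨q, hq, hwq⟩)
            · exact Finset.disjoint_left.mp (hXdisS q (List.mem_cons_of_mem _ hq)) hw hwq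
          -- counting
          have hsubnew : (stackU (p :: rest) \ emY em) ∪ X
              ⊆ stackU ((insert y X, i₀) :: p :: rest) \ emY em := by
            intro w hw
            rcases Finset.mem_union.mp hw with hw | hw
            · have := Finset.mem_sdiff.mp hw
              exact Finset.mem_sdiff.mpr ⟨Finset.mem_union_right _ this.1, this.2⟩
            · refine Finset.mem_sdiff.mpr ⟨Finset.mem_union_left _ ?_, ?_⟩
              · exact Finset.mem_insert_of_mem hw
              · exact fun h => Finset.disjoint_left.mp hXE hw h
          have hsetub : stackU ((insert y X, i₀) :: p :: rest) \ emY em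
              ⊆ (insert y X) ∪ (stackU (p :: rest) \ emY em) := by
            intro w hw
            have := Finset.mem_sdiff.mp hw
            rcases Finset.mem_union.mp this.1 with hw1 | hw1
            · exact Finset.mem_union_left _ hw1
            · exact Finset.mem_union_right _ (Finset.mem_sdiff.mpr ⟨hw1, this.2⟩)
          have hcardlb : (stackU (p :: rest) \ emY em).card + (d - 1)
              ≤ (stackU ((insert y X, i₀) :: p :: rest) \ emY em).card := by
            have hdis2 : Disjoint (stackU (p :: rest) \ emY em) X :=
              (hXdisU.mono_right Finset.sdiff_subset).symm
            calc (stackU (p :: rest) \ emY em).card + (d - 1)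
                = ((stackU (p :: rest) \ emY em) ∪ X).card := by
                  rw [Finset.card_union_of_disjoint hdis2, hXcard]
              _ ≤ _ := Finset.card_le_card hsubnew
          have hcardub : (stackU ((insert y X, i₀) :: p :: rest) \ emY em).card
              ≤ (stackU (p :: rest) \ emY em).card + d := by
            calc (stackU ((insert y X, i₀) :: p :: rest) \ emY em).card
                ≤ ((insert y X) ∪ (stackU (p :: rest) \ emY em)).card :=
                  Finset.card_le_card hsetub
              _ ≤ (insert y X).card + (stackU (p :: rest) \ emY em).card :=
                  Finset.card_union_le _ _
              _ = (stackU (p :: rest) \ emY em).card + d := by rw [hW'card]; omega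
          have hdA : d - 1 ≤ A.card := hXcard ▸ Finset.card_le_card hXsub
          have hAX : (A \ X).card + (d - 1) = A.card := by
            rw [Finset.card_sdiff_of_subset hXsub, hXcard]
            omega
          refine ih (A \ X) ((insert y X, i₀) :: p :: rest) em
            ⟨Finset.sdiff_subset.trans hinv.hAsub,
              by have hln := hinv.hlen
                 simp only [List.length_cons] at hln hwin ⊢
                 omega,
              hinv.hemlen, ?_, ?_, ?_, hgeom', ?_, hinv.hidxE, ?_, ?_, ?_,
              hinv.hynd, ?_, ?_⟩ ?_
          · intro q hq
            rcases List.mem_cons.mp hq with rfl | hq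
            · exact hW'card
            · exact hinv.hcard q hq
          · intro q hq
            rcases List.mem_cons.mp hq with rfl | hq
            · intro w hw
              rcases Finset.mem_insert.mp hw with rfl | hw
              · exact hinv.hsub p (by simp) hyp
              · exact hinv.hAsub (hXsub hw)
            · exact hinv.hsub q hq
          · intro q hq
            rcases List.mem_cons.mp hq with rfl | hq
            · rw [Finset.disjoint_left]
              intro w hw hwA
              rcases Finset.mem_insert.mp hw with rfl | hw
              · exact hyA (Finset.sdiff_subset hwA)
              · exact (Finset.mem_sdiff.mp hwA).2 hw
            · exact (hinv.hdisA q hq).mono_right Finset.sdiff_subset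
          · refine List.nodup_cons.mpr ⟨?_, hinv.hidxS⟩
            simp only [List.mem_map]
            rintro ⟨q, hq, hq2⟩
            exact hi₀S q hq hq2
          · intro p' hp' q hq
            rcases List.mem_cons.mp hp' with rfl | hp'
            · exact Ne.symm (hi₀E q hq)
            · exact hinv.hidxSE p' hp' q hq
          · intro q hq
            rcases List.mem_cons.mp hq with rfl | hq
            · exact hXcol
            · exact hinv.hcol q hq
          · intro q hq
            exact ⟨(hinv.hy q hq).1, fun h => (hinv.hy q hq).2 (Finset.sdiff_subset h)⟩
          · intro q hq X' hX'sub hX'card hX'dis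
            exact hinv.hemcert q hq X' (hX'sub.trans Finset.sdiff_subset) hX'card hX'dis
          · have h1 := hinv.hcount
            omega
          · -- measure decrease
            have h3 : 1 * ((ℓ + 1) * k + 2) ≤ (d - 1) * ((ℓ + 1) * k + 2) :=
              Nat.mul_le_mul_right _ (by omega)
            have e1 : (A \ X).card * ((ℓ + 1) * k + 2) + (d - 1) * ((ℓ + 1) * k + 2)
                = A.card * ((ℓ + 1) * k + 2) := by
              rw [← hAX]; ring
            have hmeas : meas k ℓ (A \ X) ((insert y X, i₀) :: p :: rest) em + 1
                ≤ meas k ℓ A (p :: rest) em := by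
              unfold meas
              simp only [List.length_cons] at *
              omega
            omega
        · -- STUCK
          have hyA : y ∉ A := Finset.disjoint_left.mp (hinv.hdisA p (by simp)) hyp
          have hyA₀ : y ∈ A₀ := hinv.hsub p (by simp) hyp
          have hynewcert : ∀ X ⊆ A, X.card = d - 1 → Disjoint X (T i₀ ∪ {y}) →
              (colc : ℕ) + 1 ≤ ((χ ((T i₀ ∪ {y}) ∪ X)) : ℕ) := by
            intro X hXsub hXcard hXdis
            have hyX : y ∉ X := fun h => hyA (hXsub h)
            have hunion : (T i₀ ∪ {y}) ∪ X = T i₀ ∪ insert y X := by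
              rw [Finset.insert_eq, Finset.union_assoc]
            have hXA₀ : insert y X ⊆ A₀ := by
              intro z hz
              rcases Finset.mem_insert.mp hz with rfl | hz
              · exact hyA₀
              · exact hinv.hAsub (hXsub hz)
            have hXcard' : (insert y X).card = k - (T i₀).card := by
              rw [Finset.card_insert_of_notMem hyX, hXcard, hTc]
              omega
            have hXdis' : Disjoint (insert y X) (T i₀) := by
              rw [Finset.disjoint_left]
              intro z hz hzT
              rcases Finset.mem_insert.mp hz with rfl | hz
              · exact Finset.disjoint_left.mp (hTA i₀) hzT hyA₀
              · exact Finset.disjoint_left.mp (hTA i₀) hzT (hinv.hAsub (hXsub hz))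
            have h1 : (colc : ℕ) ≤ ((χ (T i₀ ∪ insert y X)) : ℕ) := by
              have := hTcert i₀ (insert y X) hXA₀ hXcard' hXdis'
              rw [hTc] at this
              exact this
            have h2 : χ (T i₀ ∪ insert y X) ≠ colc := by
              intro h
              exact hx ⟨X, Finset.mem_powersetCard.mpr ⟨hXsub, hXcard⟩, h⟩
            have h3 : ((χ (T i₀ ∪ insert y X)) : ℕ) ≠ (colc : ℕ) :=
              fun h => h2 (Fin.ext h)
            rw [hunion]
            omega
          have hemY' : emY ((i₀, y) :: em) = insert y (emY em) := by
            simp [emY]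
          have hsdiff : stackU (p :: rest) \ emY ((i₀, y) :: em)
              = (stackU (p :: rest) \ emY em).erase y := by
            rw [hemY', Finset.sdiff_insert]
          have hyU : y ∈ stackU (p :: rest) \ emY em := by
            rw [Finset.mem_sdiff]
            exact ⟨Finset.mem_union_left _ hyp, hyE⟩
          have hcard' : (stackU (p :: rest) \ emY ((i₀, y) :: em)).card + 1
              = (stackU (p :: rest) \ emY em).card := by
            rw [hsdiff, Finset.card_erase_of_mem hyU]
            have : 1 ≤ (stackU (p :: rest) \ emY em).card :=
              Finset.card_pos.mpr ⟨y, hyU⟩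
            omega
          refine ih A (p :: rest) ((i₀, y) :: em)
            ⟨hinv.hAsub, hinv.hlen, by have := hinv.hemlen; simp only [List.length_cons]; omega,
              hinv.hcard, hinv.hsub, hinv.hdisA, hinv.hgeom, hinv.hidxS,
              ?_, ?_, hinv.hcol, ?_, ?_, ?_, ?_⟩ ?_
          · refine List.nodup_cons.mpr ⟨?_, hinv.hidxE⟩
            simp only [List.mem_map]
            rintro ⟨q, hq, hq2⟩
            exact hi₀E q hq hq2
          · intro p' hp' q hq
            rcases List.mem_cons.mp hq with rfl | hq
            · exact hi₀S p' hp'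
            · exact hinv.hidxSE p' hp' q hq
          · intro q hq
            rcases List.mem_cons.mp hq with rfl | hq
            · exact ⟨hyA₀, hyA⟩
            · exact hinv.hy q hq
          · refine List.nodup_cons.mpr ⟨?_, hinv.hynd⟩
            intro h
            exact hyE (by rw [mem_emY]; simp only [List.mem_map] at h
                          obtain ⟨q, hq, hq2⟩ := h
                          exact ⟨q, hq, hq2⟩)
          · intro q hq
            rcases List.mem_cons.mp hq with rfl | hq
            · exact hynewcert
            · exact hinv.hemcert q hq
          · have := hinv.hcount
            simp only [List.length_cons]
            omega
          · have hmeas : meas k ℓ A (p :: rest) ((i₀, y) :: em) + 1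
                = meas k ℓ A (p :: rest) em := by
              unfold meas
              omega
            omega
      · -- POP
        have hCempty : p.1 \ (emY em ∪ belowOf rest) = ∅ :=
          Finset.not_nonempty_iff_eq_empty.mp hC
        have hsetEq : stackU (p :: rest) \ emY em = stackU rest \ emY em := by
          ext z
          simp only [stackU, Finset.mem_sdiff, Finset.mem_union]
          constructor
          · rintro ⟨hz | hz, hzE⟩
            · have hzin : z ∈ emY em ∪ belowOf rest := by
                by_contra hcon
                have : z ∈ p.1 \ (emY em ∪ belowOf rest) :=
                  Finset.mem_sdiff.mpr ⟨hz, hcon⟩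
                rw [hCempty] at this
                exact absurd this (Finset.notMem_empty z)
              rcases Finset.mem_union.mp hzin with h | h
              · exact absurd h hzE
              · exact ⟨belowOf_subset_stackU rest h, hzE⟩
            · exact ⟨hz, hzE⟩
          · rintro ⟨hz, hzE⟩
            exact ⟨Or.inr hz, hzE⟩
        have hmeas : meas k ℓ A rest em + 1 = meas k ℓ A (p :: rest) em := by
          unfold meas
          rw [hsetEq]
          simp only [List.length_cons]
          omega
        refine ih A rest em
          ⟨hinv.hAsub, by have := hinv.hlen; simp only [List.length_cons] at this; omega,
            hinv.hemlen,
            fun q hq => hinv.hcard q (List.mem_cons_of_mem _ hq),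
            fun q hq => hinv.hsub q (List.mem_cons_of_mem _ hq),
            fun q hq => hinv.hdisA q (List.mem_cons_of_mem _ hq),
            hinv.hgeom.tail,
            hinv.hidxS.of_cons,
            hinv.hidxE,
            fun q hq => hinv.hidxSE q (List.mem_cons_of_mem _ hq),
            fun q hq => hinv.hcol q (List.mem_cons_of_mem _ hq),
            hinv.hy, hinv.hynd, hinv.hemcert, by rw [← hsetEq]; have := hinv.hcount; omega⟩
          (by omega)

theorem level
    (hd : 2 ≤ d) (hcd : (colc : ℕ) + d = k) (hl : 3 ≤ ℓ) (hM : 1 ≤ M)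
    (hQ : M + ℓ = Q + 1)
    (hTc : ∀ i, (T i).card = (colc : ℕ))
    (hTp : ∀ i j, i ≠ j → Disjoint (T i) (T j))
    (hTA : ∀ i, Disjoint (T i) A₀)
    (hTcert : ∀ i, Cert χ k (T i) A₀)
    (hA₀ : ℓ * d + M ≤ A₀.card) :
    HasMonoLoosePath k ℓ χ ∨ Ret χ k ℓ d M colc A₀ := by
  refine level_run χ k ℓ d M Q colc A₀ T hd hcd hl hM hQ hTc hTp hTA hTcert hA₀
    (meas k ℓ A₀ [] []) A₀ [] [] ?_ le_rfl
  constructor <;> simp [StackGeom, stackU, emY]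

end Level

section Chain

variable {r : ℕ} (χ : Finset α → Fin r) (k : ℕ)

def need (ℓ : ℕ) : ℕ → ℕ → ℕ
  | 0, d => ℓ * d + 1
  | j+1, d => (ℓ - 1) * (d - 1) + (j + 1) * (ℓ - 1) + 2 + need ℓ j (d - 1)

theorem need_ge {ℓ : ℕ} (hl : 3 ≤ ℓ) : ∀ j x, ℓ * x + 1 ≤ need ℓ j x := by
  intro j
  induction j with
  | zero => intro x; simp [need]
  | succ j ih =>
    intro x
    match x with
    | 0 => simp only [need]; omega
    | y + 1 =>
      have h1 := ih y
      obtain ⟨L, rfl⟩ : ∃ L, ℓ = L + 3 := ⟨ℓ - 3, by omega⟩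
      have hs : L + 3 - 1 = L + 2 := rfl
      simp only [need, Nat.add_sub_cancel, hs]
      have e1 : (L + 3) * (y + 1) = (L + 3) * y + L + 3 := by ring
      have e3 : (L + 2) * y + y = (L + 3) * y := by ring
      have e4 : L + 2 ≤ (j + 1) * (L + 2) := Nat.le_mul_of_pos_left _ (by omega)
      omega

theorem need_le {ℓ : ℕ} (hl : 3 ≤ ℓ) : ∀ j d, j + 2 ≤ d → need ℓ j d ≤ (j + 1) * (ℓ + 1) * d := by
  intro j
  induction j with
  | zero =>
    intro d hd
    simp only [need, zero_add, one_mul]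
    have : (ℓ + 1) * d = ℓ * d + d := by ring
    omega
  | succ j ih =>
    intro d hd
    obtain ⟨D, rfl⟩ : ∃ D, d = D + 1 := ⟨d - 1, by omega⟩
    have h1 := ih D (by omega)
    obtain ⟨L, rfl⟩ : ∃ L, ℓ = L + 3 := ⟨ℓ - 3, by omega⟩
    have hs : L + 3 - 1 = L + 2 := rfl
    simp only [need, Nat.add_sub_cancel, hs]
    have key : (j + 1 + 1) * (L + 3 + 1) * (D + 1)
        = ((L + 2) * D + (j + 1) * (L + 2) + 2 + (j + 1) * (L + 3 + 1) * D)
          + (2 * D + 2 * j + (L + 2) + 2) := by ring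
    omega

theorem chain {r : ℕ} (χ : Finset α → Fin r) (k : ℕ) {ℓ : ℕ} (hl : 3 ≤ ℓ) :
    ∀ (j c d : ℕ), c + d = k → c + j + 1 = r → j + 2 ≤ d →
      ∀ (A : Finset α) (T : Fin ((j + 1) * (ℓ - 1) + 1) → Finset α),
      (∀ i, (T i).card = c) →
      (∀ i i', i ≠ i' → Disjoint (T i) (T i')) →
      (∀ i, Disjoint (T i) A) →
      (∀ i, Cert χ k (T i) A) →
      need ℓ j d ≤ A.card →
      HasMonoLoosePath k ℓ χ := by
  intro j
  induction j with
  | zero =>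
    intro c d hcd hcr hd A T hTc hTp hTA hTcert hA
    have hc : c < r := by omega
    have hlev := level χ k ℓ d 1 ((0 + 1) * (ℓ - 1) + 1) ⟨c, hc⟩ A T (by omega)
      (by simpa using hcd) hl le_rfl (by omega) (by simpa using hTc) hTp hTA hTcert
      (by simp only [need] at hA; omega)
    rcases hlev with h | h
    · exact h
    · exfalso
      obtain ⟨A', T', hA'sub, hT'c, hT'p, hT'A, hT'cert, hcost⟩ := h
      have hA'card : d - 1 ≤ A'.card := by
        simp only [need] at hA
        obtain ⟨L, rfl⟩ : ∃ L, ℓ = L + 3 := ⟨ℓ - 3, by omega⟩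
        obtain ⟨D, rfl⟩ : ∃ D, d = D + 2 := ⟨d - 2, by omega⟩
        have hs : L + 3 - 1 = L + 2 := rfl
        have hs2 : D + 2 - 1 = D + 1 := rfl
        rw [hs, hs2] at hcost
        have key : (L + 3) * (D + 2) = (L + 2) * (D + 1) + L + D + 4 := by ring
        omega
      obtain ⟨X, hXsub, hXcard⟩ := Finset.exists_subset_card_eq hA'card
      have hdis : Disjoint X (T' 0) := ((hT'A 0).mono_right hXsub).symm
      have hle := hT'cert 0 X hXsub (by rw [hT'c 0]; simp only [Fin.val_mk]; omega) hdis
      have hval := (χ (T' 0 ∪ X)).isLt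
      rw [hT'c 0] at hle
      simp only [Fin.val_mk] at hle
      omega
  | succ j ih =>
    intro c d hcd hcr hd A T hTc hTp hTA hTcert hA
    have hc : c < r := by omega
    have hstep : (j + 1 + 1) * (ℓ - 1) = (j + 1) * (ℓ - 1) + (ℓ - 1) := by ring
    have hlev := level χ k ℓ d ((j + 1) * (ℓ - 1) + 1) ((j + 1 + 1) * (ℓ - 1) + 1) ⟨c, hc⟩ A T
      (by omega) (by simpa using hcd) hl (by omega) (by omega)
      (by simpa using hTc) hTp hTA hTcert ?_
    · rcases hlev with h | h
      · exact h
      · obtain ⟨A', T', hA'sub, hT'c, hT'p, hT'A, hT'cert, hcost⟩ := h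
        refine ih (c + 1) (d - 1) (by omega) (by omega) (by omega) A' T'
          (by simpa using hT'c) hT'p hT'A hT'cert ?_
        simp only [need] at hA ⊢
        omega
    · -- ℓ * d + M ≤ A.card
      simp only [need] at hA
      have hng := need_ge (ℓ := ℓ) hl j (d - 1)
      obtain ⟨L, rfl⟩ : ∃ L, ℓ = L + 3 := ⟨ℓ - 3, by omega⟩
      obtain ⟨D, rfl⟩ : ∃ D, d = D + 3 := ⟨d - 3, by omega⟩
      have hs : L + 3 - 1 = L + 2 := rfl
      have hs2 : D + 3 - 1 = D + 2 := rfl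
      simp only [hs, hs2] at hA hng ⊢
      have e1 : (L + 3) * (D + 3) = (L + 3) * (D + 2) + L + 3 := by ring
      have e2 : (L + 2) * (D + 2) = (L + 3) * (D + 2) - (D + 2) := by
        have : (L + 2) * (D + 2) + (D + 2) = (L + 3) * (D + 2) := by ring
        omega
      have e3 : D + 2 ≤ (L + 2) * (D + 2) := Nat.le_mul_of_pos_left _ (by omega)
      have e4 : (L + 1) + (D + 2) ≤ (L + 3) * (D + 2) := by nlinarith
      omega

end Chain

end LPDFS

theorem loosePath_dfs_bound_cor (k ℓ r : ℕ) (hk : 3 ≤ k) (hl : 3 ≤ ℓ) (hr2 : 2 ≤ r)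
    (hrk : r ≤ k - 1) (n : ℕ)
    (hn : (k : ℝ) * (ℓ + 1) * r *
        (1 + Real.log (1 + ((r : ℝ) - 1) / ((k : ℝ) - r))) ≤ n)
    (χ : Finset (Fin n) → Fin r) :
    HasMonoLoosePath k ℓ χ := by
  have hrk' : r + 1 ≤ k := by omega
  -- first: n ≥ r * (ℓ+1) * k
  have hkr : (r : ℝ) + 1 ≤ (k : ℝ) := by exact_mod_cast Nat.cast_le.mpr hrk'
  have h1 : (0:ℝ) ≤ ((r : ℝ) - 1) / ((k : ℝ) - r) := by
    apply div_nonneg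
    · have : (2:ℝ) ≤ r := by exact_mod_cast hr2
      linarith
    · linarith
  have h2 : 0 ≤ Real.log (1 + ((r : ℝ) - 1) / ((k : ℝ) - r)) :=
    Real.log_nonneg (by linarith)
  have h3 : (k : ℝ) * (ℓ + 1) * r ≤ n := by
    have hpos : (0:ℝ) ≤ (k : ℝ) * (ℓ + 1) * r := by positivity
    nlinarith
  have h4 : r * (ℓ + 1) * k ≤ n := by
    have : ((r * (ℓ + 1) * k : ℕ) : ℝ) ≤ (n : ℝ) := by push_cast; linarith
    exact_mod_cast this
  have hn1 : 1 ≤ n := by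
    have : 1 ≤ r * (ℓ + 1) * k := Nat.one_le_iff_ne_zero.mpr (by positivity)
    omega
  haveI : Nonempty (Fin n) := ⟨⟨0, by omega⟩⟩
  refine LPDFS.chain χ k hl (r - 1) 0 k (by omega) (by omega) (by omega)
    Finset.univ (fun _ => ∅) (by simp) (fun _ _ _ => by simp) (fun _ => by simp)
    (fun _ => by intro X _ _ _; exact Nat.zero_le _) ?_
  have h5 := LPDFS.need_le hl (r - 1) k (by omega)
  have h6 : (r - 1 + 1) * (ℓ + 1) * k = r * (ℓ + 1) * k := by
    congr 2; omega
  rw [h6] at h5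
  simpa using le_trans h5 h4
end
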